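/- arXiv:1109.5624 — 7 statements merged into one kernel-verified Lean document; each statement's English description precedes it below -/
import Mathlib

section
/- Let V be a left vector space of finite dimension n over a division ring R and let 1 ≤ k ≤ n−1. Then the diameter of the Grassmann graph Γ_k(V), i.e. the supremum (in the extended natural numbers) of the distances between pairs of vertices, equals min{k, n−k}. -/
open Module

/-- The Grassmann graph `Γ_k(V)`: vertices are the `k`-dimensional subspaces of `V`,
two distinct vertices being adjacent iff their intersection has dimension `k - 1`. -/
def grassmannGraph (R V : Type*) [DivisionRing R] [AddCommGroup V] [Module R V] (k : ℕ) :
    SimpleGraph {W : Submodule R V // Module.finrank R W = k} where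
  Adj X Y := X ≠ Y ∧ Module.finrank R ↥(X.1 ⊓ Y.1) = k - 1
  symm := by
    constructor
    rintro X Y ⟨h1, h2⟩
    exact ⟨h1.symm, by rwa [inf_comm]⟩
  loopless := by
    constructor
    rintro X ⟨h1, _⟩
    exact h1 rfl

/-- A graph embedding: an injective map such that adjacency holds iff it holds for images. -/
def IsGraphEmbedding {α β : Type*} (G : SimpleGraph α) (G' : SimpleGraph β) (f : α → β) : Prop :=
  Function.Injective f ∧ ∀ a b, G.Adj a b ↔ G'.Adj (f a) (f b)

/-- An isometric embedding: a graph embedding preserving distances. -/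
def IsIsometricEmbedding {α β : Type*} (G : SimpleGraph α) (G' : SimpleGraph β) (f : α → β) : Prop :=
  IsGraphEmbedding G G' f ∧ ∀ a b, G'.dist (f a) (f b) = G.dist a b

/-- A maximal clique in a graph. -/
def IsMaxClique {α : Type*} (G : SimpleGraph α) (C : Set α) : Prop :=
  G.IsClique C ∧ ∀ D : Set α, G.IsClique D → C ⊆ D → C = D

/-- A semilinear `m`-embedding: an injective semilinear map sending every linearly
independent `m`-element subset to a linearly independent (`m`-element) subset. -/
def IsSemilinearMEmbedding {R R' V V' : Type*} [DivisionRing R] [DivisionRing R']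
    [AddCommGroup V] [Module R V] [AddCommGroup V'] [Module R' V']
    (σ : R →+* R') (l : V →ₛₗ[σ] V') (m : ℕ) : Prop :=
  Function.Injective l ∧ ∀ s : Finset V, s.card = m →
    LinearIndependent R (fun x : s => (x : V)) → LinearIndependent R' (fun x : s => l x)

section Aux

variable {R V : Type*} [DivisionRing R] [AddCommGroup V] [Module R V] [FiniteDimensional R V]

lemma aux_finrank_sup_span_singleton (W : Submodule R V) {x : V} (hx : x ∉ W) :
    finrank R ↥(W ⊔ R ∙ x) = finrank R W + 1 := by
  have hx0 : x ≠ 0 := fun h => hx (h ▸ W.zero_mem)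
  have hinf : W ⊓ (R ∙ x) = ⊥ := by
    rw [eq_bot_iff]
    rintro y ⟨hyW, hyx⟩
    rcases Submodule.mem_span_singleton.mp hyx with ⟨r, rfl⟩
    rcases eq_or_ne r 0 with rfl | hr
    · simp
    · exfalso
      have := W.smul_mem r⁻¹ hyW
      rw [smul_smul, inv_mul_cancel₀ hr, one_smul] at this
      exact hx this
  have h := Submodule.finrank_sup_add_finrank_inf_eq W (R ∙ x)
  rw [hinf, finrank_span_singleton hx0] at h
  simpa using h

lemma aux_exists_intermediate (W A : Submodule R V) (hWA : W ≤ A) :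
    ∀ j, finrank R W ≤ j → j ≤ finrank R A → ∃ H, W ≤ H ∧ H ≤ A ∧ finrank R H = j := by
  intro j hWj
  induction j, hWj using Nat.le_induction with
  | base => exact fun _ => ⟨W, le_rfl, hWA, rfl⟩
  | succ j hj IH =>
    intro hjA
    obtain ⟨H, h1, h2, h3⟩ := IH (by omega)
    have hlt : H < A := h2.lt_of_ne (by rintro rfl; omega)
    obtain ⟨x, hxA, hxH⟩ := SetLike.exists_of_lt hlt
    refine ⟨H ⊔ R ∙ x, h1.trans le_sup_left,
      sup_le h2 ((Submodule.span_singleton_le_iff_mem x A).mpr hxA), ?_⟩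
    rw [aux_finrank_sup_span_singleton H hxH, h3]

lemma aux_step (A B C : Submodule R V) :
    finrank R ↥(C ⊓ B) + finrank R ↥(C ⊓ A) ≤ finrank R ↥(A ⊓ B) + finrank R C := by
  have h1 := Submodule.finrank_sup_add_finrank_inf_eq (C ⊓ B) (C ⊓ A)
  have h2 : finrank R ↥((C ⊓ B) ⊔ (C ⊓ A)) ≤ finrank R C :=
    Submodule.finrank_mono (sup_le inf_le_left inf_le_left)
  have h3 : finrank R ↥((C ⊓ B) ⊓ (C ⊓ A)) ≤ finrank R ↥(A ⊓ B) :=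
    Submodule.finrank_mono
      (le_inf ((inf_le_right.trans inf_le_right : (C ⊓ B) ⊓ (C ⊓ A) ≤ A))
        (inf_le_left.trans inf_le_right))
  omega

variable (k : ℕ)

local notation "Vtx" => {W : Submodule R V // Module.finrank R W = k}

lemma aux_eq_of_inf_finrank (A B : Vtx) (h : finrank R ↥(A.1 ⊓ B.1) = k) : A = B := by
  have h1 : A.1 ⊓ B.1 = A.1 :=
    Submodule.eq_of_le_of_finrank_eq inf_le_left (by rw [h, A.2])
  have h2 : A.1 ≤ B.1 := h1 ▸ inf_le_right
  exact Subtype.ext (Submodule.eq_of_le_of_finrank_eq h2 (A.2.trans B.2.symm))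

lemma aux_inf_finrank_le (A B : Vtx) : finrank R ↥(A.1 ⊓ B.1) ≤ k :=
  (Submodule.finrank_mono inf_le_left).trans_eq A.2

lemma aux_walk_lower (hk1 : 1 ≤ k) {A B : Vtx} (p : (grassmannGraph R V k).Walk A B) :
    k ≤ finrank R ↥(A.1 ⊓ B.1) + p.length := by
  induction p with
  | nil =>
    rename_i u
    simp only [SimpleGraph.Walk.length_nil, add_zero]
    rw [inf_idem]
    exact u.2.ge
  | @cons u v w h q ih =>
    have hq := h.2
    rw [inf_comm] at hq
    have hstep := aux_step u.1 w.1 v.1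
    rw [hq, v.2] at hstep
    simp only [SimpleGraph.Walk.length_cons]
    omega

lemma aux_edist_lower (hk1 : 1 ≤ k) (A B : Vtx) :
    ((k - finrank R ↥(A.1 ⊓ B.1) : ℕ) : ℕ∞) ≤ (grassmannGraph R V k).edist A B := by
  rw [SimpleGraph.edist_eq_sInf]
  apply le_sInf
  rintro x ⟨p, rfl⟩
  have := aux_walk_lower k hk1 p
  exact_mod_cast Nat.cast_le.mpr (by omega)

lemma aux_edist_upper (hk1 : 1 ≤ k) :
    ∀ (d : ℕ) (A B : Vtx), k - finrank R ↥(A.1 ⊓ B.1) ≤ d →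
      (grassmannGraph R V k).edist A B ≤ d := by
  intro d
  induction d with
  | zero =>
    intro A B h
    have hle := aux_inf_finrank_le k A B
    have : A = B := aux_eq_of_inf_finrank k A B (by omega)
    subst this
    simp [SimpleGraph.edist_self]
  | succ d IH =>
    intro A B h
    rcases eq_or_ne A B with rfl | hAB
    · simp [SimpleGraph.edist_self]
    set m := finrank R ↥(A.1 ⊓ B.1) with hm
    have hle := aux_inf_finrank_le k A B
    have hmk : m < k := by
      rcases lt_or_eq_of_le hle with h' | h'
      · exact h'
      · exact absurd (aux_eq_of_inf_finrank k A B h') hAB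
    have hnotle : ¬ B.1 ≤ A.1 := by
      intro hle'
      exact hAB (Subtype.ext (Submodule.eq_of_le_of_finrank_eq hle'
        (B.2.trans A.2.symm))).symm
    obtain ⟨w, hwB, hwA⟩ := SetLike.not_le_iff_exists.mp hnotle
    obtain ⟨H, hWH, hHA, hHrk⟩ := aux_exists_intermediate (A.1 ⊓ B.1) A.1 inf_le_left
      (k - 1) (by omega) (by rw [A.2]; omega)
    have hwH : w ∉ H := fun hw => hwA (hHA hw)
    have hCrk : finrank R ↥(H ⊔ R ∙ w) = k := by
      rw [aux_finrank_sup_span_singleton H hwH, hHrk]; omega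
    set C : Vtx := ⟨H ⊔ R ∙ w, hCrk⟩ with hC
    have hwC : w ∈ C.1 := Submodule.mem_sup_right (Submodule.mem_span_singleton_self w)
    have hACne : A ≠ C := by
      intro hEq
      exact hwA (hEq ▸ hwC)
    have hACrk : finrank R ↥(A.1 ⊓ C.1) = k - 1 := by
      have hlow : k - 1 ≤ finrank R ↥(A.1 ⊓ C.1) := by
        rw [← hHrk]
        exact Submodule.finrank_mono (le_inf hHA le_sup_left)
      have hup := aux_inf_finrank_le k A C
      have hne : finrank R ↥(A.1 ⊓ C.1) ≠ k := by
        intro hEq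
        exact hACne (aux_eq_of_inf_finrank k A C hEq)
      omega
    have hAdj : (grassmannGraph R V k).Adj A C := ⟨hACne, hACrk⟩
    have hwAB : w ∉ A.1 ⊓ B.1 := fun hw => hwA hw.1
    have hCB : m + 1 ≤ finrank R ↥(C.1 ⊓ B.1) := by
      have hsub : (A.1 ⊓ B.1) ⊔ (R ∙ w) ≤ C.1 ⊓ B.1 :=
        le_inf (sup_le_sup hWH le_rfl)
          (sup_le inf_le_right ((Submodule.span_singleton_le_iff_mem w B.1).mpr hwB))
      have := Submodule.finrank_mono hsub
      rwa [aux_finrank_sup_span_singleton _ hwAB] at this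
    have hIH := IH C B (by omega)
    calc (grassmannGraph R V k).edist A B
        ≤ (grassmannGraph R V k).edist A C + (grassmannGraph R V k).edist C B :=
          SimpleGraph.edist_triangle
      _ ≤ 1 + (d : ℕ∞) := by
          gcongr
          exact le_of_eq (SimpleGraph.edist_eq_one_iff_adj.mpr hAdj)
      _ = ((d + 1 : ℕ) : ℕ∞) := by push_cast; rw [add_comm]

lemma aux_span_image_inf {ι : Type*} (b : Basis ι R V) (S T : Set ι) :
    Submodule.span R (b '' S) ⊓ Submodule.span R (b '' T) =
      Submodule.span R (b '' (S ∩ T)) := by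
  apply le_antisymm
  · intro x hx
    rw [Submodule.mem_inf, b.mem_span_image, b.mem_span_image] at hx
    rw [b.mem_span_image]
    exact Set.subset_inter hx.1 hx.2
  · exact le_inf (Submodule.span_mono (Set.image_mono Set.inter_subset_left))
      (Submodule.span_mono (Set.image_mono Set.inter_subset_right))

lemma aux_finrank_span_basis_image {n : ℕ} (b : Basis (Fin n) R V) (s : Finset (Fin n)) :
    finrank R ↥(Submodule.span R (b '' ↑s)) = s.card := by
  classical
  have hli0 : LinearIndependent R (fun i : (↑s : Set (Fin n)) => b i) :=
    b.linearIndependent.comp _ Subtype.val_injective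
  have hrange : Set.range (fun i : (↑s : Set (Fin n)) => b i) = b '' ↑s :=
    (Set.image_eq_range _ _).symm
  have hli : LinearIndependent R ((↑) : (b '' ↑s : Set V) → V) := by
    rw [← hrange]
    exact hli0.linearIndepOn_id
  rw [finrank_span_set_eq_card hli]
  rw [Set.toFinset_image]
  rw [Finset.card_image_of_injective _ b.injective]
  simp

lemma aux_card_filter_Ico (n a c : ℕ) (h : c ≤ n) (hac : a ≤ c) :
    (Finset.univ.filter (fun i : Fin n => a ≤ (i : ℕ) ∧ (i : ℕ) < c)).card = c - a := by
  have hmap : (Finset.univ.filter (fun i : Fin n => a ≤ (i : ℕ) ∧ (i : ℕ) < c)).map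
      Fin.valEmbedding = Finset.Ico a c := by
    ext m
    simp only [Finset.mem_map, Finset.mem_filter, Finset.mem_univ, true_and,
      Fin.valEmbedding_apply, Finset.mem_Ico]
    constructor
    · rintro ⟨i, hi, rfl⟩; exact hi
    · rintro ⟨h1, h2⟩; exact ⟨⟨m, lt_of_lt_of_le h2 h⟩, ⟨h1, h2⟩, rfl⟩
  rw [← Nat.card_Ico a c, ← hmap, Finset.card_map]

end Aux

/-- For `1 ≤ k ≤ n-1`, the diameter of the Grassmann graph `Γ_k(V)`,
i.e. the supremum in `ℕ∞` of the distances between pairs of vertices,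
equals `min k (n - k)`. -/
theorem grassmann_diam
    (R V : Type*) [DivisionRing R] [AddCommGroup V] [Module R V] [FiniteDimensional R V]
    (n k : ℕ) (hn : Module.finrank R V = n) (hk1 : 1 ≤ k) (hk2 : k ≤ n - 1) :
    (grassmannGraph R V k).ediam = (min k (n - k) : ℕ) := by
  classical
  have hkn : k + 1 ≤ n := by omega
  set d := min k (n - k) with hd
  apply le_antisymm
  · -- upper bound
    apply SimpleGraph.ediam_le_of_edist_le
    intro A B
    apply aux_edist_upper k hk1 d A B
    have hsum := Submodule.finrank_sup_add_finrank_inf_eq A.1 B.1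
    rw [A.2, B.2] at hsum
    have hsup : finrank R ↥(A.1 ⊔ B.1) ≤ n := hn ▸ Submodule.finrank_le _
    omega
  · -- lower bound : construct an extremal pair
    set b : Basis (Fin n) R V := Module.finBasisOfFinrankEq R V hn with hb
    have hdk : d ≤ k := min_le_left _ _
    have hdnk : d + k ≤ n := by omega
    set s : Finset (Fin n) := Finset.univ.filter (fun i => 0 ≤ (i : ℕ) ∧ (i : ℕ) < k) with hs
    set t : Finset (Fin n) :=
      Finset.univ.filter (fun i => d ≤ (i : ℕ) ∧ (i : ℕ) < d + k) with ht
    have hscard : s.card = k := by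
      rw [hs, aux_card_filter_Ico n 0 k (by omega) (by omega)]
      omega
    have htcard : t.card = k := by
      rw [ht, aux_card_filter_Ico n d (d + k) (by omega) (by omega)]
      omega
    have hstcard : (s ∩ t).card = k - d := by
      have : s ∩ t = Finset.univ.filter (fun i : Fin n => d ≤ (i : ℕ) ∧ (i : ℕ) < k) := by
        ext i
        simp only [hs, ht, Finset.mem_inter, Finset.mem_filter, Finset.mem_univ, true_and]
        omega
      rw [this, aux_card_filter_Ico n d k (by omega) (by omega)]
    have hArk : finrank R ↥(Submodule.span R (b '' ↑s)) = k := by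
      rw [aux_finrank_span_basis_image b s, hscard]
    have hBrk : finrank R ↥(Submodule.span R (b '' ↑t)) = k := by
      rw [aux_finrank_span_basis_image b t, htcard]
    set A : {W : Submodule R V // Module.finrank R W = k} := ⟨_, hArk⟩ with hA
    set B : {W : Submodule R V // Module.finrank R W = k} := ⟨_, hBrk⟩ with hB
    have hinf : finrank R ↥(A.1 ⊓ B.1) = k - d := by
      rw [hA, hB]
      show finrank R ↥(Submodule.span R (b '' ↑s) ⊓ Submodule.span R (b '' ↑t)) = k - d
      rw [aux_span_image_inf b ↑s ↑t, ← Finset.coe_inter,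
        aux_finrank_span_basis_image b (s ∩ t), hstcard]
    have hlow := aux_edist_lower k hk1 A B
    rw [hinf] at hlow
    have : ((d : ℕ) : ℕ∞) ≤ (grassmannGraph R V k).edist A B := by
      have : k - (k - d) = d := by omega
      rwa [this] at hlow
    exact this.trans SimpleGraph.edist_le_ediam
end

section
/- Let V be a left vector space of finite dimension n over a division ring R and let 1 < k < n−1. If two distinct maximal cliques of the Grassmann graph Γ_k(V) have more than one common vertex, then their intersection is a line [S,U]_k for some subspaces S ⊂ U of V with dim S = k−1 and dim U = k+1, and one of the two maximal cliques is the star [S⟩_k while the other is the top ⟨U]_k. -/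
open Module

section Aux

variable {R V : Type*} [DivisionRing R] [AddCommGroup V] [Module R V] [FiniteDimensional R V]
variable {k : ℕ}

lemma star_isClique (S : Submodule R V) (hS : Module.finrank R S = k - 1) :
    (grassmannGraph R V k).IsClique {X : {W : Submodule R V // Module.finrank R W = k} | S ≤ X.1} := by
  intro X hX Y hY hXY
  refine ⟨hXY, ?_⟩
  have h1 : k - 1 ≤ Module.finrank R ↥(X.1 ⊓ Y.1) := by
    rw [← hS]; exact Submodule.finrank_mono (le_inf hX hY)
  have h2 : Module.finrank R ↥(X.1 ⊓ Y.1) ≤ k := by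
    conv_rhs => rw [← X.2]
    exact Submodule.finrank_mono inf_le_left
  have h3 : Module.finrank R ↥(X.1 ⊓ Y.1) ≠ k := by
    intro h
    have e1 : X.1 ⊓ Y.1 = X.1 := Submodule.eq_of_le_of_finrank_le inf_le_left (by rw [h, X.2])
    have e2 : X.1 ≤ Y.1 := e1 ▸ inf_le_right
    have e3 : X.1 = Y.1 := Submodule.eq_of_le_of_finrank_le e2 (by rw [X.2, Y.2])
    exact hXY (Subtype.ext e3)
  -- if k = 0 then h2,h3 impossible, so omega closes anyway
  omega

lemma top_isClique (U : Submodule R V) (hU : Module.finrank R U = k + 1) :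
    (grassmannGraph R V k).IsClique {X : {W : Submodule R V // Module.finrank R W = k} | X.1 ≤ U} := by
  intro X hX Y hY hXY
  refine ⟨hXY, ?_⟩
  have hsum := Submodule.finrank_sup_add_finrank_inf_eq X.1 Y.1
  rw [X.2, Y.2] at hsum
  have h1 : Module.finrank R ↥(X.1 ⊔ Y.1) ≤ k + 1 := by
    rw [← hU]; exact Submodule.finrank_mono (sup_le hX hY)
  have h2 : k ≤ Module.finrank R ↥(X.1 ⊔ Y.1) := by
    conv_lhs => rw [← X.2]
    exact Submodule.finrank_mono le_sup_left
  have h3 : Module.finrank R ↥(X.1 ⊔ Y.1) ≠ k := by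
    intro h
    have e1 : X.1 = X.1 ⊔ Y.1 := Submodule.eq_of_le_of_finrank_le le_sup_left (by rw [h, X.2])
    have e2 : Y.1 ≤ X.1 := e1 ▸ le_sup_right
    have e3 : Y.1 = X.1 := Submodule.eq_of_le_of_finrank_le e2 (by rw [X.2, Y.2])
    exact hXY (Subtype.ext e3.symm)
  omega

end Aux

/-- If two distinct maximal cliques of `Γ_k(V)` (with `1 < k < n-1`) have
more than one common vertex, then their intersection is a line `[S,U]_k` with
`dim S = k-1`, `dim U = k+1`, `S ⊂ U`, and one of the cliques is the star `[S⟩_k`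
while the other is the top `⟨U]_k`. -/
theorem grassmann_maximal_cliques_intersection
    (R V : Type*) [DivisionRing R] [AddCommGroup V] [Module R V] [FiniteDimensional R V]
    (n k : ℕ) (hn : Module.finrank R V = n) (hk1 : 1 < k) (hk2 : k < n - 1)
    (C₁ C₂ : Set {W : Submodule R V // Module.finrank R W = k})
    (hC₁ : IsMaxClique (grassmannGraph R V k) C₁)
    (hC₂ : IsMaxClique (grassmannGraph R V k) C₂)
    (hne : C₁ ≠ C₂) (hbig : (C₁ ∩ C₂).Nontrivial) :
    ∃ S U : Submodule R V, S < U ∧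
      Module.finrank R S = k - 1 ∧ Module.finrank R U = k + 1 ∧
      C₁ ∩ C₂ = {X | S ≤ X.1 ∧ X.1 ≤ U} ∧
      ((C₁ = {X | S ≤ X.1} ∧ C₂ = {X | X.1 ≤ U}) ∨
       (C₁ = {X | X.1 ≤ U} ∧ C₂ = {X | S ≤ X.1})) := by
  obtain ⟨X, hX, Y, hY, hXY⟩ := hbig
  have hk : 1 ≤ k := hk1.le
  have hadjXY : (grassmannGraph R V k).Adj X Y := hC₁.1 hX.1 hY.1 hXY
  set S : Submodule R V := X.1 ⊓ Y.1 with hSdef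
  set U : Submodule R V := X.1 ⊔ Y.1 with hUdef
  have hS : Module.finrank R S = k - 1 := hadjXY.2
  have hsum := Submodule.finrank_sup_add_finrank_inf_eq X.1 Y.1
  rw [X.2, Y.2, ← hSdef, ← hUdef, hS] at hsum
  have hU : Module.finrank R U = k + 1 := by omega
  have hSleU : S ≤ U := inf_le_left.trans le_sup_left
  have hSU : S < U := lt_of_le_of_ne hSleU (by
    intro h
    rw [h, hU] at hS
    omega)
  have hSX : S ≤ X.1 := inf_le_left
  have hSY : S ≤ Y.1 := inf_le_right
  have hXU : X.1 ≤ U := le_sup_left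
  have hYU : Y.1 ≤ U := le_sup_right
  -- trichotomy : anything adjacent to both X and Y contains S or lies in U
  have tri : ∀ Z : {W : Submodule R V // Module.finrank R W = k},
      (grassmannGraph R V k).Adj Z X → (grassmannGraph R V k).Adj Z Y →
      S ≤ Z.1 ∨ Z.1 ≤ U := by
    intro Z hZX hZY
    by_cases hzz : Z.1 ⊓ X.1 = Z.1 ⊓ Y.1
    · left
      have h1 : Z.1 ⊓ X.1 ≤ S := le_inf inf_le_right (hzz ▸ inf_le_right)
      have h2 : Z.1 ⊓ X.1 = S := Submodule.eq_of_le_of_finrank_le h1 (by rw [hS, hZX.2])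
      exact h2 ▸ inf_le_left
    · right
      have hlt : Z.1 ⊓ X.1 < (Z.1 ⊓ X.1) ⊔ (Z.1 ⊓ Y.1) := by
        refine lt_of_le_of_ne le_sup_left (fun h => hzz ?_)
        have h1 : Z.1 ⊓ Y.1 ≤ Z.1 ⊓ X.1 := h ▸ le_sup_right
        exact (Submodule.eq_of_le_of_finrank_le h1 (by rw [hZX.2, hZY.2])).symm
      have h2 := Submodule.finrank_lt_finrank_of_lt hlt
      rw [hZX.2] at h2
      have h3 : (Z.1 ⊓ X.1) ⊔ (Z.1 ⊓ Y.1) ≤ Z.1 := sup_le inf_le_left inf_le_left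
      have h4 : Module.finrank R ↥((Z.1 ⊓ X.1) ⊔ (Z.1 ⊓ Y.1)) ≤ k := by
        conv_rhs => rw [← Z.2]
        exact Submodule.finrank_mono h3
      have h5 : (Z.1 ⊓ X.1) ⊔ (Z.1 ⊓ Y.1) = Z.1 :=
        Submodule.eq_of_le_of_finrank_le h3 (by rw [Z.2]; omega)
      calc Z.1 = (Z.1 ⊓ X.1) ⊔ (Z.1 ⊓ Y.1) := h5.symm
        _ ≤ U := sup_le (inf_le_right.trans le_sup_left) (inf_le_right.trans le_sup_right)
  -- a star-only and a top-only vertex are never adjacent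
  have nonadj : ∀ Z₁ Z₂ : {W : Submodule R V // Module.finrank R W = k},
      S ≤ Z₁.1 → ¬ Z₁.1 ≤ U → Z₂.1 ≤ U → ¬ S ≤ Z₂.1 →
      ¬ (grassmannGraph R V k).Adj Z₁ Z₂ := by
    intro Z₁ Z₂ h1 h2 h3 h4 hadj
    have hUlt : U < Z₁.1 ⊔ U :=
      lt_of_le_of_ne le_sup_right (fun h => h2 (le_sup_left.trans h.ge))
    have hd1 := Submodule.finrank_lt_finrank_of_lt hUlt
    rw [hU] at hd1
    have hsum2 := Submodule.finrank_sup_add_finrank_inf_eq Z₁.1 U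
    rw [Z₁.2, hU] at hsum2
    have hinf : Module.finrank R ↥(Z₁.1 ⊓ U) ≤ k - 1 := by omega
    have hZ₁U : Z₁.1 ⊓ U = S :=
      (Submodule.eq_of_le_of_finrank_le (le_inf h1 hSleU) (by rw [hS]; exact hinf)).symm
    have hle : Z₁.1 ⊓ Z₂.1 ≤ S ⊓ Z₂.1 :=
      le_inf ((le_inf inf_le_left (inf_le_right.trans h3)).trans hZ₁U.le) inf_le_right
    have hlt2 : S ⊓ Z₂.1 < S :=
      lt_of_le_of_ne inf_le_left (fun h => h4 (h ▸ inf_le_right))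
    have hd2 := Submodule.finrank_lt_finrank_of_lt hlt2
    rw [hS] at hd2
    have hd3 := Submodule.finrank_mono (t := S ⊓ Z₂.1) hle
    have hd4 : Module.finrank R ↥(Z₁.1 ⊓ Z₂.1) = k - 1 := hadj.2
    omega
  have key : ∀ C : Set {W : Submodule R V // Module.finrank R W = k},
      IsMaxClique (grassmannGraph R V k) C → X ∈ C → Y ∈ C →
      C = {Z | S ≤ Z.1} ∨ C = {Z | Z.1 ≤ U} := by
    intro C hC hXC hYC
    have sub : ∀ Z ∈ C, S ≤ Z.1 ∨ Z.1 ≤ U := by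
      intro Z hZ
      rcases eq_or_ne Z X with rfl | hZX
      · exact Or.inl hSX
      rcases eq_or_ne Z Y with rfl | hZY
      · exact Or.inl hSY
      exact tri Z (hC.1 hZ hXC hZX) (hC.1 hZ hYC hZY)
    by_cases hall : ∀ Z ∈ C, S ≤ Z.1
    · exact Or.inl (hC.2 _ (star_isClique S hS) (fun Z hZ => hall Z hZ))
    · push_neg at hall
      obtain ⟨Z₂, hZ₂C, hZ₂⟩ := hall
      have hZ₂U : Z₂.1 ≤ U := (sub Z₂ hZ₂C).resolve_left hZ₂
      have hsub : ∀ Z ∈ C, Z.1 ≤ U := by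
        intro Z hZ
        by_contra hnle
        have hSZ : S ≤ Z.1 := (sub Z hZ).resolve_right hnle
        have hne' : Z ≠ Z₂ := fun h => hnle (h ▸ hZ₂U)
        exact nonadj Z Z₂ hSZ hnle hZ₂U hZ₂ (hC.1 hZ hZ₂C hne')
      exact Or.inr (hC.2 _ (top_isClique U hU) (fun Z hZ => hsub Z hZ))
  refine ⟨S, U, hSU, hS, hU, ?_, ?_⟩
  all_goals {
    rcases key C₁ hC₁ hX.1 hY.1 with h1 | h1 <;>
      rcases key C₂ hC₂ hX.2 hY.2 with h2 | h2
    · exact absurd (h1.trans h2.symm) hne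
    · first
      | (rw [h1, h2]; ext Z; simp [Set.mem_inter_iff, Set.mem_setOf_eq])
      | exact Or.inl ⟨h1, h2⟩
    · first
      | (rw [h1, h2]; ext Z; simp [Set.mem_inter_iff, Set.mem_setOf_eq, and_comm])
      | exact Or.inr ⟨h1, h2⟩
    · exact absurd (h1.trans h2.symm) hne
  }
end

section
/- Let V be a left vector space of finite dimension n over a division ring R and let 1 < k < n−1. For any two distinct maximal cliques 𝒳, 𝒴 of the Grassmann graph Γ_k(V) there is a finite sequence of maximal cliques 𝒳 = 𝒳₀, 𝒳₁, …, 𝒳ᵢ = 𝒴 of Γ_k(V) such that for every j ∈ {1,…,i} the intersection 𝒳_{j−1} ∩ 𝒳_j is a line [S,U]_k for some subspaces S ⊂ U with dim S = k−1 and dim U = k+1. -/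
open Module

set_option linter.unusedSectionVars false

namespace GrassmannChainAux

variable {R V : Type*} [DivisionRing R] [AddCommGroup V] [Module R V] [FiniteDimensional R V]

lemma inf_span_singleton_eq_bot (S : Submodule R V) {v : V} (hv : v ∉ S) :
    S ⊓ Submodule.span R {v} = ⊥ := by
  rw [eq_bot_iff]; intro x hx
  rw [Submodule.mem_inf] at hx
  obtain ⟨hxS, hxv⟩ := hx
  rw [Submodule.mem_span_singleton] at hxv
  obtain ⟨c, rfl⟩ := hxv
  rcases eq_or_ne c 0 with rfl | hc
  · simp
  · exact absurd (by simpa [smul_smul, inv_mul_cancel₀ hc] using S.smul_mem c⁻¹ hxS) hv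

lemma finrank_sup_span_singleton (S : Submodule R V) {v : V} (hv : v ∉ S) :
    finrank R ↥(S ⊔ Submodule.span R {v}) = finrank R S + 1 := by
  have h0 : v ≠ 0 := fun h => hv (h ▸ S.zero_mem)
  have h := Submodule.finrank_sup_add_finrank_inf_eq S (Submodule.span R {v})
  rw [inf_span_singleton_eq_bot S hv, finrank_bot, finrank_span_singleton h0] at h
  omega

lemma exists_not_mem_of_finrank_lt (S : Submodule R V) (h : finrank R S < finrank R V) :
    ∃ v, v ∉ S := by
  by_contra hc
  push_neg at hc
  have : S = ⊤ := Submodule.eq_top_iff'.2 hc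
  rw [this, finrank_top] at h
  omega

lemma lt_of_le_of_finrank_lt {S T : Submodule R V} (h : S ≤ T)
    (hr : finrank R S < finrank R T) : S < T :=
  lt_of_le_of_ne h (fun e => by rw [e] at hr; omega)

lemma exists_intermediate (W S : Submodule R V) (hWS : W ≤ S) :
    ∀ m, finrank R W ≤ m → m ≤ finrank R S → ∃ T, W ≤ T ∧ T ≤ S ∧ finrank R T = m := by
  intro m
  induction m with
  | zero => intro h1 _; exact ⟨W, le_refl _, hWS, by omega⟩
  | succ m ih =>
    intro h1 h2
    rcases Nat.lt_or_ge (finrank R W) (m + 1) with hlt | hge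
    · obtain ⟨T, hWT, hTS, hT⟩ := ih (by omega) (by omega)
      have hne : ¬S ≤ T := fun h => by have := Submodule.finrank_mono h; omega
      obtain ⟨v, hvS, hvT⟩ := SetLike.not_le_iff_exists.1 hne
      refine ⟨T ⊔ Submodule.span R {v}, le_trans hWT le_sup_left,
        sup_le hTS ((Submodule.span_singleton_le_iff_mem _ _).2 hvS), ?_⟩
      rw [finrank_sup_span_singleton T hvT, hT]
    · exact ⟨W, le_refl _, hWS, by omega⟩

lemma exists_avoiding (U : Submodule R V) {t : V} (ht0 : t ≠ 0) :
    ∀ m, m + 1 ≤ finrank R U → ∃ Y, Y ≤ U ∧ finrank R Y = m ∧ t ∉ Y := by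
  intro m
  induction m with
  | zero => intro _; exact ⟨⊥, bot_le, finrank_bot R V, by simpa using ht0⟩
  | succ m ih =>
    intro hm
    obtain ⟨Y, hYU, hYrank, htY⟩ := ih (by omega)
    have hsup : finrank R ↥(Y ⊔ Submodule.span R {t}) ≤ m + 1 := by
      have h := Submodule.finrank_add_le_finrank_add_finrank Y (Submodule.span R {t})
      rw [hYrank, finrank_span_singleton ht0] at h
      exact h
    have hne : ¬U ≤ Y ⊔ Submodule.span R {t} := fun h => by
      have := Submodule.finrank_mono h; omega
    obtain ⟨v, hvU, hv⟩ := SetLike.not_le_iff_exists.1 hne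
    have hvY : v ∉ Y := fun h => hv (Submodule.mem_sup_left h)
    refine ⟨Y ⊔ Submodule.span R {v},
      sup_le hYU ((Submodule.span_singleton_le_iff_mem _ _).2 hvU),
      by rw [finrank_sup_span_singleton Y hvY, hYrank], ?_⟩
    intro hmem
    rw [Submodule.mem_sup] at hmem
    obtain ⟨y, hy, z, hz, hyz⟩ := hmem
    rw [Submodule.mem_span_singleton] at hz
    obtain ⟨c, rfl⟩ := hz
    rcases eq_or_ne c 0 with rfl | hc
    · rw [zero_smul, add_zero] at hyz
      exact htY (hyz ▸ hy)
    · apply hv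
      have hty : t - y ∈ Y ⊔ Submodule.span R {t} :=
        sub_mem (Submodule.mem_sup_right (Submodule.mem_span_singleton_self t))
          (Submodule.mem_sup_left hy)
      have hcv : c • v = t - y := eq_sub_iff_add_eq'.2 hyz
      have := (Y ⊔ Submodule.span R {t}).smul_mem c⁻¹ (hcv ▸ hty)
      simpa [smul_smul, inv_mul_cancel₀ hc] using this

-- === stars and tops ===

variable (k : ℕ)

def gstar (S : Submodule R V) : Set {W : Submodule R V // finrank R W = k} :=
  {X | S ≤ X.1}

def gtop (U : Submodule R V) : Set {W : Submodule R V // finrank R W = k} :=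
  {X | X.1 ≤ U}

variable {k}

lemma mem_gstar {S : Submodule R V} {X : {W : Submodule R V // finrank R W = k}} :
    X ∈ gstar k S ↔ S ≤ X.1 := Iff.rfl

lemma mem_gtop {U : Submodule R V} {X : {W : Submodule R V // finrank R W = k}} :
    X ∈ gtop k U ↔ X.1 ≤ U := Iff.rfl

lemma gstar_isClique (hk1 : 1 ≤ k) {S : Submodule R V} (hS : finrank R S = k - 1) :
    (grassmannGraph R V k).IsClique (gstar k S) := by
  rw [SimpleGraph.isClique_iff]
  intro X hX Y hY hne
  refine ⟨hne, ?_⟩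
  have h1 : S ≤ X.1 ⊓ Y.1 := le_inf hX hY
  have h3 : X.1 ⊓ Y.1 ≠ X.1 := by
    intro h
    apply hne
    apply Subtype.ext
    have hXY : X.1 ≤ Y.1 := by rw [← h]; exact inf_le_right
    exact Submodule.eq_of_le_of_finrank_eq hXY (by rw [X.2, Y.2])
  have l1 := Submodule.finrank_mono h1
  have l2 := Submodule.finrank_lt_finrank_of_lt (lt_of_le_of_ne inf_le_left h3)
  rw [hS] at l1
  rw [X.2] at l2
  omega

lemma gtop_isClique {U : Submodule R V} (hU : finrank R U = k + 1) :
    (grassmannGraph R V k).IsClique (gtop k U) := by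
  rw [SimpleGraph.isClique_iff]
  intro X hX Y hY hne
  refine ⟨hne, ?_⟩
  have hsup_le : X.1 ⊔ Y.1 ≤ U := sup_le hX hY
  have hlt : X.1 < X.1 ⊔ Y.1 := by
    refine lt_of_le_of_ne le_sup_left ?_
    intro h
    apply hne
    apply Subtype.ext
    have hYX : Y.1 ≤ X.1 := by rw [h]; exact le_sup_right
    exact (Submodule.eq_of_le_of_finrank_eq hYX (by rw [X.2, Y.2])).symm
  have l1 := Submodule.finrank_lt_finrank_of_lt hlt
  have l2 := Submodule.finrank_mono hsup_le
  have l3 := Submodule.finrank_sup_add_finrank_inf_eq X.1 Y.1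
  rw [X.2] at l1
  rw [hU] at l2
  rw [X.2, Y.2] at l3
  omega


variable {n : ℕ} (hn : finrank R V = n) (hk1 : 1 < k) (hk2 : k < n - 1)

include hn hk1 hk2

lemma gstar_isMaxClique {S : Submodule R V} (hS : finrank R S = k - 1) :
    IsMaxClique (grassmannGraph R V k) (gstar k S) := by
  have hn2 : k + 2 ≤ n := by omega
  refine ⟨gstar_isClique (by omega) hS, ?_⟩
  intro D hD hsub
  refine Set.Subset.antisymm hsub ?_
  intro X hXD
  by_contra hX
  rw [mem_gstar] at hX
  -- find Y0 ∈ gstar S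
  obtain ⟨Y0v, hSY0, -, hY0rank⟩ :=
    exists_intermediate S ⊤ le_top k (by omega) (by rw [finrank_top, hn]; omega)
  set Y0 : {W : Submodule R V // finrank R W = k} := ⟨Y0v, hY0rank⟩ with hY0def
  have hY0 : Y0 ∈ gstar k S := hSY0
  have hXY0 : X ≠ Y0 := fun h => hX (by rw [h]; exact hSY0)
  obtain ⟨-, hinf⟩ := hD hXD (hsub hY0) hXY0
  have hsupXY0 : finrank R ↥(X.1 ⊔ Y0.1) = k + 1 := by
    have h := Submodule.finrank_sup_add_finrank_inf_eq X.1 Y0.1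
    rw [X.2, Y0.2, hinf] at h
    omega
  have hP : S ⊔ X.1 ≤ X.1 ⊔ Y0.1 := sup_le (le_trans hSY0 le_sup_right) le_sup_left
  have hPrank : finrank R ↥(S ⊔ X.1) ≤ k + 1 := hsupXY0 ▸ Submodule.finrank_mono hP
  obtain ⟨v, hv⟩ := exists_not_mem_of_finrank_lt (S ⊔ X.1) (by rw [hn]; omega)
  have hvS : v ∉ S := fun h => hv (Submodule.mem_sup_left h)
  have hYrank : finrank R ↥(S ⊔ Submodule.span R {v}) = k := by
    rw [finrank_sup_span_singleton S hvS, hS]; omega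
  set Y : {W : Submodule R V // finrank R W = k} := ⟨S ⊔ Submodule.span R {v}, hYrank⟩ with hYdef
  have hYstar : Y ∈ gstar k S := mem_gstar.2 (show S ≤ S ⊔ Submodule.span R {v} from le_sup_left)
  have hXY : X ≠ Y := fun h => hX (by rw [h]; exact (show S ≤ S ⊔ Submodule.span R {v} from le_sup_left))
  obtain ⟨-, hinf2⟩ := hD hXD (hsub hYstar) hXY
  -- Y.1 ⊓ (S ⊔ X.1) = S
  have hYP : Y.1 ⊓ (S ⊔ X.1) ≤ S := by
    intro x hx
    rw [Submodule.mem_inf] at hx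
    obtain ⟨hx1, hx2⟩ := hx
    rw [show Y.1 = S ⊔ Submodule.span R {v} from rfl, Submodule.mem_sup] at hx1
    obtain ⟨s, hs, z, hz, rfl⟩ := hx1
    rw [Submodule.mem_span_singleton] at hz
    obtain ⟨c, rfl⟩ := hz
    rcases eq_or_ne c 0 with rfl | hc
    · simpa using hs
    · exfalso
      apply hv
      have h1 : c • v ∈ S ⊔ X.1 := by
        have h2 := sub_mem hx2 (Submodule.mem_sup_left hs)
        simpa using h2
      have := (S ⊔ X.1).smul_mem c⁻¹ h1
      simpa [smul_smul, inv_mul_cancel₀ hc] using this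
  have h2 : X.1 ⊓ Y.1 ≤ S ⊓ X.1 :=
    le_inf (le_trans (le_inf inf_le_right (le_trans inf_le_left le_sup_right)) hYP) inf_le_left
  have hlt : S ⊓ X.1 < S :=
    lt_of_le_of_ne inf_le_left (fun h => hX (by rw [← h]; exact inf_le_right))
  have l1 := Submodule.finrank_mono h2
  have l2 := Submodule.finrank_lt_finrank_of_lt hlt
  rw [hS] at l2
  rw [hinf2] at l1
  omega

lemma gtop_isMaxClique {U : Submodule R V} (hU : finrank R U = k + 1) :
    IsMaxClique (grassmannGraph R V k) (gtop k U) := by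
  refine ⟨gtop_isClique hU, ?_⟩
  intro D hD hsub
  refine Set.Subset.antisymm hsub ?_
  intro X hXD
  by_contra hX
  rw [mem_gtop] at hX
  obtain ⟨Y0v, -, hY0U, hY0rank⟩ :=
    exists_intermediate ⊥ U bot_le k (by rw [finrank_bot]; omega) (by omega)
  set Y0 : {W : Submodule R V // finrank R W = k} := ⟨Y0v, hY0rank⟩ with hY0def
  have hY0 : Y0 ∈ gtop k U := hY0U
  have hXY0 : X ≠ Y0 := fun h => hX (by rw [h]; exact hY0U)
  obtain ⟨-, hinf⟩ := hD hXD (hsub hY0) hXY0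
  have hTle : X.1 ⊓ Y0.1 ≤ X.1 ⊓ U := inf_le_inf_left _ hY0U
  have hTlt : X.1 ⊓ U < X.1 :=
    lt_of_le_of_ne inf_le_left (fun h => hX (by rw [← h]; exact inf_le_right))
  have hrT : finrank R ↥(X.1 ⊓ U) = k - 1 := by
    have l1 := Submodule.finrank_mono hTle
    have l2 := Submodule.finrank_lt_finrank_of_lt hTlt
    rw [hinf] at l1
    rw [X.2] at l2
    omega
  have hTne : X.1 ⊓ U ≠ ⊥ := by
    intro h
    rw [h, finrank_bot] at hrT
    omega
  obtain ⟨t, htT, ht0⟩ := (X.1 ⊓ U).ne_bot_iff.1 hTne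
  obtain ⟨Yv, hYU, hYrank, htY⟩ := exists_avoiding U ht0 k (by omega)
  set Y : {W : Submodule R V // finrank R W = k} := ⟨Yv, hYrank⟩ with hYdef
  have hYtop : Y ∈ gtop k U := hYU
  have hXY : X ≠ Y := fun h => hX (by rw [h]; exact hYU)
  obtain ⟨-, hinf2⟩ := hD hXD (hsub hYtop) hXY
  have hle : X.1 ⊓ Y.1 ≤ (X.1 ⊓ U) ⊓ Y.1 :=
    le_inf (le_inf inf_le_left (le_trans inf_le_right hYU)) inf_le_right
  have hlt2 : (X.1 ⊓ U) ⊓ Y.1 < X.1 ⊓ U :=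
    lt_of_le_of_ne inf_le_left (fun h => htY (by
      have : X.1 ⊓ U ≤ Y.1 := by rw [← h]; exact inf_le_right
      exact this htT))
  have l1 := Submodule.finrank_mono hle
  have l2 := Submodule.finrank_lt_finrank_of_lt hlt2
  rw [hinf2] at l1
  rw [hrT] at l2
  omega


lemma classify {C : Set {W : Submodule R V // finrank R W = k}}
    (hC : IsMaxClique (grassmannGraph R V k) C) :
    (∃ S : Submodule R V, finrank R S = k - 1 ∧ C = gstar k S) ∨
    (∃ U : Submodule R V, finrank R U = k + 1 ∧ C = gtop k U) := by
  have hn2 : k + 2 ≤ n := by omega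
  -- C is nonempty
  have hCne : C.Nonempty := by
    by_contra h
    rw [Set.not_nonempty_iff_eq_empty] at h
    obtain ⟨Xv, -, -, hXrank⟩ :=
      exists_intermediate ⊥ ⊤ bot_le k
        (show finrank R (⊥ : Submodule R V) ≤ k by rw [finrank_bot]; omega)
        (show k ≤ finrank R (⊤ : Submodule R V) by rw [finrank_top, hn]; omega)
    set X0 : {W : Submodule R V // finrank R W = k} := ⟨Xv, hXrank⟩ with hX0
    have := hC.2 {X0} (by simp [SimpleGraph.isClique_iff])
      (by rw [h]; exact Set.empty_subset _)
    rw [h] at this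
    exact (Set.singleton_ne_empty _) this.symm
  obtain ⟨X, hXC⟩ := hCne
  -- C has a second element
  have hC2 : ∃ Y ∈ C, Y ≠ X := by
    by_contra h
    push_neg at h
    have hCX : C = {X} := Set.eq_singleton_iff_unique_mem.2 ⟨hXC, h⟩
    obtain ⟨S, -, hSX, hSrank⟩ :=
      exists_intermediate ⊥ X.1 bot_le (k - 1)
        (show finrank R (⊥ : Submodule R V) ≤ k - 1 by rw [finrank_bot]; omega)
        (by rw [X.2]; omega)
    have hXstar : X ∈ gstar k S := hSX
    have hCeq := hC.2 (gstar k S) (gstar_isClique (by omega) hSrank)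
      (by rw [hCX]; exact Set.singleton_subset_iff.2 hXstar)
    -- construct another element of gstar k S
    obtain ⟨v, hv⟩ := exists_not_mem_of_finrank_lt X.1 (by rw [X.2, hn]; omega)
    have hvS : v ∉ S := fun hh => hv (hSX hh)
    have hYrank : finrank R ↥(S ⊔ Submodule.span R {v}) = k := by
      rw [finrank_sup_span_singleton S hvS, hSrank]; omega
    have hYmem : (⟨S ⊔ Submodule.span R {v}, hYrank⟩ :
        {W : Submodule R V // finrank R W = k}) ∈ gstar k S :=
      mem_gstar.2 (show S ≤ S ⊔ Submodule.span R {v} from le_sup_left)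
    rw [← hCeq, hCX, Set.mem_singleton_iff] at hYmem
    apply hv
    rw [← hYmem]
    exact Submodule.mem_sup_right (Submodule.mem_span_singleton_self v)
  obtain ⟨Y, hYC, hYX⟩ := hC2
  obtain ⟨-, hinf⟩ := hC.1 hYC hXC hYX
  rw [inf_comm] at hinf
  -- S0 and U0
  have hsup : finrank R ↥(X.1 ⊔ Y.1) = k + 1 := by
    have h := Submodule.finrank_sup_add_finrank_inf_eq X.1 Y.1
    rw [X.2, Y.2, hinf] at h
    omega
  -- pointwise dichotomy
  have hpt : ∀ Z ∈ C, X.1 ⊓ Y.1 ≤ Z.1 ∨ Z.1 ≤ X.1 ⊔ Y.1 := by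
    intro Z hZ
    by_cases hZX : Z = X
    · left; rw [hZX]; exact inf_le_left
    by_cases hZY : Z = Y
    · left; rw [hZY]; exact inf_le_right
    obtain ⟨-, h1⟩ := hC.1 hZ hXC hZX
    obtain ⟨-, h2⟩ := hC.1 hZ hYC hZY
    by_cases heq : Z.1 ⊓ X.1 = Z.1 ⊓ Y.1
    · left
      have hle : Z.1 ⊓ X.1 ≤ X.1 ⊓ Y.1 :=
        le_inf inf_le_right (by rw [heq]; exact inf_le_right)
      have he : Z.1 ⊓ X.1 = X.1 ⊓ Y.1 :=
        Submodule.eq_of_le_of_finrank_eq hle (by rw [h1, hinf])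
      rw [← he]
      exact inf_le_left
    · right
      have hABlt : Z.1 ⊓ X.1 ⊓ (Z.1 ⊓ Y.1) < Z.1 ⊓ X.1 := by
        refine lt_of_le_of_ne inf_le_left (fun h => heq ?_)
        have hle : Z.1 ⊓ X.1 ≤ Z.1 ⊓ Y.1 := by rw [← h]; exact inf_le_right
        exact Submodule.eq_of_le_of_finrank_eq hle (by rw [h1, h2])
      have l1 := Submodule.finrank_lt_finrank_of_lt hABlt
      rw [h1] at l1
      have l2 := Submodule.finrank_sup_add_finrank_inf_eq (Z.1 ⊓ X.1) (Z.1 ⊓ Y.1)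
      rw [h1, h2] at l2
      have hle : Z.1 ⊓ X.1 ⊔ Z.1 ⊓ Y.1 ≤ Z.1 := sup_le inf_le_left inf_le_left
      have he : Z.1 ⊓ X.1 ⊔ Z.1 ⊓ Y.1 = Z.1 :=
        Submodule.eq_of_le_of_finrank_le hle (by rw [Z.2]; omega)
      rw [← he]
      exact sup_le (le_trans inf_le_right le_sup_left) (le_trans inf_le_right le_sup_right)
  -- global dichotomy
  by_cases hstar : ∀ Z ∈ C, X.1 ⊓ Y.1 ≤ Z.1
  · left
    exact ⟨X.1 ⊓ Y.1, hinf, hC.2 (gstar k (X.1 ⊓ Y.1))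
      (gstar_isClique (by omega) hinf) hstar⟩
  · by_cases htop : ∀ Z ∈ C, Z.1 ≤ X.1 ⊔ Y.1
    · right
      exact ⟨X.1 ⊔ Y.1, hsup, hC.2 (gtop k (X.1 ⊔ Y.1)) (gtop_isClique hsup) htop⟩
    · exfalso
      push_neg at hstar htop
      obtain ⟨Z1, hZ1C, hZ1⟩ := hstar
      obtain ⟨Z2, hZ2C, hZ2⟩ := htop
      have hZ1U : Z1.1 ≤ X.1 ⊔ Y.1 := (hpt Z1 hZ1C).resolve_left hZ1
      have hSZ2 : X.1 ⊓ Y.1 ≤ Z2.1 := (hpt Z2 hZ2C).resolve_right hZ2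
      have hne12 : Z1 ≠ Z2 := fun h => hZ1 (h ▸ hSZ2)
      obtain ⟨-, h12⟩ := hC.1 hZ1C hZ2C hne12
      have hZ2U0lt : Z2.1 ⊓ (X.1 ⊔ Y.1) < Z2.1 :=
        lt_of_le_of_ne inf_le_left (fun h => hZ2 (by rw [← h]; exact inf_le_right))
      have hup := Submodule.finrank_lt_finrank_of_lt hZ2U0lt
      rw [Z2.2] at hup
      have h1le : Z1.1 ⊓ Z2.1 ≤ Z2.1 ⊓ (X.1 ⊔ Y.1) :=
        le_inf inf_le_right (le_trans inf_le_left hZ1U)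
      have hS0le : X.1 ⊓ Y.1 ≤ Z2.1 ⊓ (X.1 ⊔ Y.1) :=
        le_inf hSZ2 (le_trans inf_le_left le_sup_left)
      have hrank : finrank R ↥(Z2.1 ⊓ (X.1 ⊔ Y.1)) = k - 1 := by
        have := Submodule.finrank_mono h1le
        rw [h12] at this
        omega
      have e1 : X.1 ⊓ Y.1 = Z2.1 ⊓ (X.1 ⊔ Y.1) :=
        Submodule.eq_of_le_of_finrank_eq hS0le (by rw [hinf, hrank])
      have e2 : Z1.1 ⊓ Z2.1 = Z2.1 ⊓ (X.1 ⊔ Y.1) :=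
        Submodule.eq_of_le_of_finrank_eq h1le (by rw [h12, hrank])
      exact hZ1 (by rw [e1, ← e2]; exact inf_le_left)


omit hn hk1 hk2

variable (R V k) in
def Linked (A B : Set {W : Submodule R V // finrank R W = k}) : Prop :=
  ∃ (i : ℕ) (c : ℕ → Set {W : Submodule R V // finrank R W = k}),
    c 0 = A ∧ c i = B ∧
    (∀ j ≤ i, IsMaxClique (grassmannGraph R V k) (c j)) ∧
    ∀ j, 1 ≤ j → j ≤ i →
      ∃ S U : Submodule R V, S < U ∧
        finrank R S = k - 1 ∧ finrank R U = k + 1 ∧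
        c (j - 1) ∩ c j = {X | S ≤ X.1 ∧ X.1 ≤ U}

lemma linked_refl {A : Set {W : Submodule R V // finrank R W = k}}
    (h : IsMaxClique (grassmannGraph R V k) A) : Linked R V k A A :=
  ⟨0, fun _ => A, rfl, rfl, fun _ _ => h, fun j h1 h2 => absurd (h1.trans h2) (by omega)⟩

lemma linked_trans {A B C : Set {W : Submodule R V // finrank R W = k}}
    (hAB : Linked R V k A B) (hBC : Linked R V k B C) : Linked R V k A C := by
  obtain ⟨i1, c1, h10, h1i, h1m, h1l⟩ := hAB
  obtain ⟨i2, c2, h20, h2i, h2m, h2l⟩ := hBC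
  refine ⟨i1 + i2, fun j => if j ≤ i1 then c1 j else c2 (j - i1), ?_, ?_, ?_, ?_⟩
  · simp [h10]
  · by_cases h : i1 + i2 ≤ i1
    · have hi2 : i2 = 0 := by omega
      simp only [if_pos h]
      subst hi2
      rw [Nat.add_zero, h1i, ← h2i, ← h20]
    · simp only [if_neg h]
      rw [show i1 + i2 - i1 = i2 by omega, h2i]
  · intro j hj
    by_cases h : j ≤ i1
    · simpa only [if_pos h] using h1m j h
    · simpa only [if_neg h] using h2m (j - i1) (by omega)
  · intro j hj1 hj2
    by_cases h : j ≤ i1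
    · have h' : j - 1 ≤ i1 := by omega
      simpa only [if_pos h, if_pos h'] using h1l j hj1 h
    · obtain ⟨S, U, hSU, hS, hU, hline⟩ := h2l (j - i1) (by omega) (by omega)
      refine ⟨S, U, hSU, hS, hU, ?_⟩
      have e2 : (if j ≤ i1 then c1 j else c2 (j - i1)) = c2 (j - i1) := if_neg h
      have e1 : (if j - 1 ≤ i1 then c1 (j - 1) else c2 (j - 1 - i1)) = c2 (j - i1 - 1) := by
        by_cases h' : j - 1 ≤ i1
        · have hji : j = i1 + 1 := by omega
          rw [if_pos h', hji, show i1 + 1 - 1 = i1 from by omega,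
            show i1 + 1 - i1 - 1 = 0 from by omega, h1i, ← h20]
        · rw [if_neg h', show j - 1 - i1 = j - i1 - 1 from by omega]
      simp only [e1, e2]
      exact hline

lemma linked_symm {A B : Set {W : Submodule R V // finrank R W = k}}
    (hAB : Linked R V k A B) : Linked R V k B A := by
  obtain ⟨i, c, h0, hi, hm, hl⟩ := hAB
  refine ⟨i, fun j => c (i - j), by show c (i - 0) = B; rw [Nat.sub_zero, hi],
    by show c (i - i) = A; rw [Nat.sub_self, h0],
    fun j _ => hm (i - j) (by omega), ?_⟩
  intro j hj1 hj2
  obtain ⟨S, U, hSU, hS, hU, hline⟩ := hl (i - j + 1) (by omega) (by omega)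
  refine ⟨S, U, hSU, hS, hU, ?_⟩
  show c (i - (j - 1)) ∩ c (i - j) = _
  rw [show i - (j - 1) = i - j + 1 from by omega, Set.inter_comm,
    show i - j = i - j + 1 - 1 from by omega]
  exact hline

include hn hk1 hk2 in
lemma linked_step {S U : Submodule R V} (hS : finrank R S = k - 1)
    (hU : finrank R U = k + 1) (hSU : S < U) :
    Linked R V k (gstar k S) (gtop k U) := by
  refine ⟨1, fun j => if j = 0 then gstar k S else gtop k U, if_pos rfl,
    if_neg one_ne_zero, ?_, ?_⟩
  · intro j hj
    interval_cases j
    · simpa using gstar_isMaxClique hn hk1 hk2 hS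
    · simpa using gtop_isMaxClique hn hk1 hk2 hU
  · intro j hj1 hj2
    have hj : j = 1 := by omega
    subst hj
    refine ⟨S, U, hSU, hS, hU, ?_⟩
    norm_num
    rfl

include hn hk1 hk2 in
lemma linked_stars :
    ∀ m (S S' : Submodule R V), finrank R S = k - 1 → finrank R S' = k - 1 →
      k - 1 ≤ finrank R ↥(S ⊓ S') + m → Linked R V k (gstar k S) (gstar k S') := by
  intro m
  induction m with
  | zero =>
    intro S S' hS hS' hrank
    rw [Nat.add_zero] at hrank
    have h1 : S ⊓ S' = S :=
      Submodule.eq_of_le_of_finrank_le inf_le_left (by omega)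
    have h2 : S = S' :=
      Submodule.eq_of_le_of_finrank_eq (by rw [← h1]; exact inf_le_right) (by rw [hS, hS'])
    rw [h2]
    exact linked_refl (gstar_isMaxClique hn hk1 hk2 hS')
  | succ m ih =>
    intro S S' hS hS' hrank
    by_cases heq : S = S'
    · rw [heq]
      exact linked_refl (gstar_isMaxClique hn hk1 hk2 hS')
    · have hn2 : k + 2 ≤ n := by omega
      have hW : S ⊓ S' < S := by
        refine lt_of_le_of_ne inf_le_left (fun h => heq ?_)
        exact Submodule.eq_of_le_of_finrank_eq (by rw [← h]; exact inf_le_right)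
          (by rw [hS, hS'])
      have hWrank := Submodule.finrank_lt_finrank_of_lt hW
      rw [hS] at hWrank
      obtain ⟨H, hWH, hHS, hHrank⟩ :=
        exists_intermediate (S ⊓ S') S inf_le_left (k - 2) (by omega) (by omega)
      have hS'S : ¬S' ≤ S := fun h => heq
        (Submodule.eq_of_le_of_finrank_eq h (by rw [hS', hS])).symm
      obtain ⟨v, hvS', hvS⟩ := SetLike.not_le_iff_exists.1 hS'S
      have hvH : v ∉ H := fun h => hvS (hHS h)
      have hT1rank : finrank R ↥(H ⊔ Submodule.span R {v}) = k - 1 := by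
        rw [finrank_sup_span_singleton H hvH, hHrank]; omega
      set T1 := H ⊔ Submodule.span R {v} with hT1def
      have hsupST : S ⊔ T1 = S ⊔ Submodule.span R {v} := by
        rw [hT1def, ← sup_assoc, sup_eq_left.2 hHS]
      have hsupSTrank : finrank R ↥(S ⊔ T1) = k := by
        rw [hsupST, finrank_sup_span_singleton S hvS, hS]; omega
      obtain ⟨w, hw⟩ := exists_not_mem_of_finrank_lt (S ⊔ T1) (by rw [hsupSTrank, hn]; omega)
      have hUrank : finrank R ↥(S ⊔ T1 ⊔ Submodule.span R {w}) = k + 1 := by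
        rw [finrank_sup_span_singleton _ hw, hsupSTrank]
      set U := S ⊔ T1 ⊔ Submodule.span R {w} with hUdef
      have hSU : S < U :=
        lt_of_le_of_finrank_lt (le_trans le_sup_left le_sup_left)
          (by rw [hS, hUrank]; omega)
      have hT1U : T1 < U :=
        lt_of_le_of_finrank_lt (le_trans le_sup_right le_sup_left)
          (by rw [hT1rank, hUrank]; omega)
      have l1 : Linked R V k (gstar k S) (gtop k U) := linked_step hn hk1 hk2 hS hUrank hSU
      have l2 : Linked R V k (gstar k T1) (gtop k U) := linked_step hn hk1 hk2 hT1rank hUrank hT1U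
      have l3 : Linked R V k (gstar k T1) (gstar k S') := by
        apply ih T1 S' hT1rank hS'
        have hWv : (S ⊓ S') ⊔ Submodule.span R {v} ≤ T1 ⊓ S' := by
          refine le_inf (sup_le (le_trans hWH le_sup_left) le_sup_right) ?_
          exact sup_le inf_le_right ((Submodule.span_singleton_le_iff_mem _ _).2 hvS')
        have hWvrank : finrank R ↥((S ⊓ S') ⊔ Submodule.span R {v})
            = finrank R ↥(S ⊓ S') + 1 :=
          finrank_sup_span_singleton _ (fun h => hvS (Submodule.mem_inf.1 h).1)
        have := Submodule.finrank_mono hWv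
        omega
      exact linked_trans (linked_trans l1 (linked_symm l2)) l3

include hn hk1 hk2 in
lemma linked_star_top {S U' : Submodule R V} (hS : finrank R S = k - 1)
    (hU' : finrank R U' = k + 1) : Linked R V k (gstar k S) (gtop k U') := by
  obtain ⟨S', -, hS'U', hS'rank⟩ :=
    exists_intermediate ⊥ U' bot_le (k - 1)
      (show finrank R (⊥ : Submodule R V) ≤ k - 1 by rw [finrank_bot]; omega)
      (by rw [hU']; omega)
  have hlt : S' < U' := lt_of_le_of_finrank_lt hS'U' (by rw [hS'rank, hU']; omega)
  exact linked_trans (linked_stars hn hk1 hk2 (k - 1) S S' hS hS'rank (by omega))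
    (linked_step hn hk1 hk2 hS'rank hU' hlt)

include hn hk1 hk2 in
lemma linked_of_maxCliques {A B : Set {W : Submodule R V // finrank R W = k}}
    (hA : IsMaxClique (grassmannGraph R V k) A) (hB : IsMaxClique (grassmannGraph R V k) B) :
    Linked R V k A B := by
  rcases classify hn hk1 hk2 hA with ⟨S, hS, rfl⟩ | ⟨U, hU, rfl⟩ <;>
    rcases classify hn hk1 hk2 hB with ⟨S', hS', rfl⟩ | ⟨U', hU', rfl⟩
  · exact linked_stars hn hk1 hk2 (k - 1) S S' hS hS' (by omega)
  · exact linked_star_top hn hk1 hk2 hS hU'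
  · exact linked_symm (linked_star_top hn hk1 hk2 hS' hU)
  · obtain ⟨S, -, hSU, hSrank⟩ :=
      exists_intermediate ⊥ U bot_le (k - 1)
        (show finrank R (⊥ : Submodule R V) ≤ k - 1 by rw [finrank_bot]; omega)
        (by rw [hU]; omega)
    exact linked_trans (linked_symm (linked_star_top hn hk1 hk2 hSrank hU))
      (linked_star_top hn hk1 hk2 hSrank hU')

end GrassmannChainAux


/-- Any two distinct maximal cliques of `Γ_k(V)` (with `1 < k < n-1`) are
connected by a finite sequence of maximal cliques in which the intersection of any two
consecutive ones is a line `[S,U]_k`. -/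
theorem grassmann_maximal_cliques_chain
    (R V : Type*) [DivisionRing R] [AddCommGroup V] [Module R V] [FiniteDimensional R V]
    (n k : ℕ) (hn : Module.finrank R V = n) (hk1 : 1 < k) (hk2 : k < n - 1)
    (𝒳 𝒴 : Set {W : Submodule R V // Module.finrank R W = k})
    (h𝒳 : IsMaxClique (grassmannGraph R V k) 𝒳)
    (h𝒴 : IsMaxClique (grassmannGraph R V k) 𝒴)
    (hne : 𝒳 ≠ 𝒴) :
    ∃ (i : ℕ) (c : ℕ → Set {W : Submodule R V // Module.finrank R W = k}),
      c 0 = 𝒳 ∧ c i = 𝒴 ∧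
      (∀ j ≤ i, IsMaxClique (grassmannGraph R V k) (c j)) ∧
      ∀ j, 1 ≤ j → j ≤ i →
        ∃ S U : Submodule R V, S < U ∧
          Module.finrank R S = k - 1 ∧ Module.finrank R U = k + 1 ∧
          c (j - 1) ∩ c j = {X | S ≤ X.1 ∧ X.1 ≤ U} := by
  exact GrassmannChainAux.linked_of_maxCliques hn hk1 hk2 h𝒳 h𝒴
end

section
/- Let V and V' be left vector spaces of finite dimensions n and n' over division rings R and R', let k ∈ {2,…,n−2} and k' ∈ {2,…,n'−2}. For every embedding f of the Grassmann graph Γ_k(V) in the Grassmann graph Γ_{k'}(V'), the image of every maximal clique of Γ_k(V) under f is contained in precisely one maximal clique of Γ_{k'}(V'). -/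
open Module

section Helpers

variable {R V : Type*} [DivisionRing R] [AddCommGroup V] [Module R V] [FiniteDimensional R V]
  {k : ℕ}

local notation "Vx" => {W : Submodule R V // Module.finrank R W = k}

lemma grassmann_adj {X Y : Vx} :
    (grassmannGraph R V k).Adj X Y ↔ X ≠ Y ∧ Module.finrank R ↥(X.1 ⊓ Y.1) = k - 1 :=
  Iff.rfl

lemma subtype_ne {X Y : Vx} (h : X ≠ Y) : X.1 ≠ Y.1 := fun h' => h (Subtype.ext h')

lemma rank_ident (X Y : Submodule R V) :
    Module.finrank R ↥(X ⊔ Y) + Module.finrank R ↥(X ⊓ Y)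
      = Module.finrank R X + Module.finrank R Y :=
  Submodule.finrank_sup_add_finrank_inf_eq X Y

lemma inf_lt_of_ne {X Y : Submodule R V} (hX : Module.finrank R X = k)
    (hY : Module.finrank R Y = k) (hne : X ≠ Y) : Module.finrank R ↥(X ⊓ Y) < k := by
  have h1 : Module.finrank R ↥(X ⊓ Y) ≤ k := hX ▸ Submodule.finrank_mono inf_le_left
  rcases h1.lt_or_eq with h | h
  · exact h
  · exfalso
    have h2 : X ⊓ Y = X := Submodule.eq_of_le_of_finrank_le inf_le_left (by omega)
    have h3 : X ≤ Y := inf_eq_left.mp h2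
    exact hne (Submodule.eq_of_le_of_finrank_le h3 (by omega))

lemma lt_sup_of_ne {X Y : Submodule R V} (hX : Module.finrank R X = k)
    (hY : Module.finrank R Y = k) (hne : X ≠ Y) : k < Module.finrank R ↥(X ⊔ Y) := by
  by_contra h
  push_neg at h
  have h2 : X ⊔ Y = X := (Submodule.eq_of_le_of_finrank_le le_sup_left (by omega)).symm
  have h3 : Y ≤ X := sup_eq_left.mp h2
  exact hne (Submodule.eq_of_le_of_finrank_le h3 (by omega)).symm

lemma adj_of_inf (hk : 1 ≤ k) {X Y : Vx} (hne : X ≠ Y)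
    (h : k - 1 ≤ Module.finrank R ↥(X.1 ⊓ Y.1)) : (grassmannGraph R V k).Adj X Y := by
  refine ⟨hne, ?_⟩
  have := inf_lt_of_ne X.2 Y.2 (subtype_ne hne)
  omega

lemma adj_sup (hk : 1 ≤ k) {X Y : Vx} (h : (grassmannGraph R V k).Adj X Y) :
    Module.finrank R ↥(X.1 ⊔ Y.1) = k + 1 := by
  have h1 := rank_ident X.1 Y.1
  have h2 := h.2
  have h3 := X.2; have h4 := Y.2
  omega

lemma adj_of_sup (hk : 1 ≤ k) {X Y : Vx} (hne : X ≠ Y)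
    (h : Module.finrank R ↥(X.1 ⊔ Y.1) ≤ k + 1) : (grassmannGraph R V k).Adj X Y := by
  refine ⟨hne, ?_⟩
  have h1 := rank_ident X.1 Y.1
  have h2 := inf_lt_of_ne X.2 Y.2 (subtype_ne hne)
  have h3 := X.2; have h4 := Y.2
  omega

/-- The triple lemma: for pairwise adjacent `X, Y, Z`, either `X ⊓ Y ≤ Z` or `Z ≤ X ⊔ Y`. -/
lemma triple_lemma (hk : 1 ≤ k) {X Y Z : Vx}
    (hXY : (grassmannGraph R V k).Adj X Y) (hXZ : (grassmannGraph R V k).Adj X Z)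
    (hYZ : (grassmannGraph R V k).Adj Y Z) :
    X.1 ⊓ Y.1 ≤ Z.1 ∨ Z.1 ≤ X.1 ⊔ Y.1 := by
  have frZX : Module.finrank R ↥(Z.1 ⊓ X.1) = k - 1 := by
    have := hXZ.2; rwa [inf_comm] at this
  have frZY : Module.finrank R ↥(Z.1 ⊓ Y.1) = k - 1 := by
    have := hYZ.2; rwa [inf_comm] at this
  by_cases h : Z.1 ⊓ X.1 = Z.1 ⊓ Y.1
  · left
    have hle : Z.1 ⊓ X.1 ≤ X.1 ⊓ Y.1 := le_inf inf_le_right (h ▸ inf_le_right)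
    have heq : Z.1 ⊓ X.1 = X.1 ⊓ Y.1 :=
      Submodule.eq_of_le_of_finrank_le hle (by rw [frZX, hXY.2])
    exact heq ▸ inf_le_left
  · right
    have hlt : Z.1 ⊓ X.1 < (Z.1 ⊓ X.1) ⊔ (Z.1 ⊓ Y.1) := by
      refine lt_of_le_of_ne le_sup_left (fun heq => h ?_)
      have h2 : Z.1 ⊓ Y.1 ≤ Z.1 ⊓ X.1 := heq ▸ le_sup_right
      exact (Submodule.eq_of_le_of_finrank_le h2 (by rw [frZX, frZY])).symm
    have hfr : k - 1 < Module.finrank R ↥((Z.1 ⊓ X.1) ⊔ (Z.1 ⊓ Y.1)) :=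
      frZX ▸ Submodule.finrank_lt_finrank_of_lt hlt
    have hle : (Z.1 ⊓ X.1) ⊔ (Z.1 ⊓ Y.1) ≤ Z.1 := sup_le inf_le_left inf_le_left
    have heq : (Z.1 ⊓ X.1) ⊔ (Z.1 ⊓ Y.1) = Z.1 :=
      Submodule.eq_of_le_of_finrank_le hle (by rw [Z.2]; omega)
    calc Z.1 = (Z.1 ⊓ X.1) ⊔ (Z.1 ⊓ Y.1) := heq.symm
    _ ≤ X.1 ⊔ Y.1 := sup_le (inf_le_right.trans le_sup_left) (inf_le_right.trans le_sup_right)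

lemma star_clique (hk : 1 ≤ k) {Z : Submodule R V} (hZ : Module.finrank R Z = k - 1) :
    (grassmannGraph R V k).IsClique {X : Vx | Z ≤ X.1} := by
  intro X hX Y hY hne
  refine adj_of_inf hk hne ?_
  have : Z ≤ X.1 ⊓ Y.1 := le_inf hX hY
  exact hZ ▸ Submodule.finrank_mono this

lemma top_clique (hk : 1 ≤ k) {U : Submodule R V} (hU : Module.finrank R U = k + 1) :
    (grassmannGraph R V k).IsClique {X : Vx | X.1 ≤ U} := by
  intro X hX Y hY hne
  refine adj_of_sup hk hne ?_
  exact hU ▸ Submodule.finrank_mono (sup_le hX hY)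

set_option maxHeartbeats 1000000 in
/-- If a clique contains a "strict star triple", every element contains the centre. -/
lemma clique_subset_star (hk : 1 ≤ k) {M : Set Vx} (hM : (grassmannGraph R V k).IsClique M)
    {X Y W : Vx} (hX : X ∈ M) (hY : Y ∈ M) (hW : W ∈ M)
    (hXY : X ≠ Y) (hXW : X ≠ W) (hYW : Y ≠ W)
    (h1 : X.1 ⊓ Y.1 ≤ W.1) (h2 : ¬ W.1 ≤ X.1 ⊔ Y.1) :
    ∀ D ∈ M, X.1 ⊓ Y.1 ≤ D.1 := by
  intro D hD
  by_cases hDX : D = X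
  · rw [hDX]; exact inf_le_left
  by_cases hDY : D = Y
  · rw [hDY]; exact inf_le_right
  by_cases hDW : D = W
  · rw [hDW]; exact h1
  by_contra hno
  have aXY := hM hX hY hXY
  have aXW := hM hX hW hXW
  have aYW := hM hY hW hYW
  have aXD := hM hX hD (fun h => hDX h.symm)
  have aYD := hM hY hD (fun h => hDY h.symm)
  have aWD := hM hW hD (fun h => hDW h.symm)
  -- X ⊓ W = X ⊓ Y and Y ⊓ W = X ⊓ Y
  have hXWi : X.1 ⊓ W.1 = X.1 ⊓ Y.1 := by
    refine (Submodule.eq_of_le_of_finrank_le (le_inf inf_le_left h1) ?_).symm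
    rw [aXW.2, aXY.2]
  have hYWi : Y.1 ⊓ W.1 = X.1 ⊓ Y.1 := by
    refine (Submodule.eq_of_le_of_finrank_le (le_inf inf_le_right h1) ?_).symm
    rw [aYW.2, aXY.2]
  -- D ≤ X ⊔ W and D ≤ Y ⊔ W
  have hD2 : D.1 ≤ X.1 ⊔ W.1 := by
    rcases triple_lemma hk aXW aXD aWD with h | h
    · rw [hXWi] at h; exact absurd h hno
    · exact h
  have hD3 : D.1 ≤ Y.1 ⊔ W.1 := by
    rcases triple_lemma hk aYW aYD aWD with h | h
    · rw [hYWi] at h; exact absurd h hno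
    · exact h
  -- dimension computations
  have frXY : Module.finrank R ↥(X.1 ⊔ Y.1) = k + 1 := adj_sup hk aXY
  have frXW : Module.finrank R ↥(X.1 ⊔ W.1) = k + 1 := adj_sup hk aXW
  have frYW : Module.finrank R ↥(Y.1 ⊔ W.1) = k + 1 := adj_sup hk aYW
  set T := X.1 ⊔ Y.1 ⊔ W.1 with hT
  have hT1 : X.1 ⊔ Y.1 < T := by
    refine lt_of_le_of_ne le_sup_left (fun heq => h2 ?_)
    rw [heq, hT]; exact le_sup_right
  have hTlo : k + 1 < Module.finrank R T := by
    have := Submodule.finrank_lt_finrank_of_lt hT1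
    omega
  have hThi : Module.finrank R T ≤ k + 2 := by
    have hid := rank_ident (X.1 ⊔ Y.1) W.1
    rw [← hT, frXY, W.2] at hid
    have hinf : k - 1 ≤ Module.finrank R ↥((X.1 ⊔ Y.1) ⊓ W.1) := by
      have : X.1 ⊓ Y.1 ≤ (X.1 ⊔ Y.1) ⊓ W.1 := le_inf (inf_le_left.trans le_sup_left) h1
      calc k - 1 = Module.finrank R ↥(X.1 ⊓ Y.1) := aXY.2.symm
      _ ≤ _ := Submodule.finrank_mono this
    have hW2 := W.2
    omega
  have hTeq : Module.finrank R T = k + 2 := by omega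
  -- (X ⊔ W) ⊓ (Y ⊔ W) = W
  have hsupT : (X.1 ⊔ W.1) ⊔ (Y.1 ⊔ W.1) = T := by
    rw [hT]
    refine le_antisymm ?_ ?_
    · exact sup_le (sup_le (le_sup_left.trans le_sup_left) le_sup_right)
        (sup_le (le_sup_right.trans le_sup_left) le_sup_right)
    · exact sup_le (sup_le (le_sup_left.trans le_sup_left)
        (le_sup_left.trans le_sup_right)) (le_sup_right.trans le_sup_left)
  have hid2 := rank_ident (X.1 ⊔ W.1) (Y.1 ⊔ W.1)
  rw [hsupT, hTeq, frXW, frYW] at hid2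
  have hWle : W.1 ≤ (X.1 ⊔ W.1) ⊓ (Y.1 ⊔ W.1) := le_inf le_sup_right le_sup_right
  have hWeq : W.1 = (X.1 ⊔ W.1) ⊓ (Y.1 ⊔ W.1) :=
    Submodule.eq_of_le_of_finrank_le hWle (by rw [W.2]; omega)
  have hDW2 : D.1 ≤ W.1 := by rw [hWeq]; exact le_inf hD2 hD3
  exact hDW (Subtype.ext (Submodule.eq_of_le_of_finrank_le hDW2 (by rw [W.2, D.2])))

/-- If a clique contains a "strict top triple", every element is contained in the top. -/
lemma clique_subset_top (hk : 2 ≤ k) {M : Set Vx} (hM : (grassmannGraph R V k).IsClique M)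
    {X Y W : Vx} (hX : X ∈ M) (hY : Y ∈ M) (hW : W ∈ M)
    (hXY : X ≠ Y) (hXW : X ≠ W) (hYW : Y ≠ W)
    (h1 : W.1 ≤ X.1 ⊔ Y.1) (h2 : ¬ X.1 ⊓ Y.1 ≤ W.1) :
    ∀ D ∈ M, D.1 ≤ X.1 ⊔ Y.1 := by
  have hk1 : 1 ≤ k := by omega
  intro D hD
  by_cases hDX : D = X
  · rw [hDX]; exact le_sup_left
  by_cases hDY : D = Y
  · rw [hDY]; exact le_sup_right
  by_cases hDW : D = W
  · rw [hDW]; exact h1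
  by_contra hno
  have aXY := hM hX hY hXY
  have aXW := hM hX hW hXW
  have aYW := hM hY hW hYW
  have aXD := hM hX hD (fun h => hDX h.symm)
  have aYD := hM hY hD (fun h => hDY h.symm)
  have aWD := hM hW hD (fun h => hDW h.symm)
  have frXY : Module.finrank R ↥(X.1 ⊔ Y.1) = k + 1 := adj_sup hk1 aXY
  have frXW : Module.finrank R ↥(X.1 ⊔ W.1) = k + 1 := adj_sup hk1 aXW
  have frYW : Module.finrank R ↥(Y.1 ⊔ W.1) = k + 1 := adj_sup hk1 aYW
  -- X ⊔ W = X ⊔ Y and Y ⊔ W = X ⊔ Y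
  have hXWs : X.1 ⊔ W.1 = X.1 ⊔ Y.1 :=
    Submodule.eq_of_le_of_finrank_le (sup_le le_sup_left h1) (by rw [frXY, frXW])
  have hYWs : Y.1 ⊔ W.1 = X.1 ⊔ Y.1 :=
    Submodule.eq_of_le_of_finrank_le (sup_le le_sup_right h1) (by rw [frXY, frYW])
  have hD1 : X.1 ⊓ Y.1 ≤ D.1 := by
    rcases triple_lemma hk1 aXY aXD aYD with h | h
    · exact h
    · exact absurd h hno
  have hD2 : X.1 ⊓ W.1 ≤ D.1 := by
    rcases triple_lemma hk1 aXW aXD aWD with h | h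
    · exact h
    · rw [hXWs] at h; exact absurd h hno
  -- finrank (X ⊓ Y ⊓ W) ≤ k - 2
  have hiii : (X.1 ⊓ Y.1) ⊓ (X.1 ⊓ W.1) = X.1 ⊓ Y.1 ⊓ W.1 := by
    refine le_antisymm (le_inf inf_le_left ((inf_le_right).trans inf_le_right)) ?_
    exact le_inf inf_le_left (le_inf (inf_le_left.trans inf_le_left) inf_le_right)
  have hfriii : Module.finrank R ↥(X.1 ⊓ Y.1 ⊓ W.1) < k - 1 := by
    rcases (lt_or_eq_of_le (Submodule.finrank_mono (inf_le_left :
      X.1 ⊓ Y.1 ⊓ W.1 ≤ X.1 ⊓ Y.1))).symm with h | h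
    · exfalso
      have : X.1 ⊓ Y.1 ⊓ W.1 = X.1 ⊓ Y.1 :=
        Submodule.eq_of_le_of_finrank_le inf_le_left (le_of_eq h.symm)
      exact h2 (this ▸ inf_le_right)
    · rw [aXY.2] at h; exact h
  -- (X ⊓ Y) ⊔ (X ⊓ W) = X
  have hid := rank_ident (X.1 ⊓ Y.1) (X.1 ⊓ W.1)
  rw [hiii, aXY.2, aXW.2] at hid
  have hSle : (X.1 ⊓ Y.1) ⊔ (X.1 ⊓ W.1) ≤ X.1 := sup_le inf_le_left inf_le_left
  have hSeq : (X.1 ⊓ Y.1) ⊔ (X.1 ⊓ W.1) = X.1 :=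
    Submodule.eq_of_le_of_finrank_le hSle (by rw [X.2]; omega)
  have hXD : X.1 ≤ D.1 := by rw [← hSeq]; exact sup_le hD1 hD2
  exact hDX (Subtype.ext (Submodule.eq_of_le_of_finrank_le hXD (by rw [X.2, D.2])).symm)

/-- Line absorption: a vertex adjacent to two distinct points of a line is adjacent to every
other point of the line. -/
lemma line_absorb (hk : 1 ≤ k) {Z U : Submodule R V}
    (hZ : Module.finrank R Z = k - 1) (hU : Module.finrank R U = k + 1)
    {P1 P2 P3 A : Vx} (h1 : Z ≤ P1.1) (h1' : P1.1 ≤ U) (h2 : Z ≤ P2.1) (h2' : P2.1 ≤ U)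
    (h3 : Z ≤ P3.1) (h3' : P3.1 ≤ U) (hP : P1 ≠ P2)
    (hA1 : (grassmannGraph R V k).Adj A P1) (hA2 : (grassmannGraph R V k).Adj A P2)
    (hA3 : A ≠ P3) : (grassmannGraph R V k).Adj A P3 := by
  have hP12 : P1.1 ⊓ P2.1 = Z := by
    refine (Submodule.eq_of_le_of_finrank_le (le_inf h1 h2) ?_).symm
    have := inf_lt_of_ne P1.2 P2.2 (subtype_ne hP)
    omega
  by_cases hH : A.1 ⊓ P1.1 = A.1 ⊓ P2.1
  · -- common hyperplane case : Z ≤ A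
    have hle : A.1 ⊓ P1.1 ≤ Z := by
      rw [← hP12]
      exact le_inf inf_le_right (by rw [hH]; exact inf_le_right)
    have heq : A.1 ⊓ P1.1 = Z :=
      Submodule.eq_of_le_of_finrank_le hle (by rw [hA1.2, hZ])
    have hZA : Z ≤ A.1 := by rw [← heq]; exact inf_le_left
    refine adj_of_inf hk hA3 ?_
    exact hZ ▸ Submodule.finrank_mono (le_inf hZA h3)
  · -- A ≤ U case
    have fr1 : Module.finrank R ↥(A.1 ⊓ P1.1) = k - 1 := hA1.2
    have fr2 : Module.finrank R ↥(A.1 ⊓ P2.1) = k - 1 := hA2.2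
    have hlt : A.1 ⊓ P1.1 < (A.1 ⊓ P1.1) ⊔ (A.1 ⊓ P2.1) := by
      refine lt_of_le_of_ne le_sup_left (fun heq => hH ?_)
      have h' : A.1 ⊓ P2.1 ≤ A.1 ⊓ P1.1 := heq ▸ le_sup_right
      exact (Submodule.eq_of_le_of_finrank_le h' (by rw [fr1, fr2])).symm
    have hfr : k - 1 < Module.finrank R ↥((A.1 ⊓ P1.1) ⊔ (A.1 ⊓ P2.1)) :=
      fr1 ▸ Submodule.finrank_lt_finrank_of_lt hlt
    have hAeq : (A.1 ⊓ P1.1) ⊔ (A.1 ⊓ P2.1) = A.1 :=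
      Submodule.eq_of_le_of_finrank_le (sup_le inf_le_left inf_le_left) (by rw [A.2]; omega)
    have hAU : A.1 ≤ U := by
      rw [← hAeq]; exact sup_le (inf_le_right.trans h1') (inf_le_right.trans h2')
    refine adj_of_sup hk hA3 ?_
    exact hU ▸ Submodule.finrank_mono (sup_le hAU h3')

lemma exists_submodule_finrank (m : ℕ) (hm : m ≤ Module.finrank R V) :
    ∃ Z : Submodule R V, Module.finrank R Z = m := by
  have b := Module.finBasis R V
  have hli : LinearIndependent R (fun i : Fin m => b (Fin.castLE hm i)) :=
    b.linearIndependent.comp (Fin.castLE hm) (Fin.castLE_injective hm)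
  refine ⟨Submodule.span R (Set.range (fun i : Fin m => b (Fin.castLE hm i))), ?_⟩
  rw [finrank_span_eq_card hli, Fintype.card_fin]

lemma exists_le_finrank (X : Submodule R V) (m : ℕ) (hm : m ≤ Module.finrank R X) :
    ∃ Z : Submodule R V, Z ≤ X ∧ Module.finrank R Z = m := by
  obtain ⟨p, hp⟩ := exists_submodule_finrank (R := R) (V := ↥X) m hm
  exact ⟨p.map X.subtype, Submodule.map_subtype_le X p,
    by rw [Submodule.finrank_map_subtype_eq, hp]⟩

lemma exists_not_mem (X : Submodule R V) (h : Module.finrank R X < Module.finrank R V) :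
    ∃ v, v ∉ X := by
  by_contra hall
  push_neg at hall
  have : X = ⊤ := Submodule.eq_top_iff'.mpr hall
  rw [this, finrank_top] at h
  exact lt_irrefl _ h

lemma fr_sup_span (Z : Submodule R V) {v : V} (hv : v ∉ Z) :
    Module.finrank R ↥(Z ⊔ Submodule.span R {v}) = Module.finrank R Z + 1 := by
  have hv0 : v ≠ 0 := fun h => hv (h ▸ Z.zero_mem)
  have hbot : Z ⊓ Submodule.span R {v} = ⊥ := by
    rw [eq_bot_iff]
    rintro x ⟨hx1, hx2⟩
    obtain ⟨t, rfl⟩ := Submodule.mem_span_singleton.mp hx2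
    by_cases ht : t = 0
    · simp [ht]
    · have h1 : t⁻¹ • t • v ∈ Z := Z.smul_mem t⁻¹ hx1
      rw [smul_smul, inv_mul_cancel₀ ht, one_smul] at h1
      exact absurd h1 hv
  have hid := rank_ident Z (Submodule.span R {v})
  rw [hbot, finrank_bot, finrank_span_singleton hv0] at hid
  omega

lemma exists_hyperplane_avoid {U : Submodule R V} {z : V} (hz : z ∈ U) (hz0 : z ≠ 0) :
    ∃ A : Submodule R V, A ≤ U ∧ Module.finrank R A = Module.finrank R U - 1 ∧ z ∉ A := by
  set z' : ↥U := ⟨z, hz⟩ with hz'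
  have hz'0 : z' ≠ 0 := fun h => hz0 (congrArg Subtype.val h)
  obtain ⟨p, hp⟩ := (Submodule.span R {z'}).exists_isCompl
  refine ⟨p.map U.subtype, Submodule.map_subtype_le U p, ?_, ?_⟩
  · have hadd := Submodule.finrank_add_eq_of_isCompl hp
    rw [finrank_span_singleton hz'0] at hadd
    rw [Submodule.finrank_map_subtype_eq]
    omega
  · rintro hmem
    obtain ⟨y, hy, hyz⟩ := hmem
    have hyz' : y = z' := Subtype.ext hyz
    have : z' ∈ Submodule.span R {z'} ⊓ p :=
      ⟨Submodule.mem_span_singleton_self z', hyz' ▸ hy⟩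
    rw [hp.inf_eq_bot] at this
    exact hz'0 this

lemma mem_of_mem_sup_span {U Z : Submodule R V} {w x : V} (hw : w ∉ U) (hZU : Z ≤ U)
    (hx : x ∈ Z ⊔ Submodule.span R {w}) (hxU : x ∈ U) : x ∈ Z := by
  obtain ⟨z, hz, y, hy, rfl⟩ := Submodule.mem_sup.mp hx
  obtain ⟨t, rfl⟩ := Submodule.mem_span_singleton.mp hy
  by_cases ht : t = 0
  · simpa [ht] using hz
  · exfalso
    have : t • w ∈ U := by
      have := U.sub_mem hxU (hZU hz)
      simpa using this
    have h2 : t⁻¹ • t • w ∈ U := U.smul_mem t⁻¹ this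
    rw [smul_smul, inv_mul_cancel₀ ht, one_smul] at h2
    exact hw h2

/-- Existence of a "defect configuration" for any maximal clique. -/
lemma exists_defect (hk : 2 ≤ k) (hkn : k + 2 ≤ Module.finrank R V) {C : Set Vx}
    (hC : IsMaxClique (grassmannGraph R V k) C) :
    ∃ X ∈ C, ∃ Y ∈ C, ∃ W ∈ C, ∃ A : Vx,
      X ≠ Y ∧ X ≠ W ∧ Y ≠ W ∧ (grassmannGraph R V k).Adj A X ∧
      (grassmannGraph R V k).Adj A Y ∧ ¬ (grassmannGraph R V k).Adj A W ∧ A ≠ W := by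
  have hk1 : 1 ≤ k := by omega
  obtain ⟨hCcl, hCmax⟩ := hC
  -- C is nonempty
  obtain ⟨Z0, hZ0⟩ := exists_submodule_finrank (R := R) (V := V) k (by omega)
  have hCne : ∃ X, X ∈ C := by
    by_contra hno
    push_neg at hno
    have hsub : C ⊆ {(⟨Z0, hZ0⟩ : Vx)} := fun x hx => absurd hx (hno x)
    have hcl : (grassmannGraph R V k).IsClique {(⟨Z0, hZ0⟩ : Vx)} :=
      Set.pairwise_singleton _ _
    have heq := hCmax {(⟨Z0, hZ0⟩ : Vx)} hcl hsub
    exact hno _ (by rw [heq]; exact rfl)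
  obtain ⟨X, hX⟩ := hCne
  -- there is another element of C
  have hCtwo : ∃ Y ∈ C, Y ≠ X := by
    by_contra hno
    push_neg at hno
    obtain ⟨Z1, hZ1le, hZ1⟩ := exists_le_finrank X.1 (k - 1) (by rw [X.2]; omega)
    obtain ⟨v, hv⟩ := exists_not_mem X.1 (by rw [X.2]; omega)
    have hvZ1 : v ∉ Z1 := fun h => hv (hZ1le h)
    have hfrY0 : Module.finrank R ↥(Z1 ⊔ Submodule.span R {v}) = k := by
      rw [fr_sup_span Z1 hvZ1, hZ1]; omega
    set Y0 : Vx := ⟨Z1 ⊔ Submodule.span R {v}, hfrY0⟩ with hY0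
    have hvY0 : v ∈ Y0.1 := Submodule.mem_sup_right (Submodule.mem_span_singleton_self v)
    have hY0X : Y0 ≠ X := fun h => hv (by rw [← show Y0.1 = X.1 from congrArg Subtype.val h]; exact hvY0)
    have hadj : (grassmannGraph R V k).Adj X Y0 := by
      refine adj_of_inf hk1 (fun h => hY0X h.symm) ?_
      have : Z1 ≤ X.1 ⊓ Y0.1 := le_inf hZ1le le_sup_left
      exact hZ1 ▸ Submodule.finrank_mono this
    have hclD : (grassmannGraph R V k).IsClique (insert Y0 C) := by
      intro a ha b hb hab
      rcases ha with rfl | ha <;> rcases hb with rfl | hb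
      · exact absurd rfl hab
      · have : b = X := hno b hb
        exact this ▸ hadj.symm
      · have : a = X := hno a ha
        exact this ▸ hadj
      · exact hCcl ha hb hab
    have := hCmax _ hclD (Set.subset_insert _ _)
    exact hY0X (hno Y0 (this ▸ Set.mem_insert _ _))
  obtain ⟨Y, hY, hYX⟩ := hCtwo
  have hXY : X ≠ Y := fun h => hYX h.symm
  have aXY := hCcl hX hY hXY
  set Z := X.1 ⊓ Y.1 with hZdef
  set U := X.1 ⊔ Y.1 with hUdef
  have frZ : Module.finrank R Z = k - 1 := aXY.2
  have frU : Module.finrank R U = k + 1 := adj_sup hk1 aXY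
  have hZX : Z ≤ X.1 := inf_le_left
  have hZY : Z ≤ Y.1 := inf_le_right
  have hXU : X.1 ≤ U := le_sup_left
  have hYU : Y.1 ≤ U := le_sup_right
  by_cases hstar : ∀ W ∈ C, Z ≤ W.1
  · -- C is the star of Z; pick W outside U and A inside U not containing Z
    obtain ⟨w, hw⟩ := exists_not_mem U (by omega)
    have hwZ : w ∉ Z := fun h => hw (hZX.trans hXU h)
    have hfrW : Module.finrank R ↥(Z ⊔ Submodule.span R {w}) = k := by
      rw [fr_sup_span Z hwZ, frZ]; omega
    set W : Vx := ⟨Z ⊔ Submodule.span R {w}, hfrW⟩ with hWdef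
    have hwW : w ∈ W.1 := Submodule.mem_sup_right (Submodule.mem_span_singleton_self w)
    have hWX : X ≠ W := fun h => hw (hXU (by rw [show X.1 = W.1 from congrArg Subtype.val h]; exact hwW))
    have hWY : Y ≠ W := fun h => hw (hYU (by rw [show Y.1 = W.1 from congrArg Subtype.val h]; exact hwW))
    -- W belongs to C since C is a maximal clique contained in the star
    have hstarcl := star_clique (R := R) (V := V) hk1 frZ
    have hCeq : C = {T : Vx | Z ≤ T.1} := hCmax _ hstarcl (fun T hT => hstar T hT)
    have hWC : W ∈ C := by
      rw [hCeq]
      show Z ≤ W.1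
      exact le_sup_left
    -- the vertex A : hyperplane of U avoiding a nonzero vector of Z
    have hZbot : Z ≠ ⊥ := by
      intro h
      rw [h, finrank_bot] at frZ
      omega
    obtain ⟨z0, hz0Z, hz00⟩ := Submodule.exists_mem_ne_zero_of_ne_bot hZbot
    obtain ⟨A0, hA0U, hfrA0, hz0A0⟩ :=
      exists_hyperplane_avoid (hXU (hZX hz0Z)) hz00
    have hfrA : Module.finrank R A0 = k := by rw [hfrA0, frU]; omega
    set A : Vx := ⟨A0, hfrA⟩ with hAdef
    have hAX : A ≠ X := fun h => hz0A0
      (by rw [show A0 = X.1 from congrArg Subtype.val h]; exact hZX hz0Z)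
    have hAY : A ≠ Y := fun h => hz0A0
      (by rw [show A0 = Y.1 from congrArg Subtype.val h]; exact hZY hz0Z)
    have hz0W : z0 ∈ W.1 := Submodule.mem_sup_left hz0Z
    have hAW : A ≠ W := fun h => hz0A0 (by rw [show A0 = W.1 from congrArg Subtype.val h]; exact hz0W)
    refine ⟨X, hX, Y, hY, W, hWC, A, hXY, hWX, hWY, ?_, ?_, ?_, hAW⟩
    · exact adj_of_sup hk1 hAX (frU ▸ Submodule.finrank_mono (sup_le hA0U hXU))
    · exact adj_of_sup hk1 hAY (frU ▸ Submodule.finrank_mono (sup_le hA0U hYU))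
    · -- ¬ Adj A W
      intro hadj
      have hsub : A.1 ⊓ W.1 ≤ A0 ⊓ Z := by
        rintro x ⟨hx1, hx2⟩
        exact ⟨hx1, mem_of_mem_sup_span hw (hZX.trans hXU) hx2 (hA0U hx1)⟩
      have hlt : A0 ⊓ Z < Z := lt_of_le_of_ne inf_le_right
        (fun h => hz0A0 (Submodule.mem_inf.mp (by rw [h]; exact hz0Z)).1)
      have h1 : Module.finrank R ↥(A0 ⊓ Z) < k - 1 :=
        frZ ▸ Submodule.finrank_lt_finrank_of_lt hlt
      have h2 : Module.finrank R ↥(A.1 ⊓ W.1) ≤ Module.finrank R ↥(A0 ⊓ Z) :=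
        Submodule.finrank_mono hsub
      rw [hadj.2] at h2
      omega
  · -- there is W ∈ C not containing Z : then W ≤ U ; take A = Z + span a with a ∉ U
    push_neg at hstar
    obtain ⟨W, hWC, hZW⟩ := hstar
    have hWX : X ≠ W := fun h => hZW (by rw [← show X.1 = W.1 from congrArg Subtype.val h]; exact hZX)
    have hWY : Y ≠ W := fun h => hZW (by rw [← show Y.1 = W.1 from congrArg Subtype.val h]; exact hZY)
    have aXW := hCcl hX hWC hWX
    have aYW := hCcl hY hWC hWY
    have hWU : W.1 ≤ U := by
      rcases triple_lemma hk1 aXY aXW aYW with h | h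
      · exact absurd h hZW
      · exact h
    obtain ⟨a, ha⟩ := exists_not_mem U (by omega)
    have haZ : a ∉ Z := fun h => ha (hZX.trans hXU h)
    have hfrA : Module.finrank R ↥(Z ⊔ Submodule.span R {a}) = k := by
      rw [fr_sup_span Z haZ, frZ]; omega
    set A : Vx := ⟨Z ⊔ Submodule.span R {a}, hfrA⟩ with hAdef
    have haA : a ∈ A.1 := Submodule.mem_sup_right (Submodule.mem_span_singleton_self a)
    have hAX : A ≠ X := fun h => ha (hXU (by rw [← show A.1 = X.1 from congrArg Subtype.val h]; exact haA))
    have hAY : A ≠ Y := fun h => ha (hYU (by rw [← show A.1 = Y.1 from congrArg Subtype.val h]; exact haA))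
    have hAW : A ≠ W := fun h => ha (hWU (by rw [← show A.1 = W.1 from congrArg Subtype.val h]; exact haA))
    refine ⟨X, hX, Y, hY, W, hWC, A, hXY, hWX, hWY, ?_, ?_, ?_, hAW⟩
    · exact adj_of_inf hk1 hAX (frZ ▸ Submodule.finrank_mono (le_inf le_sup_left hZX))
    · exact adj_of_inf hk1 hAY (frZ ▸ Submodule.finrank_mono (le_inf le_sup_left hZY))
    · intro hadj
      have hsub : A.1 ⊓ W.1 ≤ Z ⊓ W.1 := by
        rintro x ⟨hx1, hx2⟩
        exact ⟨mem_of_mem_sup_span ha (hZX.trans hXU) hx1 (hWU hx2), hx2⟩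
      have hlt : Z ⊓ W.1 < Z := lt_of_le_of_ne inf_le_left
        (fun h => hZW (by rw [← h]; exact inf_le_right))
      have h1 : Module.finrank R ↥(Z ⊓ W.1) < k - 1 :=
        frZ ▸ Submodule.finrank_lt_finrank_of_lt hlt
      have h2 : Module.finrank R ↥(A.1 ⊓ W.1) ≤ Module.finrank R ↥(Z ⊓ W.1) :=
        Submodule.finrank_mono hsub
      rw [hadj.2] at h2
      omega

end Helpers

/-- For every embedding `f` of `Γ_k(V)` in `Γ_{k'}(V')` (with
`2 ≤ k ≤ n-2`, `2 ≤ k' ≤ n'-2`), the image of every maximal clique of `Γ_k(V)` is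
contained in precisely one maximal clique of `Γ_{k'}(V')`. -/
theorem embedding_maximal_clique_unique
    (R V : Type*) [DivisionRing R] [AddCommGroup V] [Module R V] [FiniteDimensional R V]
    (R' V' : Type*) [DivisionRing R'] [AddCommGroup V'] [Module R' V'] [FiniteDimensional R' V']
    (n k n' k' : ℕ) (hn : Module.finrank R V = n) (hn' : Module.finrank R' V' = n')
    (hk1 : 2 ≤ k) (hk2 : k ≤ n - 2) (hk1' : 2 ≤ k') (hk2' : k' ≤ n' - 2)
    (f : {W : Submodule R V // Module.finrank R W = k} →
         {W : Submodule R' V' // Module.finrank R' W = k'})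
    (hf : IsGraphEmbedding (grassmannGraph R V k) (grassmannGraph R' V' k') f) :
    ∀ C : Set {W : Submodule R V // Module.finrank R W = k},
      IsMaxClique (grassmannGraph R V k) C →
      ∃! C' : Set {W : Submodule R' V' // Module.finrank R' W = k'},
        IsMaxClique (grassmannGraph R' V' k') C' ∧ f '' C ⊆ C' := by
  intro C hC
  obtain ⟨hf1, hf2⟩ := hf
  have hCcl := hC.1
  have hk1'' : 1 ≤ k' := by omega
  -- the image of C is a clique
  have hS : (grassmannGraph R' V' k').IsClique (f '' C) := by
    rintro _ ⟨a, ha, rfl⟩ _ ⟨b, hb, rfl⟩ hne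
    have hab : a ≠ b := fun h => hne (h ▸ rfl)
    exact (hf2 a b).1 (hCcl ha hb hab)
  -- existence : extend f '' C to a maximal clique by Zorn's lemma
  have hZorn : ∃ M, f '' C ⊆ M ∧
      Maximal (· ∈ {D : Set _ | (grassmannGraph R' V' k').IsClique D}) M := by
    apply zorn_subset_nonempty
    · intro c hc hchain hcne
      refine ⟨⋃₀ c, ?_, fun s hs => Set.subset_sUnion_of_mem hs⟩
      intro a ha b hb hab
      obtain ⟨s, hs, has⟩ := ha
      obtain ⟨t, ht, hbt⟩ := hb
      rcases hchain.total hs ht with h | h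
      · exact hc ht (h has) hbt hab
      · exact hc hs has (h hbt) hab
    · exact hS
  obtain ⟨M, hSM, hMmax⟩ := hZorn
  have hMcl : (grassmannGraph R' V' k').IsClique M := hMmax.1
  have hMisMax : IsMaxClique (grassmannGraph R' V' k') M :=
    ⟨hMcl, fun D hD hMD => subset_antisymm hMD (hMmax.2 hD hMD)⟩
  refine ⟨M, ⟨hMisMax, hSM⟩, ?_⟩
  rintro M' ⟨hM'isMax, hSM'⟩
  -- uniqueness : any two maximal cliques containing f '' C coincide
  have key : ∀ M1 M2 : Set {W : Submodule R' V' // Module.finrank R' W = k'},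
      IsMaxClique (grassmannGraph R' V' k') M1 → IsMaxClique (grassmannGraph R' V' k') M2 →
      f '' C ⊆ M1 → f '' C ⊆ M2 → M1 = M2 := by
    intro M1 M2 hM1 hM2 hCM1 hCM2
    -- defect configuration in the source
    obtain ⟨X, hX, Y, hY, W, hW, A, hXY, hXW, hYW, aAX, aAY, naAW, hAW⟩ :=
      exists_defect hk1 (by omega) hC
    have aXY := hCcl hX hY hXY
    have aXW := hCcl hX hW hXW
    have aYW := hCcl hY hW hYW
    set P1 := f X with hP1
    set P2 := f Y with hP2
    set P3 := f W with hP3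
    have hP12 : P1 ≠ P2 := fun h => hXY (hf1 h)
    have hP13 : P1 ≠ P3 := fun h => hXW (hf1 h)
    have hP23 : P2 ≠ P3 := fun h => hYW (hf1 h)
    have aP12 := (hf2 X Y).1 aXY
    have aP13 := (hf2 X W).1 aXW
    have aP23 := (hf2 Y W).1 aYW
    have hP1M1 : P1 ∈ M1 := hCM1 ⟨X, hX, rfl⟩
    have hP2M1 : P2 ∈ M1 := hCM1 ⟨Y, hY, rfl⟩
    have hP3M1 : P3 ∈ M1 := hCM1 ⟨W, hW, rfl⟩
    have hP1M2 : P1 ∈ M2 := hCM2 ⟨X, hX, rfl⟩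
    have hP2M2 : P2 ∈ M2 := hCM2 ⟨Y, hY, rfl⟩
    have hP3M2 : P3 ∈ M2 := hCM2 ⟨W, hW, rfl⟩
    by_cases hcase1 : P1.1 ⊓ P2.1 ≤ P3.1
    · by_cases hcase2 : P3.1 ≤ P1.1 ⊔ P2.1
      · -- line case : contradiction with the defect vertex
        exfalso
        have frZ' : Module.finrank R' ↥(P1.1 ⊓ P2.1) = k' - 1 := aP12.2
        have frU' : Module.finrank R' ↥(P1.1 ⊔ P2.1) = k' + 1 := adj_sup hk1'' aP12
        have aA1 := (hf2 A X).1 aAX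
        have aA2 := (hf2 A Y).1 aAY
        have hfAW : f A ≠ P3 := fun h => hAW (hf1 h)
        have : (grassmannGraph R' V' k').Adj (f A) P3 :=
          line_absorb hk1'' frZ' frU' inf_le_left le_sup_left inf_le_right le_sup_right
            hcase1 hcase2 hP12 aA1 aA2 hfAW
        exact naAW ((hf2 A W).2 this)
      · -- strict star case : both M1 and M2 are the star of P1 ⊓ P2
        have frZ' : Module.finrank R' ↥(P1.1 ⊓ P2.1) = k' - 1 := aP12.2
        have hstarcl := star_clique (R := R') (V := V') hk1'' frZ'
        have hM1star : M1 ⊆ {T | P1.1 ⊓ P2.1 ≤ T.1} := fun D hD =>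
          clique_subset_star hk1'' hM1.1 hP1M1 hP2M1 hP3M1 hP12 hP13 hP23 hcase1 hcase2 D hD
        have hM2star : M2 ⊆ {T | P1.1 ⊓ P2.1 ≤ T.1} := fun D hD =>
          clique_subset_star hk1'' hM2.1 hP1M2 hP2M2 hP3M2 hP12 hP13 hP23 hcase1 hcase2 D hD
        rw [hM1.2 _ hstarcl hM1star, hM2.2 _ hstarcl hM2star]
    · -- strict top case : both M1 and M2 are the top of P1 ⊔ P2
      have hWle : P3.1 ≤ P1.1 ⊔ P2.1 := by
        rcases triple_lemma hk1'' aP12 aP13 aP23 with h | h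
        · exact absurd h hcase1
        · exact h
      have frU' : Module.finrank R' ↥(P1.1 ⊔ P2.1) = k' + 1 := adj_sup hk1'' aP12
      have htopcl := top_clique (R := R') (V := V') hk1'' frU'
      have hM1top : M1 ⊆ {T | T.1 ≤ P1.1 ⊔ P2.1} := fun D hD =>
        clique_subset_top hk1' hM1.1 hP1M1 hP2M1 hP3M1 hP12 hP13 hP23 hWle hcase1 D hD
      have hM2top : M2 ⊆ {T | T.1 ≤ P1.1 ⊔ P2.1} := fun D hD =>
        clique_subset_top hk1' hM2.1 hP1M2 hP2M2 hP3M2 hP12 hP13 hP23 hWle hcase1 D hD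
      rw [hM1.2 _ htopcl hM1top, hM2.2 _ htopcl hM2top]
  exact key M' M hM'isMax hMisMax hSM' hSM
end

section
/- Let V and V' be left vector spaces of finite dimensions n and n' over division rings R and R', let k ∈ {2,…,n−2} and k' ∈ {2,…,n'−2}. For every embedding f of the Grassmann graph Γ_k(V) in the Grassmann graph Γ_{k'}(V'), exactly one of the following holds: (A) the image under f of every star of Γ_k(V) is contained in a star of Γ_{k'}(V') and the image of every top is contained in a top; or (B) the image under f of every star is contained in a top and the image of every top is contained in a star. -/
open Module

set_option linter.unusedSectionVars false
set_option maxHeartbeats 1000000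

section GrassmannAux
open Submodule

variable {K M : Type*} [DivisionRing K] [AddCommGroup M] [Module K M] [FiniteDimensional K M]

variable {K M : Type*} [DivisionRing K] [AddCommGroup M] [Module K M] [FiniteDimensional K M]

lemma coef_zero {A : Submodule K M} {x : M} (hx : x ∉ A) {a : K} (h : a • x ∈ A) : a = 0 := by
  by_contra ha
  exact hx (by simpa [smul_smul, inv_mul_cancel₀ ha] using A.smul_mem a⁻¹ h)

lemma exchange_mem {A : Submodule K M} {x y : M} (hy : y ∈ A ⊔ (K ∙ x)) (hyA : y ∉ A) :
    x ∈ A ⊔ (K ∙ y) := by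
  rcases Submodule.mem_sup.mp hy with ⟨u, hu, z, hz, hzy⟩
  rcases mem_span_singleton.mp hz with ⟨c, rfl⟩
  have hc : c ≠ 0 := by rintro rfl; simp at hzy; exact hyA (hzy ▸ hu)
  have : x = c⁻¹ • y - c⁻¹ • u := by
    rw [← hzy]; rw [smul_add, smul_smul, inv_mul_cancel₀ hc, one_smul]; abel
  rw [this]
  exact sub_mem (mem_sup_right (mem_span_singleton.mpr ⟨c⁻¹, rfl⟩))
    (mem_sup_left (A.smul_mem _ hu))

lemma finrank_sup_singleton {A : Submodule K M} {x : M} (hx : x ∉ A) :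
    finrank K ↥(A ⊔ (K ∙ x)) = finrank K A + 1 := by
  have hx0 : x ≠ 0 := fun h => hx (h ▸ A.zero_mem)
  have h1 : finrank K ↥(K ∙ x) = 1 := finrank_span_singleton hx0
  have h2 : A ⊓ (K ∙ x) = ⊥ := by
    rw [eq_bot_iff]
    rintro z hz
    rcases Submodule.mem_inf.mp hz with ⟨hzA, hzx⟩
    rcases mem_span_singleton.mp hzx with ⟨c, rfl⟩
    have : c = 0 := coef_zero hx hzA
    simp [this]
  have h3 := Submodule.finrank_sup_add_finrank_inf_eq A (K ∙ x)
  rw [h2] at h3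
  simp only [finrank_bot] at h3
  omega

lemma exists_between_fd {A B : Submodule K M} (hAB : A ≤ B) {m : ℕ}
    (h1 : finrank K A ≤ m) (h2 : m ≤ finrank K B) :
    ∃ C, A ≤ C ∧ C ≤ B ∧ finrank K C = m := by
  induction m with
  | zero => exact ⟨A, le_rfl, hAB, Nat.le_zero.mp h1⟩
  | succ m ih =>
    rcases Nat.lt_or_ge (finrank K A) (m + 1) with h | h
    · obtain ⟨C, hAC, hCB, hC⟩ := ih (Nat.lt_succ_iff.mp h) (le_trans (Nat.le_succ m) h2)
      have hne : C ≠ B := by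
        rintro rfl; omega
      obtain ⟨x, hxB, hxC⟩ := SetLike.exists_of_lt (lt_of_le_of_ne hCB hne)
      refine ⟨C ⊔ (K ∙ x), le_trans hAC le_sup_left, sup_le hCB ?_, ?_⟩
      · rwa [span_singleton_le_iff_mem]
      · rw [finrank_sup_singleton hxC, hC]
    · exact ⟨A, le_rfl, hAB, le_antisymm h1 h⟩

lemma exists_not_mem_s7 {A : Submodule K M} (h : finrank K A < finrank K M) : ∃ x, x ∉ A := by
  have hne : A ≠ ⊤ := by rintro rfl; rw [finrank_top] at h; omega
  have hlt : A < ⊤ := lt_top_iff_ne_top.mpr hne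
  obtain ⟨x, -, hx⟩ := SetLike.exists_of_lt hlt
  exact ⟨x, hx⟩

/-- dimension of an intersection bounded below by a common subspace, strictly
less than `Z` because of a witness element. -/
lemma dim_inf_eq_of_wit {Z X P : Submodule K M} {k : ℕ}
    (hZ : finrank K Z = k) (hP : finrank K P = k - 1) (hk : 1 ≤ k)
    (hPZ : P ≤ Z) (hPX : P ≤ X) {y : M} (hyZ : y ∈ Z) (hyX : y ∉ X) :
    finrank K ↥(Z ⊓ X) = k - 1 := by
  have h1 : P ≤ Z ⊓ X := le_inf hPZ hPX
  have h2 := Submodule.finrank_mono h1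
  have hlt : Z ⊓ X < Z := by
    rcases lt_or_eq_of_le (inf_le_left : Z ⊓ X ≤ Z) with h' | h'
    · exact h'
    · exfalso
      have : y ∈ Z ⊓ X := by rw [h']; exact hyZ
      exact hyX ((inf_le_right : Z ⊓ X ≤ X) this)
  have h3 := Submodule.finrank_lt_finrank_of_lt hlt
  omega

lemma conf_star {k : ℕ} (hk : 2 ≤ k) (hn : k + 2 ≤ finrank K M)
    {S : Submodule K M} (hS : finrank K S = k - 1) :
    ∃ X Y W Z : Submodule K M,
      finrank K X = k ∧ finrank K Y = k ∧ finrank K W = k ∧ finrank K Z = k ∧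
      S ≤ X ∧ S ≤ Y ∧ S ≤ W ∧
      X ≠ Y ∧ X ≠ W ∧ Y ≠ W ∧
      Z ≠ X ∧ Z ≠ Y ∧ Z ≠ W ∧
      finrank K ↥(Z ⊓ X) = k - 1 ∧ finrank K ↥(Z ⊓ Y) = k - 1 ∧
      finrank K ↥(Z ⊓ W) ≤ k - 2 := by
  obtain ⟨T, hTS, hTle, hT⟩ := exists_between_fd (m := k - 2) (bot_le : ⊥ ≤ S)
    (by simp) (by omega)
  obtain ⟨w, hw⟩ := exists_not_mem_s7 (A := S) (by omega)
  have hWd : finrank K ↥(S ⊔ (K ∙ w)) = k := by rw [finrank_sup_singleton hw]; omega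
  obtain ⟨y, hy⟩ := exists_not_mem_s7 (A := S ⊔ (K ∙ w)) (by omega)
  have hBd : finrank K ↥(S ⊔ (K ∙ w) ⊔ (K ∙ y)) = k + 1 := by
    rw [finrank_sup_singleton hy]; omega
  obtain ⟨x, hx⟩ := exists_not_mem_s7 (A := S ⊔ (K ∙ w) ⊔ (K ∙ y)) (by omega)
  set big := S ⊔ (K ∙ w) ⊔ (K ∙ y) with hbig
  have hSbig : S ≤ big := le_trans le_sup_left le_sup_left
  have hwbig : (K ∙ w) ≤ big := le_trans le_sup_right le_sup_left
  have hybig : (K ∙ y) ≤ big := le_sup_right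
  have hyS : y ∉ S := fun h => hy (Submodule.mem_sup_left h)
  have hxS : x ∉ S := fun h => hx (hSbig h)
  have hxT : x ∉ T := fun h => hxS (hTle h)
  have hyT : y ∉ T := fun h => hyS (hTle h)
  have hSybig : S ⊔ (K ∙ y) ≤ big := sup_le hSbig hybig
  -- y ∉ S ⊔ K∙x
  have hyX : y ∉ S ⊔ (K ∙ x) := fun h => hx (hSybig (exchange_mem h hyS))
  have hxY : x ∉ S ⊔ (K ∙ y) := fun h => hx (hSybig h)
  have hxW : x ∉ S ⊔ (K ∙ w) := fun h => hx (Submodule.mem_sup_left h)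
  have hyW : y ∉ S ⊔ (K ∙ w) := hy
  refine ⟨S ⊔ (K ∙ x), S ⊔ (K ∙ y), S ⊔ (K ∙ w), T ⊔ (K ∙ y) ⊔ (K ∙ x), ?_, ?_, ?_, ?_, ?_, ?_, ?_,
    ?_, ?_, ?_, ?_, ?_, ?_, ?_, ?_, ?_⟩
  · rw [finrank_sup_singleton hxS]; omega
  · rw [finrank_sup_singleton hyS]; omega
  · exact hWd
  · have h1 : y ∉ T := hyT
    have h2 : x ∉ T ⊔ (K ∙ y) := fun h =>
      hx (le_trans (sup_le (le_trans hTle hSbig) hybig) le_rfl h)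
    rw [finrank_sup_singleton h2, finrank_sup_singleton h1]; omega
  · exact le_sup_left
  · exact le_sup_left
  · exact le_sup_left
  · intro h
    apply hxY; rw [← h]; exact mem_sup_right (mem_span_singleton_self x)
  · intro h
    apply hxW; rw [← h]; exact mem_sup_right (mem_span_singleton_self x)
  · intro h
    apply hyW; rw [← h]; exact mem_sup_right (mem_span_singleton_self y)
  · intro h
    apply hyX; rw [← h]; exact mem_sup_left (mem_sup_right (mem_span_singleton_self y))
  · intro h
    apply hxY; rw [← h]; exact mem_sup_right (mem_span_singleton_self x)
  · intro h
    apply hxW; rw [← h]; exact mem_sup_right (mem_span_singleton_self x)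
  -- Z ⊓ X
  · refine dim_inf_eq_of_wit (P := T ⊔ (K ∙ x)) ?_ ?_ (by omega) ?_ ?_
      (mem_sup_left (mem_sup_right (mem_span_singleton_self y))) hyX
    · have h2 : x ∉ T ⊔ (K ∙ y) := fun h =>
        hx ((sup_le (le_trans hTle hSbig) hybig) h)
      rw [finrank_sup_singleton h2, finrank_sup_singleton hyT]; omega
    · rw [finrank_sup_singleton hxT]; omega
    · exact sup_le (le_trans le_sup_left le_sup_left) le_sup_right
    · exact sup_le (le_trans hTle le_sup_left) le_sup_right
  -- Z ⊓ Y
  · refine dim_inf_eq_of_wit (P := T ⊔ (K ∙ y)) ?_ ?_ (by omega) ?_ ?_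
      (mem_sup_right (mem_span_singleton_self x)) hxY
    · have h2 : x ∉ T ⊔ (K ∙ y) := fun h =>
        hx ((sup_le (le_trans hTle hSbig) hybig) h)
      rw [finrank_sup_singleton h2, finrank_sup_singleton hyT]; omega
    · rw [finrank_sup_singleton hyT]; omega
    · exact le_sup_left
    · exact sup_le (le_trans hTle le_sup_left) le_sup_right
  -- Z ⊓ W ≤ T
  · have hle : (T ⊔ (K ∙ y) ⊔ (K ∙ x)) ⊓ (S ⊔ (K ∙ w)) ≤ T := by
      intro z hz
      rcases Submodule.mem_inf.mp hz with ⟨hz1, hz2⟩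
      rcases Submodule.mem_sup.mp hz1 with ⟨p, hp, q, hq, hpq⟩
      rcases mem_span_singleton.mp hq with ⟨a, rfl⟩
      rcases Submodule.mem_sup.mp hp with ⟨t, ht, r, hr, htr⟩
      rcases mem_span_singleton.mp hr with ⟨b, rfl⟩
      have hax : a • x = z - t - b • y := by
        rw [← hpq, ← htr]; abel
      have hmem : a • x ∈ big := by
        rw [hax]
        exact sub_mem (sub_mem (Submodule.mem_sup_left hz2) (hSbig (hTle ht))) (hybig
          (mem_span_singleton.mpr ⟨b, rfl⟩))
      have ha : a = 0 := coef_zero hx hmem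
      have hby : b • y = z - t := by
        rw [← hpq, ← htr, ha, zero_smul, add_zero]; abel
      have hmem2 : b • y ∈ S ⊔ (K ∙ w) := by
        rw [hby]
        exact sub_mem hz2 (Submodule.mem_sup_left (hTle ht))
      have hb : b = 0 := coef_zero hy hmem2
      have : z = t := by rw [← hpq, ← htr, ha, hb, zero_smul, zero_smul, add_zero, add_zero]
      rwa [this]
    calc finrank K ↥((T ⊔ (K ∙ y) ⊔ (K ∙ x)) ⊓ (S ⊔ (K ∙ w))) ≤ finrank K ↥T :=
          Submodule.finrank_mono hle
      _ ≤ k - 2 := le_of_eq hT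

lemma exists_mem_not_mem {A B : Submodule K M} (hAB : A ≤ B)
    (h : finrank K A < finrank K B) : ∃ x ∈ B, x ∉ A := by
  have hne : A ≠ B := by rintro rfl; omega
  exact SetLike.exists_of_lt (lt_of_le_of_ne hAB hne)

lemma conf_top {k : ℕ} (hk : 2 ≤ k) (hn : k + 2 ≤ finrank K M)
    {U : Submodule K M} (hU : finrank K U = k + 1) :
    ∃ X Y W Z : Submodule K M,
      finrank K X = k ∧ finrank K Y = k ∧ finrank K W = k ∧ finrank K Z = k ∧
      X ≤ U ∧ Y ≤ U ∧ W ≤ U ∧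
      X ≠ Y ∧ X ≠ W ∧ Y ≠ W ∧
      Z ≠ X ∧ Z ≠ Y ∧ Z ≠ W ∧
      finrank K ↥(Z ⊓ X) = k - 1 ∧ finrank K ↥(Z ⊓ Y) = k - 1 ∧
      finrank K ↥(Z ⊓ W) ≤ k - 2 := by
  obtain ⟨P, -, hPU, hP⟩ := exists_between_fd (m := k - 1) (bot_le : ⊥ ≤ U)
    (by simp) (by omega)
  obtain ⟨T, -, hTP, hT⟩ := exists_between_fd (m := k - 2) (bot_le : ⊥ ≤ P)
    (by simp) (by omega)
  obtain ⟨u, huU, huP⟩ := exists_mem_not_mem hPU (by omega)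
  have hXd : finrank K ↥(P ⊔ (K ∙ u)) = k := by rw [finrank_sup_singleton huP]; omega
  have hXU : P ⊔ (K ∙ u) ≤ U := sup_le hPU ((span_singleton_le_iff_mem u U).mpr huU)
  obtain ⟨u', hu'U, hu'X⟩ := exists_mem_not_mem hXU (by omega)
  obtain ⟨v, hv⟩ := exists_not_mem_s7 (A := U) (by omega)
  have hu'P : u' ∉ P := fun h => hu'X (Submodule.mem_sup_left h)
  have huY : u ∉ P ⊔ (K ∙ u') := fun h => hu'X (exchange_mem h huP)
  have huT : u ∉ T := fun h => huP (hTP h)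
  have hu'TU : u' ∉ T ⊔ (K ∙ u) := fun h =>
    hu'X ((sup_le (le_trans hTP le_sup_left) le_sup_right) h)
  have hvP : v ∉ P := fun h => hv (hPU h)
  have hvX : v ∉ P ⊔ (K ∙ u) := fun h => hv (hXU h)
  have hYU : P ⊔ (K ∙ u') ≤ U := sup_le hPU ((span_singleton_le_iff_mem u' U).mpr hu'U)
  have hvY : v ∉ P ⊔ (K ∙ u') := fun h => hv (hYU h)
  have hWU : T ⊔ (K ∙ u) ⊔ (K ∙ u') ≤ U :=
    sup_le (sup_le (le_trans hTP hPU) ((span_singleton_le_iff_mem u U).mpr huU))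
      ((span_singleton_le_iff_mem u' U).mpr hu'U)
  have hvW : v ∉ T ⊔ (K ∙ u) ⊔ (K ∙ u') := fun h => hv (hWU h)
  refine ⟨P ⊔ (K ∙ u), P ⊔ (K ∙ u'), T ⊔ (K ∙ u) ⊔ (K ∙ u'), P ⊔ (K ∙ v),
    hXd, ?_, ?_, ?_, hXU, hYU, hWU, ?_, ?_, ?_, ?_, ?_, ?_, ?_, ?_, ?_⟩
  · rw [finrank_sup_singleton hu'P]; omega
  · rw [finrank_sup_singleton hu'TU, finrank_sup_singleton huT]; omega
  · rw [finrank_sup_singleton hvP]; omega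
  · intro h
    apply hu'X; rw [h]; exact mem_sup_right (mem_span_singleton_self u')
  · intro h
    apply hu'X; rw [h]; exact mem_sup_right (mem_span_singleton_self u')
  · intro h
    apply huY; rw [h]; exact mem_sup_left (mem_sup_right (mem_span_singleton_self u))
  · intro h
    apply hvX; rw [← h]; exact mem_sup_right (mem_span_singleton_self v)
  · intro h
    apply hvY; rw [← h]; exact mem_sup_right (mem_span_singleton_self v)
  · intro h
    apply hvW; rw [← h]; exact mem_sup_right (mem_span_singleton_self v)
  · exact dim_inf_eq_of_wit (P := P) (by rw [finrank_sup_singleton hvP]; omega) hP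
      (by omega) le_sup_left le_sup_left (mem_sup_right (mem_span_singleton_self v)) hvX
  · exact dim_inf_eq_of_wit (P := P) (by rw [finrank_sup_singleton hvP]; omega) hP
      (by omega) le_sup_left le_sup_left (mem_sup_right (mem_span_singleton_self v)) hvY
  · have hle : (P ⊔ (K ∙ v)) ⊓ (T ⊔ (K ∙ u) ⊔ (K ∙ u')) ≤ T := by
      intro z hz
      rcases Submodule.mem_inf.mp hz with ⟨hz1, hz2⟩
      rcases Submodule.mem_sup.mp hz1 with ⟨p, hp, q, hq, hpq⟩
      rcases mem_span_singleton.mp hq with ⟨c, rfl⟩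
      have hcv : c • v = z - p := by rw [← hpq]; abel
      have hc : c = 0 := by
        refine coef_zero hv ?_
        rw [hcv]
        exact sub_mem (hWU hz2) (hPU hp)
      have hzp : z = p := by rw [← hpq, hc, zero_smul, add_zero]
      rcases Submodule.mem_sup.mp hz2 with ⟨p2, hp2, q2, hq2, hpq2⟩
      rcases mem_span_singleton.mp hq2 with ⟨b, rfl⟩
      rcases Submodule.mem_sup.mp hp2 with ⟨t, ht, r, hr, htr⟩
      rcases mem_span_singleton.mp hr with ⟨a, rfl⟩
      have hbu : b • u' = z - t - a • u := by rw [← hpq2, ← htr]; abel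
      have hb : b = 0 := by
        refine coef_zero hu'X ?_
        rw [hbu]
        exact sub_mem (sub_mem (Submodule.mem_sup_left (hzp ▸ hp))
          (Submodule.mem_sup_left (hTP ht)))
          (mem_sup_right (mem_span_singleton.mpr ⟨a, rfl⟩))
      have hau : a • u = z - t := by rw [← hpq2, ← htr, hb, zero_smul, add_zero]; abel
      have ha : a = 0 := by
        refine coef_zero huP ?_
        rw [hau]
        exact sub_mem (hzp ▸ hp) (hTP ht)
      have : z = t := by rw [← hpq2, ← htr, ha, hb, zero_smul, zero_smul, add_zero, add_zero]
      rwa [this]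
    calc finrank K ↥((P ⊔ (K ∙ v)) ⊓ (T ⊔ (K ∙ u) ⊔ (K ∙ u'))) ≤ finrank K ↥T :=
          Submodule.finrank_mono hle
      _ ≤ k - 2 := le_of_eq hT

lemma conf_line {k : ℕ} (hk : 1 ≤ k) {S U : Submodule K M}
    (hS : finrank K S = k - 1) (hU : finrank K U = k + 1) (hSU : S ≤ U) :
    ∃ X1 X2 : Submodule K M, finrank K X1 = k ∧ finrank K X2 = k ∧
      S ≤ X1 ∧ X1 ≤ U ∧ S ≤ X2 ∧ X2 ≤ U ∧ X1 ≠ X2 := by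
  obtain ⟨u, huU, huS⟩ := exists_mem_not_mem hSU (by omega)
  have hX1 : finrank K ↥(S ⊔ (K ∙ u)) = k := by rw [finrank_sup_singleton huS]; omega
  have hX1U : S ⊔ (K ∙ u) ≤ U := sup_le hSU ((span_singleton_le_iff_mem u U).mpr huU)
  obtain ⟨u2, hu2U, hu2X⟩ := exists_mem_not_mem hX1U (by omega)
  have hu2S : u2 ∉ S := fun h => hu2X (Submodule.mem_sup_left h)
  refine ⟨S ⊔ (K ∙ u), S ⊔ (K ∙ u2), hX1, ?_, le_sup_left, hX1U, le_sup_left,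
    sup_le hSU ((span_singleton_le_iff_mem u2 U).mpr hu2U), ?_⟩
  · rw [finrank_sup_singleton hu2S]; omega
  · intro h
    apply hu2X; rw [h]; exact mem_sup_right (mem_span_singleton_self u2)

lemma conf_cross {k : ℕ} (hk : 2 ≤ k) (hn : k + 2 ≤ finrank K M)
    {S U : Submodule K M} (hS : finrank K S = k - 1) (hU : finrank K U = k + 1)
    (hSU : S ≤ U) :
    ∃ X Y : Submodule K M, finrank K X = k ∧ finrank K Y = k ∧
      S ≤ X ∧ Y ≤ U ∧ X ≠ Y ∧ finrank K ↥(X ⊓ Y) ≤ k - 2 := by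
  obtain ⟨T, -, hTS, hT⟩ := exists_between_fd (m := k - 2) (bot_le : ⊥ ≤ S)
    (by simp) (by omega)
  obtain ⟨u, huU, huS⟩ := exists_mem_not_mem hSU (by omega)
  have hX1U : S ⊔ (K ∙ u) ≤ U := sup_le hSU ((span_singleton_le_iff_mem u U).mpr huU)
  obtain ⟨u', hu'U, hu'X⟩ := exists_mem_not_mem hX1U
    (by rw [finrank_sup_singleton huS]; omega)
  obtain ⟨v, hv⟩ := exists_not_mem_s7 (A := U) (by omega)
  have hvS : v ∉ S := fun h => hv (hSU h)
  have huT : u ∉ T := fun h => huS (hTS h)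
  have hu'TU : u' ∉ T ⊔ (K ∙ u) := fun h =>
    hu'X ((sup_le (le_trans hTS le_sup_left) le_sup_right) h)
  have hYU : T ⊔ (K ∙ u) ⊔ (K ∙ u') ≤ U :=
    sup_le (sup_le (le_trans hTS hSU) ((span_singleton_le_iff_mem u U).mpr huU))
      ((span_singleton_le_iff_mem u' U).mpr hu'U)
  have hvY : v ∉ T ⊔ (K ∙ u) ⊔ (K ∙ u') := fun h => hv (hYU h)
  refine ⟨S ⊔ (K ∙ v), T ⊔ (K ∙ u) ⊔ (K ∙ u'), ?_, ?_, le_sup_left, hYU, ?_, ?_⟩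
  · rw [finrank_sup_singleton hvS]; omega
  · rw [finrank_sup_singleton hu'TU, finrank_sup_singleton huT]; omega
  · intro h
    apply hvY; rw [← h]; exact mem_sup_right (mem_span_singleton_self v)
  · have hle : (S ⊔ (K ∙ v)) ⊓ (T ⊔ (K ∙ u) ⊔ (K ∙ u')) ≤ T := by
      intro z hz
      rcases Submodule.mem_inf.mp hz with ⟨hz1, hz2⟩
      rcases Submodule.mem_sup.mp hz1 with ⟨p, hp, q, hq, hpq⟩
      rcases mem_span_singleton.mp hq with ⟨c, rfl⟩
      have hcv : c • v = z - p := by rw [← hpq]; abel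
      have hc : c = 0 := by
        refine coef_zero hv ?_
        rw [hcv]
        exact sub_mem (hYU hz2) (hSU hp)
      have hzp : z = p := by rw [← hpq, hc, zero_smul, add_zero]
      rcases Submodule.mem_sup.mp hz2 with ⟨p2, hp2, q2, hq2, hpq2⟩
      rcases mem_span_singleton.mp hq2 with ⟨b, rfl⟩
      rcases Submodule.mem_sup.mp hp2 with ⟨t, ht, r, hr, htr⟩
      rcases mem_span_singleton.mp hr with ⟨a, rfl⟩
      have hbu : b • u' = z - t - a • u := by rw [← hpq2, ← htr]; abel
      have hb : b = 0 := by
        have hu'SU : u' ∉ S ⊔ (K ∙ u) := hu'X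
        refine coef_zero hu'SU ?_
        rw [hbu]
        exact sub_mem (sub_mem (Submodule.mem_sup_left (hzp ▸ hp))
          (Submodule.mem_sup_left (hTS ht)))
          (mem_sup_right (mem_span_singleton.mpr ⟨a, rfl⟩))
      have hau : a • u = z - t := by rw [← hpq2, ← htr, hb, zero_smul, add_zero]; abel
      have ha : a = 0 := by
        refine coef_zero huS ?_
        rw [hau]
        exact sub_mem (hzp ▸ hp) (hTS ht)
      have : z = t := by rw [← hpq2, ← htr, ha, hb, zero_smul, zero_smul, add_zero, add_zero]
      rwa [this]
    calc finrank K ↥((S ⊔ (K ∙ v)) ⊓ (T ⊔ (K ∙ u) ⊔ (K ∙ u'))) ≤ finrank K ↥T :=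
          Submodule.finrank_mono hle
      _ ≤ k - 2 := le_of_eq hT



lemma dim_inf_lt {X Y : Submodule K M} {k : ℕ} (hX : finrank K X = k) (hY : finrank K Y = k)
    (hne : X ≠ Y) : finrank K ↥(X ⊓ Y) < k := by
  have hlt : X ⊓ Y < X := by
    rcases lt_or_eq_of_le (inf_le_left : X ⊓ Y ≤ X) with h | h
    · exact h
    · exfalso
      have hXY : X ≤ Y := by rw [← h]; exact inf_le_right
      exact hne (Submodule.eq_of_le_of_finrank_le hXY (by omega))
  have := Submodule.finrank_lt_finrank_of_lt hlt
  omega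

lemma dim_inf_of_star {X Y S : Submodule K M} {k : ℕ} (hk : 1 ≤ k)
    (hX : finrank K X = k) (hY : finrank K Y = k) (hne : X ≠ Y)
    (hS : finrank K S = k - 1) (hSX : S ≤ X) (hSY : S ≤ Y) :
    finrank K ↥(X ⊓ Y) = k - 1 := by
  have h1 : S ≤ X ⊓ Y := le_inf hSX hSY
  have h2 := Submodule.finrank_mono h1
  have h3 := dim_inf_lt hX hY hne
  omega

lemma dim_inf_of_top {X Y U : Submodule K M} {k : ℕ} (hk : 1 ≤ k)
    (hX : finrank K X = k) (hY : finrank K Y = k) (hne : X ≠ Y)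
    (hU : finrank K U = k + 1) (hXU : X ≤ U) (hYU : Y ≤ U) :
    finrank K ↥(X ⊓ Y) = k - 1 := by
  have h1 : X ⊔ Y ≤ U := sup_le hXU hYU
  have h2 := Submodule.finrank_mono h1
  have h3 := dim_inf_lt hX hY hne
  have h4 := Submodule.finrank_sup_add_finrank_inf_eq X Y
  omega

lemma dichotomy {X Y Z : Submodule K M} {k : ℕ} (hk : 1 ≤ k)
    (hZ : finrank K Z = k)
    (hXY : finrank K ↥(X ⊓ Y) = k - 1) (hZX : finrank K ↥(Z ⊓ X) = k - 1)
    (hZY : finrank K ↥(Z ⊓ Y) = k - 1) :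
    X ⊓ Y ≤ Z ∨ Z ≤ X ⊔ Y := by
  by_cases h : Z ⊓ X = Z ⊓ Y
  · left
    have h1 : Z ⊓ X ≤ X ⊓ Y := le_inf inf_le_right (h ▸ inf_le_right : Z ⊓ X ≤ Y)
    have h2 : Z ⊓ X = X ⊓ Y := Submodule.eq_of_le_of_finrank_le h1 (by omega)
    rw [← h2]; exact inf_le_left
  · right
    have h1 : Z ⊓ X ⊔ Z ⊓ Y ≤ Z := sup_le inf_le_left inf_le_left
    have h2 : Z ⊓ X < Z ⊓ X ⊔ Z ⊓ Y := by
      rcases lt_or_eq_of_le (le_sup_left : Z ⊓ X ≤ Z ⊓ X ⊔ Z ⊓ Y) with h' | h'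
      · exact h'
      · exfalso
        have : Z ⊓ Y ≤ Z ⊓ X := by rw [h']; exact le_sup_right
        exact h (Submodule.eq_of_le_of_finrank_le this (by omega)).symm
    have h3 := Submodule.finrank_lt_finrank_of_lt h2
    have h4 : Z ⊓ X ⊔ Z ⊓ Y = Z := Submodule.eq_of_le_of_finrank_le h1 (by omega)
    rw [← h4]
    exact sup_le (le_trans inf_le_right le_sup_left) (le_trans inf_le_right le_sup_right)

-- clique in star or top

lemma clique_star_or_top {k : ℕ} (hk : 1 ≤ k) (hkM : k - 1 ≤ finrank K M)
    (C : Set (Submodule K M)) (hdim : ∀ X ∈ C, finrank K X = k)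
    (hadj : ∀ X ∈ C, ∀ Y ∈ C, X ≠ Y → finrank K ↥(X ⊓ Y) = k - 1) :
    (∃ S : Submodule K M, finrank K S = k - 1 ∧ ∀ X ∈ C, S ≤ X) ∨
    (∃ U : Submodule K M, finrank K U = k + 1 ∧ ∀ X ∈ C, X ≤ U) := by
  by_cases hC : ∃ X ∈ C, ∃ Y ∈ C, X ≠ Y
  · obtain ⟨X, hXC, Y, hYC, hXY⟩ := hC
    have hXk := hdim X hXC
    have hYk := hdim Y hYC
    have dXY : finrank K ↥(X ⊓ Y) = k - 1 := hadj X hXC Y hYC hXY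
    by_cases hstar : ∀ W ∈ C, X ⊓ Y ≤ W
    · exact Or.inl ⟨X ⊓ Y, dXY, hstar⟩
    · push_neg at hstar
      obtain ⟨Z, hZC, hZ⟩ := hstar
      have hZk := hdim Z hZC
      have hZX : Z ≠ X := by rintro rfl; exact hZ inf_le_left
      have hZY : Z ≠ Y := by rintro rfl; exact hZ inf_le_right
      have dsup : finrank K ↥(X ⊔ Y) = k + 1 := by
        have := Submodule.finrank_sup_add_finrank_inf_eq X Y
        omega
      right
      refine ⟨X ⊔ Y, dsup, ?_⟩
      -- step: any W in C with W⊓X ≠ W⊓Y, W ≠ X, W ≠ Y lies in X ⊔ Y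
      have step : ∀ W ∈ C, W ≠ X → W ≠ Y → W ⊓ X ≠ W ⊓ Y → W ≤ X ⊔ Y := by
        intro W hWC hWX hWY hne
        have hWk := hdim W hWC
        have d1 : finrank K ↥(W ⊓ X) = k - 1 := hadj W hWC X hXC hWX
        have d2 : finrank K ↥(W ⊓ Y) = k - 1 := hadj W hWC Y hYC hWY
        have h1 : W ⊓ X ⊔ W ⊓ Y ≤ W := sup_le inf_le_left inf_le_left
        have h2 : W ⊓ X < W ⊓ X ⊔ W ⊓ Y := by
          rcases lt_or_eq_of_le (le_sup_left : W ⊓ X ≤ W ⊓ X ⊔ W ⊓ Y) with h' | h'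
          · exact h'
          · exact absurd (Submodule.eq_of_le_of_finrank_le (h' ▸ le_sup_right) (by omega)).symm hne
        have h3 := Submodule.finrank_lt_finrank_of_lt h2
        have h4 : W ⊓ X ⊔ W ⊓ Y = W := Submodule.eq_of_le_of_finrank_le h1 (by omega)
        rw [← h4]
        exact sup_le (le_trans inf_le_right le_sup_left) (le_trans inf_le_right le_sup_right)
      have hZU : Z ≤ X ⊔ Y := by
        refine step Z hZC hZX hZY ?_
        intro h
        have h1 : Z ⊓ X ≤ X ⊓ Y := le_inf inf_le_right (h ▸ inf_le_right : Z ⊓ X ≤ Y)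
        have d1 : finrank K ↥(Z ⊓ X) = k - 1 := hadj Z hZC X hXC hZX
        have h2 : Z ⊓ X = X ⊓ Y := Submodule.eq_of_le_of_finrank_le h1 (by omega)
        exact hZ (h2 ▸ inf_le_left)
      intro W hWC
      by_cases hWX : W = X
      · exact hWX ▸ le_sup_left
      by_cases hWY : W = Y
      · exact hWY ▸ le_sup_right
      by_cases hne : W ⊓ X ≠ W ⊓ Y
      · exact step W hWC hWX hWY hne
      push_neg at hne
      have hWk := hdim W hWC
      have d1 : finrank K ↥(W ⊓ X) = k - 1 := hadj W hWC X hXC hWX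
      have hP : W ⊓ X = X ⊓ Y :=
        Submodule.eq_of_le_of_finrank_le
          (le_inf inf_le_right (hne ▸ inf_le_right : W ⊓ X ≤ Y)) (by omega)
      have hXYW : X ⊓ Y ≤ W := hP ▸ inf_le_left
      have hWZ : W ≠ Z := by rintro rfl; exact hZ hXYW
      have dWZ : finrank K ↥(W ⊓ Z) = k - 1 := hadj W hWC Z hZC hWZ
      by_contra hW
      have hQ : W ⊓ (X ⊔ Y) = X ⊓ Y := by
        have hle : X ⊓ Y ≤ W ⊓ (X ⊔ Y) :=
          le_inf hXYW (le_trans inf_le_left le_sup_left)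
        have hlt : W ⊓ (X ⊔ Y) < W := by
          rcases lt_or_eq_of_le (inf_le_left : W ⊓ (X ⊔ Y) ≤ W) with h' | h'
          · exact h'
          · exact absurd (by rw [← h']; exact inf_le_right) hW
        have := Submodule.finrank_lt_finrank_of_lt hlt
        exact (Submodule.eq_of_le_of_finrank_le hle (by omega)).symm
      have hWZle : W ⊓ Z ≤ (X ⊓ Y) ⊓ Z := by
        refine le_inf ?_ inf_le_right
        rw [← hQ]
        exact le_inf inf_le_left (le_trans inf_le_right hZU)
      have hlt2 : (X ⊓ Y) ⊓ Z < X ⊓ Y := by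
        rcases lt_or_eq_of_le (inf_le_left : (X ⊓ Y) ⊓ Z ≤ X ⊓ Y) with h' | h'
        · exact h'
        · exact absurd (by rw [← h']; exact inf_le_right) hZ
      have h5 := Submodule.finrank_lt_finrank_of_lt hlt2
      have h6 := Submodule.finrank_mono hWZle
      omega
  · push_neg at hC
    by_cases hne : ∃ X, X ∈ C
    · obtain ⟨X, hXC⟩ := hne
      obtain ⟨S, _, hSX, hS⟩ := exists_between_fd (m := k - 1) (bot_le : ⊥ ≤ X)
        (by simp [finrank_bot]) (by rw [hdim X hXC]; omega)
      exact Or.inl ⟨S, hS, fun Y hYC => by rw [hC Y hYC X hXC]; exact hSX⟩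
    · push_neg at hne
      obtain ⟨S, _, _, hS⟩ := exists_between_fd (m := k - 1) (bot_le : ⊥ ≤ (⊤ : Submodule K M))
        (by simp [finrank_bot]) (by rw [finrank_top]; exact hkM)
      exact Or.inl ⟨S, hS, fun X hXC => absurd hXC (hne X)⟩

end GrassmannAux

open Submodule in
/-- For every embedding `f` of `Γ_k(V)` in `Γ_{k'}(V')`, exactly one of the
following holds: (A) stars go to subsets of stars and tops to subsets of tops, or
(B) stars go to subsets of tops and tops to subsets of stars. -/
theorem embedding_type_A_or_B
    (R V : Type*) [DivisionRing R] [AddCommGroup V] [Module R V] [FiniteDimensional R V]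
    (R' V' : Type*) [DivisionRing R'] [AddCommGroup V'] [Module R' V'] [FiniteDimensional R' V']
    (n k n' k' : ℕ) (hn : Module.finrank R V = n) (hn' : Module.finrank R' V' = n')
    (hk1 : 2 ≤ k) (hk2 : k ≤ n - 2) (hk1' : 2 ≤ k') (hk2' : k' ≤ n' - 2)
    (f : {W : Submodule R V // Module.finrank R W = k} →
         {W : Submodule R' V' // Module.finrank R' W = k'})
    (hf : IsGraphEmbedding (grassmannGraph R V k) (grassmannGraph R' V' k') f) :
    Xor'
      -- (A) stars go into stars and tops go into tops
      ((∀ S : Submodule R V, Module.finrank R S = k - 1 →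
          ∃ S' : Submodule R' V', Module.finrank R' S' = k' - 1 ∧
            ∀ X, S ≤ X.1 → S' ≤ (f X).1) ∧
       (∀ U : Submodule R V, Module.finrank R U = k + 1 →
          ∃ U' : Submodule R' V', Module.finrank R' U' = k' + 1 ∧
            ∀ X, X.1 ≤ U → (f X).1 ≤ U'))
      -- (B) stars go into tops and tops go into stars
      ((∀ S : Submodule R V, Module.finrank R S = k - 1 →
          ∃ U' : Submodule R' V', Module.finrank R' U' = k' + 1 ∧
            ∀ X, S ≤ X.1 → (f X).1 ≤ U') ∧
       (∀ U : Submodule R V, Module.finrank R U = k + 1 →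
          ∃ S' : Submodule R' V', Module.finrank R' S' = k' - 1 ∧
            ∀ X, X.1 ≤ U → S' ≤ (f X).1)) := by
  obtain ⟨hinj, hadj⟩ := hf
  have hnV : k + 2 ≤ finrank R V := by omega
  have hnV' : k' + 2 ≤ finrank R' V' := by omega
  clear hn hn' hk2 hk2'
  have hk : 1 ≤ k := by omega
  have hk' : 1 ≤ k' := by omega
  -- transfer of adjacency
  have hmap : ∀ a b : {W : Submodule R V // Module.finrank R W = k},
      a.1 ≠ b.1 → finrank R ↥(a.1 ⊓ b.1) = k - 1 →
      (f a).1 ≠ (f b).1 ∧ finrank R' ↥((f a).1 ⊓ (f b).1) = k' - 1 := by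
    intro a b h1 h2
    have hne : a ≠ b := fun h => h1 (congrArg Subtype.val h)
    have := (hadj a b).mp ⟨hne, h2⟩
    exact ⟨fun h => this.1 (Subtype.ext h), this.2⟩
  have hmapr : ∀ a b, (f a).1 ≠ (f b).1 → finrank R' ↥((f a).1 ⊓ (f b).1) = k' - 1 →
      finrank R ↥(a.1 ⊓ b.1) = k - 1 := by
    intro a b h1 h2
    have hne : f a ≠ f b := fun h => h1 (congrArg Subtype.val h)
    exact ((hadj a b).mpr ⟨hne, h2⟩).2
  have hinj' : ∀ a b, a.1 ≠ b.1 → (f a).1 ≠ (f b).1 := by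
    intro a b h1 h2
    exact h1 (congrArg Subtype.val (hinj (Subtype.ext h2)))
  -- every star image lies in a star or a top
  have star_or : ∀ S : Submodule R V, finrank R S = k - 1 →
      (∃ S' : Submodule R' V', finrank R' S' = k' - 1 ∧ ∀ X, S ≤ X.1 → S' ≤ (f X).1) ∨
      (∃ U' : Submodule R' V', finrank R' U' = k' + 1 ∧ ∀ X, S ≤ X.1 → (f X).1 ≤ U') := by
    intro S hS
    have := clique_star_or_top (K := R') (M := V') (k := k') hk' (by omega)
      {W' : Submodule R' V' | ∃ X, S ≤ X.1 ∧ (f X).1 = W'}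
      (by rintro W' ⟨X, hX, rfl⟩; exact (f X).2)
      (by
        rintro W1 ⟨X1, hX1, rfl⟩ W2 ⟨X2, hX2, rfl⟩ hne
        have h12 : X1.1 ≠ X2.1 := by
          intro h; exact hne (by rw [show X1 = X2 from Subtype.ext h])
        exact (hmap X1 X2 h12
          (dim_inf_of_star hk X1.2 X2.2 h12 hS hX1 hX2)).2)
    rcases this with ⟨S', h1, h2⟩ | ⟨U', h1, h2⟩
    · exact Or.inl ⟨S', h1, fun X hX => h2 (f X).1 ⟨X, hX, rfl⟩⟩
    · exact Or.inr ⟨U', h1, fun X hX => h2 (f X).1 ⟨X, hX, rfl⟩⟩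
  -- every top image lies in a star or a top
  have top_or : ∀ U : Submodule R V, finrank R U = k + 1 →
      (∃ S' : Submodule R' V', finrank R' S' = k' - 1 ∧ ∀ X, X.1 ≤ U → S' ≤ (f X).1) ∨
      (∃ U' : Submodule R' V', finrank R' U' = k' + 1 ∧ ∀ X, X.1 ≤ U → (f X).1 ≤ U') := by
    intro U hU
    have := clique_star_or_top (K := R') (M := V') (k := k') hk' (by omega)
      {W' : Submodule R' V' | ∃ X, X.1 ≤ U ∧ (f X).1 = W'}
      (by rintro W' ⟨X, hX, rfl⟩; exact (f X).2)
      (by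
        rintro W1 ⟨X1, hX1, rfl⟩ W2 ⟨X2, hX2, rfl⟩ hne
        have h12 : X1.1 ≠ X2.1 := by
          intro h; exact hne (by rw [show X1 = X2 from Subtype.ext h])
        exact (hmap X1 X2 h12
          (dim_inf_of_top hk X1.2 X2.2 h12 hU hX1 hX2)).2)
    rcases this with ⟨S', h1, h2⟩ | ⟨U', h1, h2⟩
    · exact Or.inl ⟨S', h1, fun X hX => h2 (f X).1 ⟨X, hX, rfl⟩⟩
    · exact Or.inr ⟨U', h1, fun X hX => h2 (f X).1 ⟨X, hX, rfl⟩⟩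
  -- core incompatibility argument
  have core : ∀ (Xv Yv Wv Zv : {W : Submodule R V // Module.finrank R W = k}),
      Xv.1 ≠ Yv.1 → Zv.1 ≠ Xv.1 → Zv.1 ≠ Yv.1 → Zv.1 ≠ Wv.1 →
      finrank R ↥(Zv.1 ⊓ Xv.1) = k - 1 → finrank R ↥(Zv.1 ⊓ Yv.1) = k - 1 →
      finrank R ↥(Zv.1 ⊓ Wv.1) ≤ k - 2 →
      ∀ (S' U' : Submodule R' V'), finrank R' S' = k' - 1 → finrank R' U' = k' + 1 →
      S' ≤ (f Xv).1 → S' ≤ (f Yv).1 → S' ≤ (f Wv).1 →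
      (f Xv).1 ≤ U' → (f Yv).1 ≤ U' → (f Wv).1 ≤ U' → False := by
    intro Xv Yv Wv Zv hXY hZX hZY hZW dZX dZY dZW S' U' hS'd hU'd aX aY aW bX bY bW
    obtain ⟨fZX, dfZX⟩ := hmap Zv Xv hZX dZX
    obtain ⟨fZY, dfZY⟩ := hmap Zv Yv hZY dZY
    have fXY : (f Xv).1 ≠ (f Yv).1 := hinj' Xv Yv hXY
    have fZW : (f Zv).1 ≠ (f Wv).1 := hinj' Zv Wv hZW
    have dfXY : finrank R' ↥((f Xv).1 ⊓ (f Yv).1) = k' - 1 :=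
      dim_inf_of_star hk' (f Xv).2 (f Yv).2 fXY hS'd aX aY
    have hcon : finrank R' ↥((f Zv).1 ⊓ (f Wv).1) = k' - 1 → False := by
      intro h
      have := hmapr Zv Wv fZW h
      omega
    rcases dichotomy hk' (f Zv).2 dfXY dfZX dfZY with hc | hc
    · have hS'Z : S' ≤ (f Zv).1 := le_trans (le_inf aX aY) hc
      exact hcon (dim_inf_of_star hk' (f Zv).2 (f Wv).2 fZW hS'd hS'Z aW)
    · have hZU : (f Zv).1 ≤ U' := le_trans hc (sup_le bX bY)
      exact hcon (dim_inf_of_top hk' (f Zv).2 (f Wv).2 fZW hU'd hZU bW)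
  -- a star's image cannot lie in both a star and a top
  have star_not_both : ∀ S : Submodule R V, finrank R S = k - 1 →
      (∃ S' : Submodule R' V', finrank R' S' = k' - 1 ∧ ∀ X, S ≤ X.1 → S' ≤ (f X).1) →
      (∃ U' : Submodule R' V', finrank R' U' = k' + 1 ∧ ∀ X, S ≤ X.1 → (f X).1 ≤ U') →
      False := by
    rintro S hS ⟨S', hS'd, hS'⟩ ⟨U', hU'd, hU'⟩
    obtain ⟨X, Y, W, Z, hXd, hYd, hWd, hZd, hSX, hSY, hSW, hXY, hXW, hYW, hZX, hZY, hZW,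
      dZX, dZY, dZW⟩ := conf_star hk1 hnV hS
    exact core ⟨X, hXd⟩ ⟨Y, hYd⟩ ⟨W, hWd⟩ ⟨Z, hZd⟩ hXY hZX hZY hZW dZX dZY dZW S' U'
      hS'd hU'd (hS' _ hSX) (hS' _ hSY) (hS' _ hSW) (hU' _ hSX) (hU' _ hSY) (hU' _ hSW)
  -- a top's image cannot lie in both a star and a top
  have top_not_both : ∀ U : Submodule R V, finrank R U = k + 1 →
      (∃ S' : Submodule R' V', finrank R' S' = k' - 1 ∧ ∀ X, X.1 ≤ U → S' ≤ (f X).1) →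
      (∃ U' : Submodule R' V', finrank R' U' = k' + 1 ∧ ∀ X, X.1 ≤ U → (f X).1 ≤ U') →
      False := by
    rintro U hU ⟨S', hS'd, hS'⟩ ⟨U', hU'd, hU'⟩
    obtain ⟨X, Y, W, Z, hXd, hYd, hWd, hZd, hXU, hYU, hWU, hXY, hXW, hYW, hZX, hZY, hZW,
      dZX, dZY, dZW⟩ := conf_top hk1 hnV hU
    exact core ⟨X, hXd⟩ ⟨Y, hYd⟩ ⟨W, hWd⟩ ⟨Z, hZd⟩ hXY hZX hZY hZW dZX dZY dZW S' U'
      hS'd hU'd (hS' _ hXU) (hS' _ hYU) (hS' _ hWU) (hU' _ hXU) (hU' _ hYU) (hU' _ hWU)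
  -- incidence : star-in-star forbids top-in-star
  have flip1 : ∀ S U : Submodule R V, finrank R S = k - 1 → finrank R U = k + 1 → S ≤ U →
      (∃ S' : Submodule R' V', finrank R' S' = k' - 1 ∧ ∀ X, S ≤ X.1 → S' ≤ (f X).1) →
      (∃ S' : Submodule R' V', finrank R' S' = k' - 1 ∧ ∀ X, X.1 ≤ U → S' ≤ (f X).1) →
      False := by
    rintro S U hS hU hSU ⟨A', hA'd, hA'⟩ ⟨B', hB'd, hB'⟩
    by_cases hAB : A' = B'
    · obtain ⟨X, Y, hXd, hYd, hSX, hYU, hXY, hcross⟩ := conf_cross hk1 hnV hS hU hSU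
      have fXY : (f ⟨X, hXd⟩).1 ≠ (f ⟨Y, hYd⟩).1 := hinj' _ _ hXY
      have := hmapr ⟨X, hXd⟩ ⟨Y, hYd⟩ fXY
        (dim_inf_of_star hk' (f ⟨X, hXd⟩).2 (f ⟨Y, hYd⟩).2 fXY hA'd
          (hA' _ hSX) (hAB ▸ hB' _ hYU))
      have h2 : finrank R ↥(X ⊓ Y) = k - 1 := this
      omega
    · obtain ⟨X1, X2, hX1d, hX2d, hSX1, hX1U, hSX2, hX2U, h12⟩ := conf_line hk hS hU hSU
      have hlt : A' < A' ⊔ B' := by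
        rcases lt_or_eq_of_le (le_sup_left : A' ≤ A' ⊔ B') with h | h
        · exact h
        · exact absurd (Submodule.eq_of_le_of_finrank_le (h ▸ le_sup_right : B' ≤ A')
            (by omega)).symm hAB
      have hdsup : k' ≤ finrank R' ↥(A' ⊔ B') := by
        have := Submodule.finrank_lt_finrank_of_lt hlt
        omega
      have he1 : A' ⊔ B' = (f ⟨X1, hX1d⟩).1 :=
        Submodule.eq_of_le_of_finrank_le (sup_le (hA' _ hSX1) (hB' _ hX1U))
          (by rw [(f ⟨X1, hX1d⟩).2]; exact hdsup)
      have he2 : A' ⊔ B' = (f ⟨X2, hX2d⟩).1 :=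
        Submodule.eq_of_le_of_finrank_le (sup_le (hA' _ hSX2) (hB' _ hX2U))
          (by rw [(f ⟨X2, hX2d⟩).2]; exact hdsup)
      exact (hinj' ⟨X1, hX1d⟩ ⟨X2, hX2d⟩ h12) (he1 ▸ he2)
  -- incidence : star-in-top forbids top-in-top
  have flip2 : ∀ S U : Submodule R V, finrank R S = k - 1 → finrank R U = k + 1 → S ≤ U →
      (∃ U' : Submodule R' V', finrank R' U' = k' + 1 ∧ ∀ X, S ≤ X.1 → (f X).1 ≤ U') →
      (∃ U' : Submodule R' V', finrank R' U' = k' + 1 ∧ ∀ X, X.1 ≤ U → (f X).1 ≤ U') →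
      False := by
    rintro S U hS hU hSU ⟨A', hA'd, hA'⟩ ⟨B', hB'd, hB'⟩
    by_cases hAB : A' = B'
    · obtain ⟨X, Y, hXd, hYd, hSX, hYU, hXY, hcross⟩ := conf_cross hk1 hnV hS hU hSU
      have fXY : (f ⟨X, hXd⟩).1 ≠ (f ⟨Y, hYd⟩).1 := hinj' _ _ hXY
      have := hmapr ⟨X, hXd⟩ ⟨Y, hYd⟩ fXY
        (dim_inf_of_top hk' (f ⟨X, hXd⟩).2 (f ⟨Y, hYd⟩).2 fXY hA'd
          (hA' _ hSX) (hAB ▸ hB' _ hYU))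
      have h2 : finrank R ↥(X ⊓ Y) = k - 1 := this
      omega
    · obtain ⟨X1, X2, hX1d, hX2d, hSX1, hX1U, hSX2, hX2U, h12⟩ := conf_line hk hS hU hSU
      have hlt : A' ⊓ B' < A' := by
        rcases lt_or_eq_of_le (inf_le_left : A' ⊓ B' ≤ A') with h | h
        · exact h
        · exact absurd (Submodule.eq_of_le_of_finrank_le (h ▸ inf_le_right : A' ≤ B')
            (by omega)) hAB
      have hdinf : finrank R' ↥(A' ⊓ B') ≤ k' := by
        have := Submodule.finrank_lt_finrank_of_lt hlt
        omega
      have he1 : (f ⟨X1, hX1d⟩).1 = A' ⊓ B' :=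
        Submodule.eq_of_le_of_finrank_le (le_inf (hA' _ hSX1) (hB' _ hX1U))
          (by rw [(f ⟨X1, hX1d⟩).2]; exact hdinf)
      have he2 : (f ⟨X2, hX2d⟩).1 = A' ⊓ B' :=
        Submodule.eq_of_le_of_finrank_le (le_inf (hA' _ hSX2) (hB' _ hX2U))
          (by rw [(f ⟨X2, hX2d⟩).2]; exact hdinf)
      exact (hinj' ⟨X1, hX1d⟩ ⟨X2, hX2d⟩ h12) (he1.trans he2.symm)
  -- connectivity of stars via common tops
  have connect : ∀ (P : Submodule R V → Prop),
      (∀ S T U : Submodule R V, finrank R S = k - 1 → finrank R T = k - 1 →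
        finrank R U = k + 1 → S ≤ U → T ≤ U → P S → P T) →
      ∀ (d : ℕ) (S1 S2 : Submodule R V), finrank R S1 = k - 1 → finrank R S2 = k - 1 →
        (k - 1) - finrank R ↥(S1 ⊓ S2) ≤ d → P S1 → P S2 := by
    intro P hstep d
    induction d with
    | zero =>
      intro S1 S2 h1 h2 hm hP
      have hle := Submodule.finrank_mono (inf_le_left : S1 ⊓ S2 ≤ S1)
      have heq : S1 ⊓ S2 = S1 := Submodule.eq_of_le_of_finrank_le inf_le_left (by omega)
      have : S1 = S2 := Submodule.eq_of_le_of_finrank_le (heq ▸ inf_le_right) (by omega)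
      rwa [← this]
    | succ d ih =>
      intro S1 S2 h1 h2 hm hP
      by_cases he : S1 = S2
      · rwa [← he]
      have hne1 : S1 ⊓ S2 ≠ S1 := by
        intro h
        exact he (Submodule.eq_of_le_of_finrank_le (h ▸ inf_le_right) (by omega))
      have hne2 : S1 ⊓ S2 ≠ S2 := by
        intro h
        exact he (Submodule.eq_of_le_of_finrank_le (h ▸ inf_le_left) (by omega)).symm
      have hlt1 := Submodule.finrank_lt_finrank_of_lt (lt_of_le_of_ne inf_le_left hne1)
      obtain ⟨b, hbS2, hb⟩ := SetLike.exists_of_lt (lt_of_le_of_ne inf_le_right hne2)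
      have hbS1 : b ∉ S1 := fun h => hb (Submodule.mem_inf.mpr ⟨h, hbS2⟩)
      obtain ⟨H, hH1, hH2, hHd⟩ := exists_between_fd (m := k - 2)
        (inf_le_left : S1 ⊓ S2 ≤ S1) (by omega) (by omega)
      have hbH : b ∉ H := fun h => hbS1 (hH2 h)
      have hTd : finrank R ↥(H ⊔ (R ∙ b)) = k - 1 := by
        rw [finrank_sup_singleton hbH]; omega
      have hT1 : H ⊔ (R ∙ b) ≤ S1 ⊔ (R ∙ b) := sup_le (le_trans hH2 le_sup_left) le_sup_right
      have hsupd : finrank R ↥(S1 ⊔ (R ∙ b)) = k := by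
        rw [finrank_sup_singleton hbS1]; omega
      obtain ⟨U, hU1, -, hUd⟩ := exists_between_fd (m := k + 1)
        (le_top : S1 ⊔ (R ∙ b) ≤ ⊤) (by rw [hsupd]; omega) (by rw [finrank_top]; omega)
      have hPT : P (H ⊔ (R ∙ b)) :=
        hstep S1 (H ⊔ (R ∙ b)) U h1 hTd hUd (le_trans le_sup_left hU1)
          (le_trans hT1 hU1) hP
      refine ih (H ⊔ (R ∙ b)) S2 hTd h2 ?_ hPT
      have hmono : (S1 ⊓ S2) ⊔ (R ∙ b) ≤ (H ⊔ (R ∙ b)) ⊓ S2 := by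
        refine sup_le (le_inf (le_trans hH1 le_sup_left) inf_le_right) ?_
        rw [span_singleton_le_iff_mem]
        exact Submodule.mem_inf.mpr ⟨mem_sup_right (mem_span_singleton_self b), hbS2⟩
      have hd1 : finrank R ↥((S1 ⊓ S2) ⊔ (R ∙ b)) = finrank R ↥(S1 ⊓ S2) + 1 :=
        finrank_sup_singleton hb
      have hd2 := Submodule.finrank_mono hmono
      omega
  -- a base star
  obtain ⟨S0, -, -, hS0⟩ := exists_between_fd (m := k - 1)
    (bot_le : ⊥ ≤ (⊤ : Submodule R V)) (by simp) (by rw [finrank_top]; omega)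
  rcases star_or S0 hS0 with hSS0 | hST0
  · -- type (A)
    have allSS : ∀ S : Submodule R V, finrank R S = k - 1 →
        ∃ S' : Submodule R' V', finrank R' S' = k' - 1 ∧ ∀ X, S ≤ X.1 → S' ≤ (f X).1 := by
      intro S hS
      refine connect (fun T0 => ∃ S' : Submodule R' V', finrank R' S' = k' - 1 ∧
        ∀ X, T0 ≤ X.1 → S' ≤ (f X).1) ?_ (k - 1) S0 S hS0 hS (by omega) hSS0
      intro S1 T U hS1 hT hU h1U h2U hP
      have hTT : ∃ U' : Submodule R' V', finrank R' U' = k' + 1 ∧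
          ∀ X, X.1 ≤ U → (f X).1 ≤ U' :=
        (top_or U hU).resolve_left (fun hTS => flip1 S1 U hS1 hU h1U hP hTS)
      exact (star_or T hT).resolve_right (fun hST => flip2 T U hT hU h2U hST hTT)
    have allTT : ∀ U : Submodule R V, finrank R U = k + 1 →
        ∃ U' : Submodule R' V', finrank R' U' = k' + 1 ∧ ∀ X, X.1 ≤ U → (f X).1 ≤ U' := by
      intro U hU
      obtain ⟨S, -, hSU, hS⟩ := exists_between_fd (m := k - 1) (bot_le : ⊥ ≤ U)
        (by simp) (by omega)
      exact (top_or U hU).resolve_left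
        (fun hTS => flip1 S U hS hU hSU (allSS S hS) hTS)
    exact Or.inl ⟨⟨allSS, allTT⟩,
      fun hB => star_not_both S0 hS0 (allSS S0 hS0) (hB.1 S0 hS0)⟩
  · -- type (B)
    have allST : ∀ S : Submodule R V, finrank R S = k - 1 →
        ∃ U' : Submodule R' V', finrank R' U' = k' + 1 ∧ ∀ X, S ≤ X.1 → (f X).1 ≤ U' := by
      intro S hS
      refine connect (fun T0 => ∃ U' : Submodule R' V', finrank R' U' = k' + 1 ∧
        ∀ X, T0 ≤ X.1 → (f X).1 ≤ U') ?_ (k - 1) S0 S hS0 hS (by omega) hST0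
      intro S1 T U hS1 hT hU h1U h2U hP
      have hTS : ∃ S' : Submodule R' V', finrank R' S' = k' - 1 ∧
          ∀ X, X.1 ≤ U → S' ≤ (f X).1 :=
        (top_or U hU).resolve_right (fun hTT => flip2 S1 U hS1 hU h1U hP hTT)
      exact (star_or T hT).resolve_left (fun hSS => flip1 T U hT hU h2U hSS hTS)
    have allTS : ∀ U : Submodule R V, finrank R U = k + 1 →
        ∃ S' : Submodule R' V', finrank R' S' = k' - 1 ∧ ∀ X, X.1 ≤ U → S' ≤ (f X).1 := by
      intro U hU
      obtain ⟨S, -, hSU, hS⟩ := exists_between_fd (m := k - 1) (bot_le : ⊥ ≤ U)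
        (by simp) (by omega)
      exact (top_or U hU).resolve_right
        (fun hTT => flip2 S U hS hU hSU (allST S hS) hTT)
    exact Or.inr ⟨⟨allST, allTS⟩,
      fun hA => star_not_both S0 hS0 (hA.1 S0 hS0) (allST S0 hS0)⟩
end

section
/- Let V and V' be left vector spaces of finite dimensions n and n' over division rings R and R', let k ∈ {2,…,n−2} and k' ∈ {2,…,n'−2}, and assume k ≤ min{k', n−k, n'−k'}. Let S be a (k'−k)-dimensional subspace of V' and let l : V → V'/S be a semilinear 2k-embedding. Then the map f sending each k-dimensional subspace X of V to the preimage in V', under the quotient map V' → V'/S, of the span of l(X) takes values in the k'-dimensional subspaces of V' and is an isometric embedding of Γ_k(V) in Γ_{k'}(V') of type (A). -/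
open Module

open Submodule


section GrassHelp
variable {K M : Type*} [DivisionRing K] [AddCommGroup M] [Module K M]

lemma aux_sup_span_singleton [FiniteDimensional K M] {p : Submodule K M} {x : M}
    (hx : x ∉ p) : finrank K ↥(p ⊔ K ∙ x) = finrank K p + 1 := by
  have hx0 : x ≠ 0 := fun h => hx (h ▸ p.zero_mem)
  have hinf : p ⊓ (K ∙ x) = ⊥ := by
    rw [eq_bot_iff]
    intro y hy
    rw [Submodule.mem_inf] at hy
    obtain ⟨hyp, hyx⟩ := hy
    obtain ⟨c, rfl⟩ := Submodule.mem_span_singleton.mp hyx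
    rcases eq_or_ne c 0 with rfl | hc
    · simp
    · exact absurd ((p.smul_mem_iff hc).mp hyp) hx
  have h := Submodule.finrank_sup_add_finrank_inf_eq p (K ∙ x)
  rw [hinf, finrank_bot, finrank_span_singleton hx0] at h
  omega

lemma aux_exists_intermediate_s9 [FiniteDimensional K M] {p q : Submodule K M} (hpq : p ≤ q) :
    ∀ m : ℕ, finrank K p ≤ m → m ≤ finrank K q →
      ∃ r : Submodule K M, p ≤ r ∧ r ≤ q ∧ finrank K r = m := by
  intro m
  induction m with
  | zero => intro h1 _; exact ⟨p, le_rfl, hpq, Nat.le_zero.mp h1⟩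
  | succ m ih =>
    intro h1 h2
    rcases Nat.lt_or_ge m (finrank K p) with hlt | hge
    · exact ⟨p, le_rfl, hpq, by omega⟩
    · obtain ⟨r, hpr, hrq, hr⟩ := ih hge (by omega)
      have hnle : ¬ q ≤ r := fun hqr => by
        have := Submodule.finrank_mono (M := M) hqr
        omega
      obtain ⟨x, hxq, hxr⟩ := SetLike.not_le_iff_exists.mp hnle
      refine ⟨r ⊔ K ∙ x, hpr.trans le_sup_left,
        sup_le hrq ((Submodule.span_singleton_le_iff_mem x q).mpr hxq), ?_⟩
      rw [aux_sup_span_singleton hxr, hr]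

end GrassHelp
section Dist
variable {K M : Type*} [DivisionRing K] [AddCommGroup M] [Module K M] [FiniteDimensional K M]

lemma grassmann_walk_lower {k : ℕ} {X Y : {W : Submodule K M // finrank K W = k}}
    (w : (grassmannGraph K M k).Walk X Y) :
    k ≤ finrank K ↥(X.1 ⊓ Y.1) + w.length := by
  induction w with
  | @nil u =>
    have : u.1 ⊓ u.1 = u.1 := inf_idem u.1
    rw [SimpleGraph.Walk.length_nil, add_zero, this, u.2]
  | @cons u v y h p ih =>
    obtain ⟨hne, hdim⟩ := h
    have hk1 : 1 ≤ k := by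
      by_contra hk
      have hk0 : k = 0 := by omega
      have hu : u.1 = ⊥ := Submodule.finrank_eq_zero.mp (by rw [u.2, hk0])
      have hv : v.1 = ⊥ := Submodule.finrank_eq_zero.mp (by rw [v.2, hk0])
      exact hne (Subtype.ext (hu.trans hv.symm))
    have h1 := Submodule.finrank_sup_add_finrank_inf_eq (u.1 ⊓ v.1) (v.1 ⊓ y.1)
    have f2 : finrank K ↥((u.1 ⊓ v.1) ⊔ (v.1 ⊓ y.1)) ≤ k := by
      have := Submodule.finrank_mono (M := M)
        (sup_le (inf_le_right : u.1 ⊓ v.1 ≤ v.1) (inf_le_left : v.1 ⊓ y.1 ≤ v.1))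
      rw [v.2] at this; exact this
    have f3 : finrank K ↥((u.1 ⊓ v.1) ⊓ (v.1 ⊓ y.1)) ≤ finrank K ↥(u.1 ⊓ y.1) :=
      Submodule.finrank_mono (M := M)
        (le_inf ((inf_le_left : (u.1⊓v.1)⊓(v.1⊓y.1) ≤ u.1⊓v.1).trans inf_le_left)
          ((inf_le_right : (u.1⊓v.1)⊓(v.1⊓y.1) ≤ v.1⊓y.1).trans inf_le_right))
    show k ≤ finrank K ↥(u.1 ⊓ y.1) + (p.length + 1)
    omega

lemma grassmann_walk_upper {k : ℕ} :
    ∀ d : ℕ, ∀ X Y : {W : Submodule K M // finrank K W = k},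
      k - finrank K ↥(X.1 ⊓ Y.1) ≤ d →
      ∃ w : (grassmannGraph K M k).Walk X Y, w.length ≤ d := by
  have key : ∀ (X Y : {W : Submodule K M // finrank K W = k}),
      k ≤ finrank K ↥(X.1 ⊓ Y.1) → X = Y := by
    intro X Y h
    have h1 : X.1 ⊓ Y.1 = X.1 :=
      Submodule.eq_of_le_of_finrank_le inf_le_left (by rw [X.2]; exact h)
    have h2 : X.1 ⊓ Y.1 = Y.1 :=
      Submodule.eq_of_le_of_finrank_le inf_le_right (by rw [Y.2]; exact h)
    exact Subtype.ext (h1.symm.trans h2)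
  intro d
  induction d with
  | zero =>
    intro X Y h
    have := key X Y (by omega)
    subst this
    exact ⟨SimpleGraph.Walk.nil, le_rfl⟩
  | succ d ih =>
    intro X Y h
    rcases le_or_gt k (finrank K ↥(X.1 ⊓ Y.1)) with hk | hlt
    · have := key X Y hk
      subst this
      exact ⟨SimpleGraph.Walk.nil, by simp⟩
    · have hYX : ¬ Y.1 ≤ X.1 := by
        intro hle
        have : X.1 ⊓ Y.1 = Y.1 := inf_eq_right.mpr hle
        rw [this, Y.2] at hlt; omega
      obtain ⟨y, hyY, hyX⟩ := SetLike.not_le_iff_exists.mp hYX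
      obtain ⟨H, hH1, hH2, hH3⟩ := aux_exists_intermediate_s9
        (inf_le_left : X.1 ⊓ Y.1 ≤ X.1) (k-1) (by omega) (by rw [X.2]; omega)
      have hyH : y ∉ H := fun hy => hyX (hH2 hy)
      have hZdim : finrank K ↥(H ⊔ K ∙ y) = k := by
        rw [aux_sup_span_singleton hyH, hH3]; omega
      set Z : Submodule K M := H ⊔ K ∙ y with hZdef
      have hyZ : y ∈ Z := Submodule.mem_sup_right (Submodule.mem_span_singleton_self y)
      set Zv : {W : Submodule K M // finrank K W = k} := ⟨Z, hZdim⟩ with hZv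
      have hne1 : X.1 ≠ Z := fun he => hyX (by rw [he]; exact hyZ)
      have hXZle : H ≤ X.1 ⊓ Z := le_inf hH2 le_sup_left
      have hfXZ : finrank K ↥(X.1 ⊓ Z) = k - 1 := by
        have hub : finrank K ↥(X.1 ⊓ Z) ≤ k := by
          have := Submodule.finrank_mono (M := M) (inf_le_right : X.1 ⊓ Z ≤ Z)
          rw [hZdim] at this; exact this
        have hlb : k - 1 ≤ finrank K ↥(X.1 ⊓ Z) := by
          have := Submodule.finrank_mono (M := M) hXZle
          rw [hH3] at this; exact this
        have hnee : finrank K ↥(X.1 ⊓ Z) ≠ k := by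
          intro hk
          have : X.1 ⊓ Z = Z := Submodule.eq_of_le_of_finrank_le inf_le_right
            (by rw [hZdim, hk])
          exact hyX (inf_eq_right.mp this hyZ)
        omega
      have hadj : (grassmannGraph K M k).Adj X Zv :=
        ⟨fun he => hne1 (congrArg Subtype.val he), hfXZ⟩
      have hynotin : y ∉ X.1 ⊓ Y.1 := fun hy => hyX (Submodule.mem_inf.mp hy).1
      have hZY : (X.1 ⊓ Y.1) ⊔ (K ∙ y) ≤ Z ⊓ Y.1 :=
        sup_le (le_inf (hH1.trans le_sup_left) inf_le_right)
          ((Submodule.span_singleton_le_iff_mem y _).mpr (Submodule.mem_inf.mpr ⟨hyZ, hyY⟩))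
      have hfZY : finrank K ↥(X.1 ⊓ Y.1) + 1 ≤ finrank K ↥(Z ⊓ Y.1) := by
        rw [← aux_sup_span_singleton hynotin]
        exact Submodule.finrank_mono (M := M) hZY
      obtain ⟨w, hw⟩ := ih Zv Y (by show k - finrank K ↥(Z ⊓ Y.1) ≤ d; omega)
      exact ⟨SimpleGraph.Walk.cons hadj w, by
        simp only [SimpleGraph.Walk.length_cons]; omega⟩

lemma grassmann_dist_eq {k : ℕ} (X Y : {W : Submodule K M // finrank K W = k}) :
    (grassmannGraph K M k).dist X Y = k - finrank K ↥(X.1 ⊓ Y.1) := by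
  obtain ⟨w, hw⟩ := grassmann_walk_upper (k - finrank K ↥(X.1 ⊓ Y.1)) X Y le_rfl
  refine le_antisymm ((SimpleGraph.dist_le w).trans hw) ?_
  obtain ⟨p, hp⟩ := SimpleGraph.Reachable.exists_walk_length_eq_dist ⟨w⟩
  have := grassmann_walk_lower p
  omega

end Dist


lemma finrank_comap_mkQ {K M : Type*} [DivisionRing K] [AddCommGroup M] [Module K M]
    [FiniteDimensional K M] (S : Submodule K M) (W : Submodule K (M ⧸ S)) :
    finrank K ↥(W.comap S.mkQ) = finrank K ↥W + finrank K ↥S := by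
  set P := W.comap S.mkQ with hP
  have hSP : S ≤ P := by
    intro x hx
    rw [hP, Submodule.mem_comap, Submodule.mkQ_apply,
      (Submodule.Quotient.mk_eq_zero S).mpr hx]
    exact W.zero_mem
  set f := S.mkQ.domRestrict P with hf
  have hrange : LinearMap.range f = W := by
    rw [hf, LinearMap.range_domRestrict]
    exact Submodule.map_comap_eq_of_surjective S.mkQ_surjective W
  have hker : LinearMap.ker f = S.comap P.subtype := by
    rw [hf, LinearMap.ker_domRestrict, Submodule.ker_mkQ]
  have h := LinearMap.finrank_range_add_finrank_ker f
  rw [hrange, hker,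
    LinearEquiv.finrank_eq (Submodule.comapSubtypeEquivOfLe hSP)] at h
  exact h.symm

section Semi
variable {R V R' V₂ : Type*} [DivisionRing R] [AddCommGroup V] [Module R V]
  [DivisionRing R'] [AddCommGroup V₂] [Module R' V₂]
  {σ : R →+* R'}

lemma image_span_le (l : V →ₛₗ[σ] V₂) (t : Set V) :
    l '' ↑(Submodule.span R t) ⊆ ↑(Submodule.span R' (l '' t)) := by
  rintro _ ⟨x, hx, rfl⟩
  induction hx using Submodule.span_induction with
  | mem x hx => exact Submodule.subset_span ⟨x, hx, rfl⟩
  | zero => rw [map_zero]; exact Submodule.zero_mem _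
  | add x y hx hy ihx ihy => rw [map_add]; exact Submodule.add_mem _ ihx ihy
  | smul c x hx ihx => rw [LinearMap.map_smulₛₗ]; exact Submodule.smul_mem _ _ ihx

lemma span_image_span (l : V →ₛₗ[σ] V₂) (t : Set V) :
    Submodule.span R' (l '' ↑(Submodule.span R t)) = Submodule.span R' (l '' t) :=
  le_antisymm (Submodule.span_le.mpr (image_span_le l t))
    (Submodule.span_mono (Set.image_mono Submodule.subset_span))

lemma G_sup (l : V →ₛₗ[σ] V₂) (A B : Submodule R V) :
    Submodule.span R' (l '' ((A ⊔ B : Submodule R V) : Set V)) =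
      Submodule.span R' (l '' (A : Set V)) ⊔ Submodule.span R' (l '' (B : Set V)) := by
  have h1 : (A ⊔ B : Submodule R V) = Submodule.span R ((A : Set V) ∪ (B : Set V)) := by
    rw [Submodule.span_union, Submodule.span_eq, Submodule.span_eq]
  rw [h1, span_image_span, Set.image_union, Submodule.span_union]

end Semi


section Semi2
variable {R V R' V₂ : Type*} [DivisionRing R] [AddCommGroup V] [Module R V]
  [DivisionRing R'] [AddCommGroup V₂] [Module R' V₂]
  {σ : R →+* R'} {l : V →ₛₗ[σ] V₂} {m : ℕ}

lemma indep_image [FiniteDimensional R V] (hl : IsSemilinearMEmbedding σ l m)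
    (hmV : m ≤ finrank R V) (s : Finset V) (hcard : s.card ≤ m)
    (hind : LinearIndependent R (fun x : s => (x : V))) :
    LinearIndependent R' (fun x : s => l x) := by
  have hset : LinearIndependent R ((↑) : ((s : Set V) : Type _) → V) := hind
  obtain ⟨b, -, hsb, hspan, hbind'⟩ :=
    exists_linearIndepOn_id_extension hset (Set.subset_univ _)
  have hbind : LinearIndependent R ((↑) : b → V) := hbind'
  have hbfin : b.Finite := hbind.setFinite
  have hcardb : hbfin.toFinset.card = finrank R V := by
    have hco : (hbfin.toFinset : Set V) = b := Set.Finite.coe_toFinset hbfin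
    have hindb : LinearIndependent R ((↑) : ((hbfin.toFinset : Set V) : Type _) → V) := by
      rw [hco]; exact hbind
    have h1 := finrank_span_finset_eq_card (s := hbfin.toFinset) hindb
    have htop : Submodule.span R (hbfin.toFinset : Set V) = ⊤ := by
      rw [hco, eq_top_iff]
      intro x _
      exact hspan (Set.mem_univ x)
    rw [htop, finrank_top] at h1
    exact h1.symm
  have hsub : s ⊆ hbfin.toFinset := fun x hx => hbfin.mem_toFinset.mpr (hsb hx)
  obtain ⟨u, hsu, hub, hucard⟩ :=
    Finset.exists_subsuperset_card_eq hsub hcard (by rw [hcardb]; exact hmV)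
  have huind : LinearIndependent R (fun x : u => (x : V)) := by
    have hsub2 : (u : Set V) ⊆ b := fun x hx => hbfin.mem_toFinset.mp (hub hx)
    exact hbind'.mono hsub2
  have h2 := hl.2 u hucard huind
  exact h2.comp (fun x : s => (⟨x.1, hsu x.2⟩ : u))
    (fun a b hab => Subtype.ext (by simpa using congrArg Subtype.val hab))

lemma finrank_G [FiniteDimensional R V] (hl : IsSemilinearMEmbedding σ l m)
    (hmV : m ≤ finrank R V) (A : Submodule R V) (hA : finrank R ↥A ≤ m) :
    finrank R' ↥(Submodule.span R' (l '' (A : Set V))) = finrank R ↥A := by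
  classical
  obtain ⟨b, hbA, hbspan, hbind⟩ := exists_linearIndependent R (A : Set V)
  have hspanA : Submodule.span R b = A := by rw [hbspan, Submodule.span_eq]
  have hbfin : b.Finite := hbind.setFinite
  set s := hbfin.toFinset with hs
  have hsb : (s : Set V) = b := Set.Finite.coe_toFinset hbfin
  have hsind : LinearIndependent R ((↑) : ((s : Set V) : Type _) → V) := by rw [hsb]; exact hbind
  have hcard : finrank R ↥A = s.card := by
    rw [← hspanA, ← hsb]
    exact finrank_span_finset_eq_card hsind
  have hsind' : LinearIndependent R (fun x : s => (x : V)) := hsind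
  have hlind : LinearIndependent R' (fun x : s => l x) :=
    indep_image hl hmV s (by omega) hsind'
  have hGA : Submodule.span R' (l '' (A : Set V)) = Submodule.span R' (l '' (s : Set V)) := by
    rw [← hspanA, span_image_span, hsb]
  rw [hGA]
  have himg : LinearIndependent R' ((↑) : ((l '' (s : Set V)) : Type _) → V₂) :=
    LinearIndepOn.id_image (v := ⇑l) (s := (s : Set V)) hlind
  have hcoe : l '' (s : Set V) = ((s.image l : Finset V₂) : Set V₂) := by
    rw [Finset.coe_image]
  rw [hcoe] at himg ⊢
  rw [finrank_span_finset_eq_card himg, Finset.card_image_of_injective s hl.1, hcard]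

lemma G_inf [FiniteDimensional R V] [FiniteDimensional R' V₂]
    (hl : IsSemilinearMEmbedding σ l m) (hmV : m ≤ finrank R V)
    (A B : Submodule R V) (hAB : finrank R ↥(A ⊔ B) ≤ m) :
    Submodule.span R' (l '' ((A ⊓ B : Submodule R V) : Set V)) =
      Submodule.span R' (l '' (A : Set V)) ⊓ Submodule.span R' (l '' (B : Set V)) := by
  have hA : finrank R ↥A ≤ m := le_trans (Submodule.finrank_mono le_sup_left) hAB
  have hB : finrank R ↥B ≤ m := le_trans (Submodule.finrank_mono le_sup_right) hAB
  have hI : finrank R ↥(A ⊓ B) ≤ m :=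
    le_trans (Submodule.finrank_mono (inf_le_left.trans le_sup_left)) hAB
  have hle : Submodule.span R' (l '' ((A ⊓ B : Submodule R V) : Set V)) ≤
      Submodule.span R' (l '' (A : Set V)) ⊓ Submodule.span R' (l '' (B : Set V)) :=
    le_inf (Submodule.span_mono (Set.image_mono (fun x hx => (Submodule.mem_inf.mp hx).1)))
      (Submodule.span_mono (Set.image_mono (fun x hx => (Submodule.mem_inf.mp hx).2)))
  have e1 := Submodule.finrank_sup_add_finrank_inf_eq
    (Submodule.span R' (l '' (A : Set V))) (Submodule.span R' (l '' (B : Set V)))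
  have e2 := Submodule.finrank_sup_add_finrank_inf_eq A B
  have hGsup : Submodule.span R' (l '' (A : Set V)) ⊔ Submodule.span R' (l '' (B : Set V)) =
      Submodule.span R' (l '' ((A ⊔ B : Submodule R V) : Set V)) := (G_sup l A B).symm
  rw [hGsup, finrank_G hl hmV _ hAB, finrank_G hl hmV _ hA, finrank_G hl hmV _ hB] at e1
  have heq : finrank R' ↥(Submodule.span R' (l '' ((A ⊓ B : Submodule R V) : Set V))) =
      finrank R' ↥(Submodule.span R' (l '' (A : Set V)) ⊓ Submodule.span R' (l '' (B : Set V))) := by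
    rw [finrank_G hl hmV _ hI]; omega
  exact Submodule.eq_of_le_of_finrank_eq hle heq

end Semi2


/-- If `k ≤ min k' (n-k) (n'-k')`, `S` is a `(k'-k)`-dimensional subspace of
`V'` and `l : V → V'/S` is a semilinear `2k`-embedding, then the map sending each
`k`-dimensional subspace `X` of `V` to the preimage in `V'` of the span of `l(X)`
takes values in `k'`-dimensional subspaces and is an isometric embedding of `Γ_k(V)`
in `Γ_{k'}(V')` of type (A). -/
theorem typeA_construction_isometric
    (R V : Type*) [DivisionRing R] [AddCommGroup V] [Module R V] [FiniteDimensional R V]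
    (R' V' : Type*) [DivisionRing R'] [AddCommGroup V'] [Module R' V'] [FiniteDimensional R' V']
    (n k n' k' : ℕ) (hn : Module.finrank R V = n) (hn' : Module.finrank R' V' = n')
    (hk1 : 2 ≤ k) (hk2 : k ≤ n - 2) (hk1' : 2 ≤ k') (hk2' : k' ≤ n' - 2)
    (hkk : k ≤ min k' (min (n - k) (n' - k')))
    (S : Submodule R' V') (hS : Module.finrank R' S = k' - k)
    (σ : R →+* R') (l : V →ₛₗ[σ] (V' ⧸ S))
    (hl : IsSemilinearMEmbedding σ l (2 * k)) :
    (∀ X : Submodule R V, Module.finrank R X = k →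
        Module.finrank R' ((Submodule.span R' (l '' (X : Set V))).comap S.mkQ) = k') ∧
    ∃ F : {W : Submodule R V // Module.finrank R W = k} →
          {W : Submodule R' V' // Module.finrank R' W = k'},
      (∀ X, (F X).1 = (Submodule.span R' (l '' (X.1 : Set V))).comap S.mkQ) ∧
      IsIsometricEmbedding (grassmannGraph R V k) (grassmannGraph R' V' k') F ∧
      -- type (A): stars go into stars and tops go into tops
      (∀ T : Submodule R V, Module.finrank R T = k - 1 →
          ∃ T' : Submodule R' V', Module.finrank R' T' = k' - 1 ∧
            ∀ X, T ≤ X.1 → T' ≤ (F X).1) ∧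
      (∀ U : Submodule R V, Module.finrank R U = k + 1 →
          ∃ U' : Submodule R' V', Module.finrank R' U' = k' + 1 ∧
            ∀ X, X.1 ≤ U → (F X).1 ≤ U') := by
  classical
  have hkk' : k ≤ k' := hkk.trans (min_le_left _ _)
  have hnk : k ≤ n - k := hkk.trans ((min_le_right _ _).trans (min_le_left _ _))
  have hn2k : 2 * k ≤ finrank R V := by rw [hn]; omega
  have hGdim : ∀ A : Submodule R V, finrank R ↥A ≤ 2 * k →
      finrank R' ↥((Submodule.span R' (l '' (A : Set V))).comap S.mkQ)
        = finrank R ↥A + (k' - k) := by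
    intro A hA
    rw [finrank_comap_mkQ, finrank_G hl hn2k A hA, hS]
  have hdim : ∀ X : Submodule R V, finrank R X = k →
      finrank R' ↥((Submodule.span R' (l '' (X : Set V))).comap S.mkQ) = k' := by
    intro X hX
    rw [hGdim X (by rw [hX]; omega), hX]; omega
  refine ⟨hdim, ?_⟩
  set F : {W : Submodule R V // finrank R W = k} → {W : Submodule R' V' // finrank R' W = k'} :=
    fun X => ⟨(Submodule.span R' (l '' (X.1 : Set V))).comap S.mkQ, hdim X.1 X.2⟩ with hF
  have hsup2k : ∀ X Y : {W : Submodule R V // finrank R W = k},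
      finrank R ↥(X.1 ⊔ Y.1) ≤ 2 * k := by
    intro X Y
    have := Submodule.finrank_add_le_finrank_add_finrank X.1 Y.1
    rw [X.2, Y.2] at this; omega
  have hGinfeq : ∀ X Y : {W : Submodule R V // finrank R W = k},
      (F X).1 ⊓ (F Y).1 =
        (Submodule.span R' (l '' ((X.1 ⊓ Y.1 : Submodule R V) : Set V))).comap S.mkQ := by
    intro X Y
    show (Submodule.span R' (l '' (X.1 : Set V))).comap S.mkQ ⊓
        (Submodule.span R' (l '' (Y.1 : Set V))).comap S.mkQ = _
    rw [G_inf hl hn2k X.1 Y.1 (hsup2k X Y), Submodule.comap_inf]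
  have hinfk : ∀ X Y : {W : Submodule R V // finrank R W = k},
      finrank R ↥(X.1 ⊓ Y.1) ≤ k := by
    intro X Y
    have := Submodule.finrank_mono (inf_le_left : X.1 ⊓ Y.1 ≤ X.1)
    rw [X.2] at this; exact this
  have hinf : ∀ X Y : {W : Submodule R V // finrank R W = k},
      finrank R' ↥((F X).1 ⊓ (F Y).1) = finrank R ↥(X.1 ⊓ Y.1) + (k' - k) := by
    intro X Y
    rw [hGinfeq X Y]
    exact hGdim _ (le_trans (hinfk X Y) (by omega))
  have hinj : Function.Injective F := by
    intro X Y h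
    have h1 : (Submodule.span R' (l '' (X.1 : Set V))).comap S.mkQ =
        (Submodule.span R' (l '' (Y.1 : Set V))).comap S.mkQ := congrArg Subtype.val h
    have h2 : Submodule.span R' (l '' (X.1 : Set V)) = Submodule.span R' (l '' (Y.1 : Set V)) :=
      Submodule.comap_injective_of_surjective S.mkQ_surjective h1
    have h3 : Submodule.span R' (l '' ((X.1 ⊓ Y.1 : Submodule R V) : Set V)) =
        Submodule.span R' (l '' (X.1 : Set V)) := by
      rw [G_inf hl hn2k X.1 Y.1 (hsup2k X Y), h2, inf_idem]
    have h4 : finrank R ↥(X.1 ⊓ Y.1) = k := by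
      have h5 := finrank_G hl hn2k (X.1 ⊓ Y.1) (le_trans (hinfk X Y) (by omega))
      rw [h3, finrank_G hl hn2k X.1 (by rw [X.2]; omega), X.2] at h5
      exact h5.symm
    have h5 : X.1 ⊓ Y.1 = X.1 := Submodule.eq_of_le_of_finrank_eq inf_le_left (by rw [h4, X.2])
    have h6 : X.1 ⊓ Y.1 = Y.1 := Submodule.eq_of_le_of_finrank_eq inf_le_right (by rw [h4, Y.2])
    exact Subtype.ext (h5.symm.trans h6)
  refine ⟨F, fun X => rfl, ⟨⟨hinj, ?_⟩, ?_⟩, ?_, ?_⟩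
  · intro a b
    constructor
    · rintro ⟨hne, hd⟩
      refine ⟨fun h => hne (hinj h), ?_⟩
      rw [hinf a b, hd]
      omega
    · rintro ⟨hne, hd⟩
      refine ⟨fun h => hne (congrArg F h), ?_⟩
      rw [hinf a b] at hd
      omega
  · intro a b
    rw [grassmann_dist_eq, grassmann_dist_eq, hinf a b]
    have := hinfk a b
    omega
  · intro T hT
    refine ⟨(Submodule.span R' (l '' (T : Set V))).comap S.mkQ, ?_, ?_⟩
    · rw [hGdim T (by rw [hT]; omega), hT]; omega
    · intro X hTX
      exact Submodule.comap_mono (Submodule.span_mono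
        (Set.image_mono (show (T : Set V) ⊆ (X.1 : Set V) from hTX)))
  · intro U hU
    refine ⟨(Submodule.span R' (l '' (U : Set V))).comap S.mkQ, ?_, ?_⟩
    · rw [hGdim U (by rw [hU]; omega), hU]; omega
    · intro X hXU
      exact Submodule.comap_mono (Submodule.span_mono
        (Set.image_mono (show (X.1 : Set V) ⊆ (U : Set V) from hXU)))
end

section
/- Let V be a left vector space of finite dimension n over a division ring R, V' a left vector space of finite dimension n' over a division ring R' with n ≤ n', let σ : R → R' be a ring homomorphism and let l : V → V' be an injective σ-semilinear map. Then l maps every linearly independent n-element subset of V onto a linearly independent n-element subset of V' if and only if for every linear automorphism u of V there exists a linear automorphism u' of V' such that l ∘ u = u' ∘ l. -/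
open Module

section Aux

/-- An automorphism mapping one linearly independent family onto another. -/
lemma exists_linearEquiv_of_linearIndependent {K W ι : Type*} [DivisionRing K] [AddCommGroup W]
    [Module K W] [FiniteDimensional K W] [Fintype ι] {f g : ι → W}
    (hf : LinearIndependent K f) (hg : LinearIndependent K g) :
    ∃ e : W ≃ₗ[K] W, ∀ i, e (f i) = g i := by
  set S := Submodule.span K (Set.range f) with hSdef
  set T := Submodule.span K (Set.range g) with hTdef
  obtain ⟨Sc, hSc⟩ := Submodule.exists_isCompl S
  obtain ⟨Tc, hTc⟩ := Submodule.exists_isCompl T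
  have hS : finrank K S = Fintype.card ι := finrank_span_eq_card hf
  have hT : finrank K T = Fintype.card ι := finrank_span_eq_card hg
  have hsum1 := Submodule.finrank_add_eq_of_isCompl hSc
  have hsum2 := Submodule.finrank_add_eq_of_isCompl hTc
  have hST : finrank K Sc = finrank K Tc := by omega
  obtain ⟨eC⟩ := FiniteDimensional.nonempty_linearEquiv_of_finrank_eq hST
  let bS := Basis.span hf
  let bT := Basis.span hg
  let eST : S ≃ₗ[K] T := bS.equiv bT (Equiv.refl ι)
  refine ⟨(Submodule.prodEquivOfIsCompl S Sc hSc).symm ≪≫ₗ (eST.prodCongr eC) ≪≫ₗ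
    Submodule.prodEquivOfIsCompl T Tc hTc, fun i => ?_⟩
  have hmemS : f i ∈ S := Submodule.subset_span (Set.mem_range_self i)
  have h1 : (Submodule.prodEquivOfIsCompl S Sc hSc).symm (f i)
      = ((⟨f i, hmemS⟩ : ↥S), (0 : ↥Sc)) :=
    Submodule.prodEquivOfIsCompl_symm_apply_left S Sc hSc ⟨f i, hmemS⟩
  have h2 : eST ⟨f i, hmemS⟩ = bT i := by
    have hb : (⟨f i, hmemS⟩ : ↥S) = bS i := (Basis.span_apply hf i).symm
    rw [hb]
    simp [eST, Basis.equiv_apply]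
  rw [LinearEquiv.trans_apply, LinearEquiv.trans_apply, h1]
  simp [LinearEquiv.prodCongr_apply, h2, Basis.span_apply hg i]
  exact congrArg Subtype.val (Basis.span_apply hg i)

/-- A "transvection" automorphism associated to a basis. -/
lemma exists_transvection {R V ι : Type*} [Ring R] [AddCommGroup V] [Module R V]
    [DecidableEq ι] (b : Basis ι R V) {j k : ι} (hjk : j ≠ k) :
    ∃ u : V ≃ₗ[R] V, ∀ i, u (b i) = b i + if i = k then b j else 0 := by
  let A : V →ₗ[R] V := b.constr ℕ (fun i => b i + if i = k then b j else 0)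
  let B : V →ₗ[R] V := b.constr ℕ (fun i => b i - if i = k then b j else 0)
  have hA : ∀ i, A (b i) = b i + if i = k then b j else 0 := fun i => b.constr_basis ℕ _ i
  have hB : ∀ i, B (b i) = b i - if i = k then b j else 0 := fun i => b.constr_basis ℕ _ i
  have hAB : A.comp B = LinearMap.id := by
    apply b.ext
    intro i
    by_cases hik : i = k
    · subst hik
      simp [hB, hA, map_sub, hjk]
    · simp [hB, hA, hik]
  have hBA : B.comp A = LinearMap.id := by
    apply b.ext
    intro i
    by_cases hik : i = k
    · subst hik
      simp [hB, hA, map_add, hjk]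
    · simp [hB, hA, hik]
  exact ⟨LinearEquiv.ofLinear A B hAB hBA, hA⟩

end Aux

/-- (Theorem 5.1) An injective semilinear map `l : V → V'` (with
`n = dim V ≤ dim V' = n'`) sends every linearly independent `n`-element subset of `V`
onto a linearly independent `n`-element subset of `V'` iff every linear automorphism
`u` of `V` admits a linear automorphism `u'` of `V'` with `l ∘ u = u' ∘ l`. -/
theorem semilinear_embedding_characterization
    (R V : Type*) [DivisionRing R] [AddCommGroup V] [Module R V] [FiniteDimensional R V]
    (R' V' : Type*) [DivisionRing R'] [AddCommGroup V'] [Module R' V'] [FiniteDimensional R' V']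
    (n n' : ℕ) (hn : Module.finrank R V = n) (hn' : Module.finrank R' V' = n')
    (hnn : n ≤ n')
    (σ : R →+* R') (l : V →ₛₗ[σ] V') (hinj : Function.Injective l) :
    (∀ s : Finset V, s.card = n →
        LinearIndependent R (fun x : s => (x : V)) →
        LinearIndependent R' (fun x : s => l x)) ↔
    (∀ u : V ≃ₗ[R] V, ∃ u' : V' ≃ₗ[R'] V', ∀ x : V, l (u x) = u' (l x)) := by
  classical
  constructor
  · intro h u
    -- images of any basis under `l` are linearly independent
    have key : ∀ b : Basis (Fin n) R V, LinearIndependent R' (fun i => l (b i)) := by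
      intro b
      set s : Finset V := Finset.image b Finset.univ with hs
      have hbinj : Function.Injective b := b.injective
      have hcard : s.card = n := by
        rw [hs, Finset.card_image_of_injective _ hbinj, Finset.card_univ, Fintype.card_fin]
      have hmem : ∀ i, b i ∈ s := fun i => Finset.mem_image_of_mem b (Finset.mem_univ i)
      let e : Fin n → ↥s := fun i => ⟨b i, hmem i⟩
      have heinj : Function.Injective e := fun i j hij =>
        hbinj (congrArg Subtype.val hij)
      have hebij : Function.Bijective e := by
        rw [Fintype.bijective_iff_injective_and_card]
        exact ⟨heinj, by simp [Fintype.card_coe, hcard]⟩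
      let e' : Fin n ≃ ↥s := Equiv.ofBijective e hebij
      have hsli : LinearIndependent R (fun x : s => (x : V)) := by
        have h1 : LinearIndependent R ((fun i => b i) ∘ e'.symm) :=
          b.linearIndependent.comp e'.symm e'.symm.injective
        have h2 : (fun x : s => (x : V)) = (fun i => b i) ∘ e'.symm := by
          funext x
          have : b (e'.symm x) = ↑(e' (e'.symm x)) := rfl
          simp only [Function.comp_apply, this, Equiv.apply_symm_apply]
        rwa [h2]
      have himg : LinearIndependent R' (fun x : s => l x) := h s hcard hsli
      have h3 : (fun i => l (b i)) = (fun x : s => l x) ∘ e' := rfl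
      rw [h3]
      exact himg.comp e' e'.injective
    let b : Basis (Fin n) R V := (Module.finBasis R V).reindex (finCongr hn)
    have hf := key b
    have hg := key (b.map u)
    obtain ⟨u', hu'⟩ := exists_linearEquiv_of_linearIndependent hf hg
    refine ⟨u', fun x => ?_⟩
    have hcomp : (l.comp (u : V →ₗ[R] V) : V →ₛₗ[σ] V')
        = ((u' : V' →ₗ[R'] V').comp l : V →ₛₗ[σ] V') := by
      apply b.ext
      intro i
      simp only [LinearMap.coe_comp, Function.comp_apply, LinearEquiv.coe_coe]
      exact ((hu' i).trans (by rw [Basis.map_apply])).symm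
    have := LinearMap.congr_fun hcomp x
    simpa using this
  · intro h s hcard hli
    rw [Fintype.linearIndependent_iff]
    intro c hc
    by_contra hcon
    push_neg at hcon
    obtain ⟨k, hck⟩ := hcon
    have hne0 : ∀ x : ↥s, l (x : V) ≠ 0 := by
      intro x h0
      exact hli.ne_zero x (hinj (h0.trans (map_zero l).symm))
    by_cases hone : ∀ j : ↥s, j = k
    · have hsum : ∑ i : ↥s, c i • l (i : V) = c k • l (k : V) :=
        Fintype.sum_eq_single k (fun j hj => absurd (hone j) hj)
      rw [hsum] at hc
      exact hne0 k (by rw [← inv_smul_smul₀ hck (l (k : V)), hc, smul_zero])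
    · push_neg at hone
      obtain ⟨j, hjk⟩ := hone
      have : Nonempty ↥s := ⟨k⟩
      let b : Basis ↥s R V := basisOfLinearIndependentOfCardEqFinrank hli
        (by rw [Fintype.card_coe, hcard, hn])
      have hb : ∀ x : ↥s, (b x : V) = ↑x := fun x => by
        rw [coe_basisOfLinearIndependentOfCardEqFinrank]
      obtain ⟨u, hu⟩ := exists_transvection b hjk
      obtain ⟨u', hu'⟩ := h u
      have expand : ∀ i : ↥s, u' (l (i : V)) = l (i : V) + if i = k then l (j : V) else 0 := by
        intro i
        rw [← hu', ← hb i, hu i]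
        by_cases hik : i = k <;> simp [hik, hb]
      have h0 : u' (∑ i : ↥s, c i • l (i : V)) = 0 := by rw [hc, map_zero]
      rw [map_sum] at h0
      simp only [map_smul, expand, smul_add] at h0
      rw [Finset.sum_add_distrib] at h0
      have hsum2 : ∑ i : ↥s, c i • (if i = k then l (j : V) else 0) = c k • l (j : V) := by
        rw [Fintype.sum_eq_single k (fun i hi => by simp [hi])]
        simp
      rw [hc, hsum2, zero_add] at h0
      exact hne0 j (by rw [← inv_smul_smul₀ hck (l (j : V)), h0, smul_zero])
end
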